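/- arXiv:1306.4162 — 7 statements merged into one kernel-verified Lean document; each statement's English description precedes it below -/
import Mathlib

section
/- Let P ≤ S be a fully normalized subgroup. Then there exists a positive integer k not divisible by p such that the number of subgroups of S that are G-conjugate to P equals (|S| / |N_S(P)|) · k. (Specialization to F = F_S(G) of the paper's Lemma: for a fully F-normalized subgroup P of a saturated fusion system F on S, the number of F-conjugates of P equals (|S|/|N_S(P)|)·k with p ∤ k.) -/
/-- Two subgroups of `G` are `G`-conjugate if conjugation by some element of `G`
carries one onto the other. -/
def GConj {G : Type*} [Group G] (P Q : Subgroup G) : Prop :=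
  ∃ g : G, Subgroup.map (MulAut.conj g).toMonoidHom P = Q

/-- The normalizer of `P` taken inside the subgroup `S`, i.e. `N_S(P)`. -/
def normIn {G : Type*} [Group G] (S P : Subgroup G) : Subgroup G :=
  Subgroup.normalizer (P : Set G) ⊓ S

/-- `P ≤ S` is fully normalized if `|N_S(P)| ≥ |N_S(Q)|` for every `Q ≤ S`
that is `G`-conjugate to `P`. -/
def FullyNormalized {G : Type*} [Group G] (S P : Subgroup G) : Prop :=
  ∀ Q : Subgroup G, Q ≤ S → GConj P Q →
    Nat.card ↥(normIn S Q) ≤ Nat.card ↥(normIn S P)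

section Helpers

variable {G : Type*} [Group G]

lemma mem_map_conj_iff {g x : G} {P : Subgroup G} :
    x ∈ P.map (MulAut.conj g).toMonoidHom ↔ g⁻¹ * x * g ∈ P := by
  constructor
  · rintro ⟨y, hy, rfl⟩
    simpa [mul_assoc] using hy
  · intro h
    exact ⟨g⁻¹ * x * g, h, by simp [mul_assoc]⟩

lemma map_conj_map_conj (a b : G) (P : Subgroup G) :
    (P.map (MulAut.conj b).toMonoidHom).map (MulAut.conj a).toMonoidHom
      = P.map (MulAut.conj (a * b)).toMonoidHom := by
  ext x
  simp only [mem_map_conj_iff]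
  rw [show (a * b)⁻¹ * x * (a * b) = b⁻¹ * (a⁻¹ * x * a) * b by group]

lemma map_conj_one (P : Subgroup G) : P.map (MulAut.conj (1 : G)).toMonoidHom = P := by
  ext x; simp [mem_map_conj_iff]

lemma map_conj_le_iff {g : G} {P Q : Subgroup G} :
    P.map (MulAut.conj g).toMonoidHom ≤ Q ↔ P ≤ Q.map (MulAut.conj g⁻¹).toMonoidHom := by
  constructor <;> intro h
  · have := Subgroup.map_mono (f := (MulAut.conj g⁻¹).toMonoidHom) h
    rwa [map_conj_map_conj, inv_mul_cancel, map_conj_one] at this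
  · have := Subgroup.map_mono (f := (MulAut.conj g).toMonoidHom) h
    rwa [map_conj_map_conj, mul_inv_cancel, map_conj_one] at this

lemma mem_normalizer_iff_map {x : G} {P : Subgroup G} :
    x ∈ (Subgroup.normalizer (P : Set G)) ↔ P.map (MulAut.conj x).toMonoidHom = P := by
  rw [Subgroup.mem_normalizer_iff]
  constructor
  · intro h
    ext y
    rw [mem_map_conj_iff]
    have := h (x⁻¹ * y * x)
    rw [show x * (x⁻¹ * y * x) * x⁻¹ = y by group] at this
    exact this
  · intro h y
    constructor
    · intro hy
      have : x * y * x⁻¹ ∈ P.map (MulAut.conj x).toMonoidHom := by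
        rw [mem_map_conj_iff]; convert hy using 1; group
      rwa [h] at this
    · intro hy
      rw [← h, mem_map_conj_iff] at hy
      convert hy using 1; group

lemma card_eq_mul_of_fiber_equiv {A B N : Type*} (f : A → B)
    (e : ∀ b : B, {a : A // f a = b} ≃ N) :
    Nat.card A = Nat.card B * Nat.card N :=
  calc Nat.card A = Nat.card (Σ b : B, {a : A // f a = b}) :=
        Nat.card_congr (Equiv.sigmaFiberEquiv f).symm
    _ = Nat.card (B × N) :=
        Nat.card_congr ((Equiv.sigmaCongrRight e).trans (Equiv.sigmaEquivProd B N))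
    _ = Nat.card B * Nat.card N := Nat.card_prod B N

lemma claimC (p : ℕ) [Fact p.Prime] [Fintype G] (S : Sylow p G) (P : Subgroup G)
    (hP : P ≤ ↑S) (hfn : FullyNormalized ↑S P) :
    ∃ a : ℕ, ¬ p ∣ a ∧ Nat.card ↥(Subgroup.normalizer (P : Set G)) = Nat.card ↥(normIn ↑S P) * a := by
  set H := (Subgroup.normalizer (P : Set G)) with hH
  have hle : normIn ↑S P ≤ H := inf_le_left
  have hpg : IsPGroup p ↥(normIn ↑S P) := S.2.to_le inf_le_right
  have hK : IsPGroup p ↥((normIn ↑S P).subgroupOf H) :=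
    hpg.of_equiv (Subgroup.subgroupOfEquivOfLe hle).symm
  obtain ⟨T, hT⟩ := hK.exists_le_sylow
  refine ⟨(T : Subgroup ↥H).index, T.not_dvd_index, ?_⟩
  -- T' is the image of T in G
  set T' := (T : Subgroup ↥H).map H.subtype with hT'
  have hT'pg : IsPGroup p ↥T' := T.2.map H.subtype
  obtain ⟨R, hR⟩ := hT'pg.exists_le_sylow
  obtain ⟨g, hg⟩ := MulAction.exists_smul_eq G S R
  have hcoe : (R : Subgroup G) = (S : Subgroup G).map (MulAut.conj g).toMonoidHom := by
    rw [← hg]; rfl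
  have hT'S : T'.map (MulAut.conj g⁻¹).toMonoidHom ≤ ↑S := by
    rw [map_conj_le_iff, inv_inv, ← hcoe]; exact hR
  set Q := P.map (MulAut.conj g⁻¹).toMonoidHom with hQ
  have hnormT' : normIn ↑S P ≤ T' := by
    have h1 : ((normIn ↑S P).subgroupOf H).map H.subtype = normIn ↑S P := by
      rw [Subgroup.subgroupOf_map_subtype, inf_eq_left.mpr hle]
    rw [← h1]
    exact Subgroup.map_mono hT
  have hPn : P ≤ normIn ↑S P := le_inf Subgroup.le_normalizer hP
  have hQS : Q ≤ ↑S :=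
    le_trans (Subgroup.map_mono (le_trans hPn hnormT')) hT'S
  have hT'norm : T' ≤ (Subgroup.normalizer (P : Set G)) := Subgroup.map_subtype_le _
  have hnQ : T'.map (MulAut.conj g⁻¹).toMonoidHom ≤ normIn ↑S Q := by
    refine le_inf ?_ hT'S
    have := Subgroup.map_mono (f := (MulAut.conj g⁻¹).toMonoidHom) hT'norm
    rwa [Subgroup.map_equiv_normalizer_eq] at this
  -- card chain
  have e1 : Nat.card ↥(normIn ↑S P) = Nat.card ↥((normIn ↑S P).subgroupOf H) :=
    Nat.card_congr (Subgroup.subgroupOfEquivOfLe hle).symm.toEquiv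
  have e2 : Nat.card ↥(T : Subgroup ↥H) = Nat.card ↥T' :=
    Nat.card_congr ((T : Subgroup ↥H).equivMapOfInjective H.subtype
      H.subtype_injective).toEquiv
  have e3 : Nat.card ↥T' = Nat.card ↥(T'.map (MulAut.conj g⁻¹).toMonoidHom) :=
    Nat.card_congr (T'.equivMapOfInjective _ (MulAut.conj g⁻¹).injective).toEquiv
  have c1 : Nat.card ↥(normIn ↑S P) ≤ Nat.card ↥(T : Subgroup ↥H) := by
    rw [e1]; exact Subgroup.card_le_of_le hT
  have c2 : Nat.card ↥(T : Subgroup ↥H) ≤ Nat.card ↥(normIn ↑S P) := by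
    rw [e2, e3]
    exact le_trans (Subgroup.card_le_of_le hnQ) (hfn Q hQS ⟨g⁻¹, rfl⟩)
  have ecard : Nat.card ↥(normIn ↑S P) = Nat.card ↥(T : Subgroup ↥H) :=
    le_antisymm c1 c2
  rw [ecard, Subgroup.card_mul_index]

lemma claimD (p : ℕ) [Fact p.Prime] [Fintype G] (S : Sylow p G) :
    ∃ b : ℕ, ¬ p ∣ b ∧
      Nat.card ↥(Subgroup.normalizer ((S : Subgroup G) : Set G)) = Nat.card ↥(S : Subgroup G) * b := by
  refine ⟨(S : Subgroup G).relIndex (Subgroup.normalizer ((S : Subgroup G) : Set G)), ?_, ?_⟩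
  · intro hdvd
    exact S.not_dvd_index (hdvd.trans
      (Subgroup.relIndex_dvd_index_of_le Subgroup.le_normalizer))
  · have e : Nat.card ↥(S : Subgroup G) =
        Nat.card ↥((S : Subgroup G).subgroupOf (Subgroup.normalizer ((S : Subgroup G) : Set G))) :=
      Nat.card_congr (Subgroup.subgroupOfEquivOfLe Subgroup.le_normalizer).symm.toEquiv
    rw [e]
    exact (Subgroup.card_mul_index _).symm

lemma claimB (p : ℕ) [Fact p.Prime] [Fintype G] (S : Sylow p G) (P : Subgroup G)
    (hP : P ≤ ↑S) : Nat.card {R : Sylow p G // P ≤ ↑R} ≡ 1 [MOD p] := by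
  have hpg : IsPGroup p ↥P := S.2.to_le hP
  have e : Nat.card {R : Sylow p G // P ≤ ↑R}
      = Nat.card (MulAction.fixedPoints P (Sylow p G)) :=
    Nat.card_congr (Equiv.subtypeEquivRight fun R => (hpg.sylow_mem_fixedPoints_iff).symm)
  rw [e]
  exact (hpg.card_modEq_card_fixedPoints (Sylow p G)).symm.trans (card_sylow_modEq_one p G)

lemma count1 [Fintype G] (S P : Subgroup G) :
    Nat.card {g : G // P.map (MulAut.conj g).toMonoidHom ≤ S}
      = Nat.card {Q : Subgroup G // Q ≤ S ∧ GConj P Q} * Nat.card ↥(Subgroup.normalizer (P : Set G)) := by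
  apply card_eq_mul_of_fiber_equiv
    (f := fun a : {g : G // P.map (MulAut.conj g).toMonoidHom ≤ S} =>
      (⟨P.map (MulAut.conj a.1).toMonoidHom, a.2, ⟨a.1, rfl⟩⟩ :
        {Q : Subgroup G // Q ≤ S ∧ GConj P Q}))
  intro b
  obtain ⟨hbS, hbc⟩ := b.2
  have hg₀ : P.map (MulAut.conj hbc.choose).toMonoidHom = b.1 := hbc.choose_spec
  set g₀ := hbc.choose with hg₀def
  refine Equiv.mk
    (fun a => ⟨g₀⁻¹ * a.1.1, ?_⟩)
    (fun n => ⟨⟨g₀ * n.1, ?_⟩, ?_⟩) ?_ ?_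
  · have ha : P.map (MulAut.conj a.1.1).toMonoidHom = b.1 := congrArg Subtype.val a.2
    rw [mem_normalizer_iff_map, ← map_conj_map_conj, ha, ← hg₀, map_conj_map_conj,
      inv_mul_cancel, map_conj_one]
  · rw [← map_conj_map_conj, mem_normalizer_iff_map.mp n.2, hg₀]
    exact hbS
  · apply Subtype.ext
    show P.map (MulAut.conj (g₀ * n.1)).toMonoidHom = b.1
    rw [← map_conj_map_conj, mem_normalizer_iff_map.mp n.2, hg₀]
  · intro a
    apply Subtype.ext; apply Subtype.ext
    show g₀ * (g₀⁻¹ * a.1.1) = a.1.1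
    group
  · intro n
    apply Subtype.ext
    show g₀⁻¹ * (g₀ * n.1) = n.1
    group

lemma count2 (p : ℕ) [Fact p.Prime] [Fintype G] (S : Sylow p G) (P : Subgroup G) :
    Nat.card {g : G // P.map (MulAut.conj g).toMonoidHom ≤ ↑S}
      = Nat.card {R : Sylow p G // P ≤ ↑R} * Nat.card ↥(Subgroup.normalizer ((S : Subgroup G) : Set G)) := by
  have hcoe : ∀ x : G, ((x • S : Sylow p G) : Subgroup G)
      = (S : Subgroup G).map (MulAut.conj x).toMonoidHom := fun x => rfl
  apply card_eq_mul_of_fiber_equiv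
    (f := fun a : {g : G // P.map (MulAut.conj g).toMonoidHom ≤ ↑S} =>
      (⟨a.1⁻¹ • S, by rw [hcoe]; exact map_conj_le_iff.mp a.2⟩ :
        {R : Sylow p G // P ≤ ↑R}))
  intro b
  have hh : (MulAction.exists_smul_eq G S b.1).choose • S = b.1 :=
    (MulAction.exists_smul_eq G S b.1).choose_spec
  set h := (MulAction.exists_smul_eq G S b.1).choose with hdef
  have hstab : ∀ x : G, x ∈ (Subgroup.normalizer ((S : Subgroup G) : Set G)) → x • S = S := by
    intro x hx
    rw [← show MulAction.stabilizer G S = Subgroup.normalizer ((S : Subgroup G) : Set G) from S.stabilizer_eq_normalizer] at hx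
    exact hx
  refine Equiv.mk
    (fun a => ⟨a.1.1 * h, ?_⟩)
    (fun n => ⟨⟨n.1 * h⁻¹, ?_⟩, ?_⟩) ?_ ?_
  · have ha : a.1.1⁻¹ • S = b.1 := congrArg Subtype.val a.2
    rw [← show MulAction.stabilizer G S = Subgroup.normalizer ((S : Subgroup G) : Set G) from S.stabilizer_eq_normalizer, MulAction.mem_stabilizer_iff, mul_smul, hh, ← ha,
      smul_inv_smul]
  · have hn : (n.1 * h⁻¹)⁻¹ • S = b.1 := by
      rw [mul_inv_rev, inv_inv, mul_smul, hstab _ (inv_mem n.2), hh]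
    rw [map_conj_le_iff]
    have : ((((n.1 * h⁻¹)⁻¹) • S : Sylow p G) : Subgroup G)
        = ((b.1 : Sylow p G) : Subgroup G) := congrArg _ hn
    rw [hcoe] at this
    rw [this]
    exact b.2
  · apply Subtype.ext
    show (n.1 * h⁻¹)⁻¹ • S = b.1
    rw [mul_inv_rev, inv_inv, mul_smul, hstab _ (inv_mem n.2), hh]
  · intro a
    apply Subtype.ext; apply Subtype.ext
    show a.1.1 * h * h⁻¹ = a.1.1
    group
  · intro n
    apply Subtype.ext
    show n.1 * h⁻¹ * h = n.1
    group

end Helpers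

theorem stmt0 (p : ℕ) [Fact p.Prime] (G : Type*) [Group G] [Fintype G]
    (S : Sylow p G) (P : Subgroup G) (hP : P ≤ ↑S)
    (hfn : FullyNormalized ↑S P) :
    ∃ k : ℕ, 0 < k ∧ ¬ p ∣ k ∧
      Nat.card {Q : Subgroup G // Q ≤ ↑S ∧ GConj P Q} *
          Nat.card ↥(normIn ↑S P) =
        Nat.card ↥(S : Subgroup G) * k := by
  have hp : Fact p.Prime := inferInstance
  obtain ⟨a, ha, hNa⟩ := claimC p S P hP hfn
  obtain ⟨b, hb, hNb⟩ := claimD p S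
  have hmod := claimB p S P hP
  set n := Nat.card {R : Sylow p G // P ≤ ↑R} with hn
  set X := Nat.card {Q : Subgroup G // Q ≤ ↑S ∧ GConj P Q} with hX
  set m := Nat.card ↥(normIn ↑S P) with hm
  set s := Nat.card ↥(S : Subgroup G) with hs
  have key : X * m * a = s * (n * b) := by
    have h1 := count1 (S : Subgroup G) P
    have h2 := count2 p S P
    rw [← hX, ← hn] at *
    calc X * m * a = X * (m * a) := by ring
      _ = X * Nat.card ↥(Subgroup.normalizer (P : Set G)) := by rw [hNa]
      _ = n * Nat.card ↥(Subgroup.normalizer ((S : Subgroup G) : Set G)) := by rw [← h1, h2]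
      _ = n * (s * b) := by rw [hNb]
      _ = s * (n * b) := by ring
  have hpn : ¬ p ∣ n := by
    intro hdvd
    have h0 : n % p = 1 % p := hmod
    rw [Nat.mod_eq_zero_of_dvd hdvd, Nat.mod_eq_of_lt hp.out.one_lt] at h0
    exact one_ne_zero h0.symm
  have hnpos : 0 < n := by
    rcases Nat.eq_zero_or_pos n with h | h
    · exfalso
      have h0 : n % p = 1 % p := hmod
      rw [h, Nat.zero_mod, Nat.mod_eq_of_lt hp.out.one_lt] at h0
      exact one_ne_zero h0.symm
    · exact h
  have hspos : 0 < s := Nat.card_pos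
  have hbpos : 0 < b := by
    rcases Nat.eq_zero_or_pos b with h | h
    · exfalso
      have := hNb
      rw [h, mul_zero] at this
      exact (Nat.card_pos.ne' this)
    · exact h
  obtain ⟨e, he⟩ : ∃ e, s = p ^ e := ⟨_, S.card_eq_multiplicity⟩
  have hcop : Nat.Coprime s a := by
    rw [he]
    exact Nat.Coprime.pow_left e ((Nat.Prime.coprime_iff_not_dvd hp.out).mpr ha)
  have hdvd : s ∣ X * m := by
    refine hcop.dvd_of_dvd_mul_right ⟨n * b, ?_⟩
    rw [← key]
  have hk : s * (X * m / s) = X * m := Nat.mul_div_cancel' hdvd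
  set k := X * m / s with hkdef
  refine ⟨k, ?_, ?_, ?_⟩
  · rcases Nat.eq_zero_or_pos k with h | h
    · exfalso
      have : X * m * a = 0 := by rw [← hk, h, mul_zero, zero_mul]
      rw [key] at this
      exact (Nat.mul_pos hspos (Nat.mul_pos hnpos hbpos)).ne' this
    · exact h
  · intro hpk
    have hka : k * a = n * b := by
      apply Nat.eq_of_mul_eq_mul_left hspos
      rw [← mul_assoc, hk, key]
    have : p ∣ n * b := by rw [← hka]; exact Dvd.dvd.mul_right hpk a
    rcases (Nat.Prime.dvd_mul hp.out).mp this with h | h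
    · exact hpn h
    · exact hb h
  · exact hk.symm
end

section
/- Let P ≤ S be a fully normalized subgroup. Then there exists a positive integer k' not divisible by p such that |N_G(P,S)| · |C_S(P)| = |S| · |C_G(P)| · k'. (Equivalently, the number of group homomorphisms P → S induced by conjugation by elements of G, which equals |N_G(P,S)|/|C_G(P)|, is (|S|/|C_S(P)|)·k' with p ∤ k'; this is the second half of the paper's Lemma on fully normalized subgroups, specialized to F = F_S(G).) -/
/-- The transporter `N_G(A,B) = {g ∈ G : gAg⁻¹ ≤ B}`. -/
def transporter {G : Type*} [Group G] (A B : Subgroup G) : Set G :=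
  {g : G | ∀ a ∈ A, g * a * g⁻¹ ∈ B}

section Aux

open Subgroup MulAction Pointwise

set_option linter.unusedSectionVars false

variable {p : ℕ} [Fact p.Prime] {G : Type*} [Group G] [Fintype G] (S : Sylow p G)

/-- The inverse transporter: `g` with `g⁻¹ P g ≤ S`. -/
def Tinv (P : Subgroup G) : Set G := {g : G | ∀ a ∈ P, g⁻¹ * a * g ∈ (S : Subgroup G)}

/-- The image of the inverse transporter in `G ⧸ S`. -/
def Dset (P : Subgroup G) : Set (G ⧸ (S : Subgroup G)) := QuotientGroup.mk '' Tinv S P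

lemma mk_preimage_Dset (P : Subgroup G) :
    (QuotientGroup.mk : G → G ⧸ (S : Subgroup G)) ⁻¹' Dset S P = Tinv S P := by
  ext g'
  constructor
  · rintro ⟨g, hg, hmk⟩
    have hs : g⁻¹ * g' ∈ (S : Subgroup G) := QuotientGroup.eq.mp hmk
    intro a ha
    have := mul_mem (mul_mem (inv_mem hs) (hg a ha)) hs
    convert this using 1
    group
  · intro hg'
    exact ⟨g', hg', rfl⟩

lemma card_Tinv (P : Subgroup G) :
    Nat.card (Tinv S P) = Nat.card (Dset S P) * Nat.card (S : Subgroup G) := by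
  rw [← mk_preimage_Dset S P,
    Nat.card_congr (QuotientGroup.preimageMkEquivSubgroupProdSet (S : Subgroup G) (Dset S P)),
    Nat.card_prod, mul_comm]

lemma card_transporter (P : Subgroup G) :
    Nat.card (transporter P (S : Subgroup G)) =
      Nat.card (Dset S P) * Nat.card (S : Subgroup G) := by
  rw [← card_Tinv]
  apply Nat.card_congr
  refine ⟨fun g => ⟨g.1⁻¹, ?_⟩, fun g => ⟨g.1⁻¹, ?_⟩, fun g => by simp, fun g => by simp⟩
  · intro a ha
    have := g.2 a ha
    simpa using this
  · intro a ha
    have := g.2 a ha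
    simpa using this

lemma one_mem_Tinv {P : Subgroup G} (hP : P ≤ ↑S) : (1 : G) ∈ Tinv S P := by
  intro a ha; simpa using hP ha

lemma smul_mem_Dset {P : Subgroup G} {x : G} (hx : x ∈ (Subgroup.normalizer (P : Set G)))
    {q : G ⧸ (S : Subgroup G)} (hq : q ∈ Dset S P) : x • q ∈ Dset S P := by
  obtain ⟨g, hg, rfl⟩ := hq
  refine ⟨x * g, ?_, ?_⟩
  · intro a ha
    have hxa : x⁻¹ * a * x ∈ P := by
      rw [Subgroup.mem_normalizer_iff''] at hx
      exact (hx a).mp ha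
    have := hg _ hxa
    convert this using 1
    group
  · exact (MulAction.Quotient.smul_mk (S : Subgroup G) x g)

lemma Tinv_self : Tinv S ↑S = ((Subgroup.normalizer ((S : Subgroup G) : Set G)) : Set G) := by
  ext g
  constructor
  · intro hg
    have hle : Subgroup.map (MulAut.conj g⁻¹).toMonoidHom ↑S ≤ (S : Subgroup G) := by
      rintro x ⟨a, ha, rfl⟩
      simpa using hg a ha
    have hcard : Nat.card (Subgroup.map (MulAut.conj g⁻¹).toMonoidHom (S : Subgroup G)) =
        Nat.card (S : Subgroup G) :=
      (Nat.card_congr (Subgroup.equivMapOfInjective _ _ (MulAut.conj g⁻¹).injective).toEquiv).symm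
    have heq := Subgroup.eq_of_le_of_card_ge hle hcard.ge
    have : g⁻¹ ∈ (Subgroup.normalizer ((S : Subgroup G) : Set G)) := by
      rw [Subgroup.mem_normalizer_iff]
      intro h
      constructor
      · intro hh
        rw [← heq]
        exact ⟨h, hh, by simp⟩
      · intro hh
        have : g⁻¹ * h * g ∈ Subgroup.map (MulAut.conj g⁻¹).toMonoidHom ↑S := by
          rw [heq]; simpa using hh
        obtain ⟨a, ha, hae⟩ := this
        simp only [MulEquiv.coe_toMonoidHom, MulAut.conj_apply] at hae
        have hah : a = h := by simpa using hae
        rwa [← hah]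
    simpa using (Subgroup.inv_mem_iff _).mpr this
  · intro hg a ha
    have hg' : g ∈ (Subgroup.normalizer ((S : Subgroup G) : Set G)) := hg
    rw [Subgroup.mem_normalizer_iff''] at hg'
    exact (hg' a).mp ha

lemma not_dvd_card_Dset_self : ¬ p ∣ Nat.card (Dset S ↑S) := by
  have h1 : Nat.card (Tinv S ↑S) = Nat.card (Subgroup.normalizer ((S : Subgroup G) : Set G)) := by
    rw [Tinv_self]; rfl
  have h2 := card_Tinv S (S : Subgroup G)
  -- Sylow subgroup of its normalizer
  set N := (Subgroup.normalizer ((S : Subgroup G) : Set G))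
  let S' : Sylow p N := S.subtype Subgroup.le_normalizer
  have hfi : (S' : Subgroup N).FiniteIndex := inferInstance
  have hndvd : ¬ p ∣ (S' : Subgroup N).index := S'.not_dvd_index
  have h3 : Nat.card (S' : Subgroup N) * (S' : Subgroup N).index = Nat.card N :=
    Subgroup.card_mul_index _
  have h4 : Nat.card (S' : Subgroup N) = Nat.card (S : Subgroup G) := by
    rw [Sylow.coe_subtype]
    exact Nat.card_congr (Subgroup.subgroupOfEquivOfLe Subgroup.le_normalizer).toEquiv
  have hSpos : 0 < Nat.card (S : Subgroup G) := Nat.card_pos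
  have : Nat.card (Dset S ↑S) = (S' : Subgroup N).index := by
    have := h2.symm.trans (h1.trans h3.symm)
    rw [h4] at this
    -- this : Nat.card (Dset S ↑S) * Nat.card S = Nat.card S * index
    exact Nat.eq_of_mul_eq_mul_left hSpos (by linarith [this])
  rw [this]; exact hndvd

lemma card_Dset_modEq {P : Subgroup G} (hP : P ≤ ↑S) :
    Nat.card (Dset S P) ≡ Nat.card (Dset S (normIn ↑S P)) [MOD p] := by
  classical
  -- the p-group H = normIn S P acts on Dset S P
  set H : Subgroup G := normIn ↑S P with hH
  have hHle : H ≤ (Subgroup.normalizer (P : Set G)) := inf_le_left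
  have hHS : H ≤ ↑S := inf_le_right
  have hHp : IsPGroup p H := S.isPGroup'.to_le hHS
  let A : SubMulAction H (G ⧸ (S : Subgroup G)) :=
    { carrier := Dset S P
      smul_mem' := fun x q hq => smul_mem_Dset S (hHle x.2) hq }
  have hcard : Nat.card A ≡ Nat.card (MulAction.fixedPoints H A) [MOD p] :=
    hHp.card_modEq_card_fixedPoints A
  have hA : Nat.card A = Nat.card (Dset S P) := rfl
  have hfix : Nat.card (MulAction.fixedPoints H A) = Nat.card (Dset S H) := by
    apply Nat.card_congr
    have key : ∀ x : MulAction.fixedPoints H A, (x.1.1 : G ⧸ (S : Subgroup G)) ∈ Dset S H := by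
      rintro ⟨⟨q, hq⟩, hfx⟩
      obtain ⟨g, hg, rfl⟩ := hq
      refine ⟨g, ?_, rfl⟩
      intro a ha
      have ha' : a⁻¹ ∈ H := inv_mem ha
      have hmk : (a⁻¹ : G) • (QuotientGroup.mk g : G ⧸ (S : Subgroup G)) = QuotientGroup.mk g :=
        congrArg Subtype.val (hfx ⟨a⁻¹, ha'⟩)
      rw [MulAction.Quotient.smul_mk] at hmk
      have := QuotientGroup.eq.mp hmk
      simpa [mul_assoc] using this
    apply Equiv.ofBijective (fun x => ⟨x.1.1, key x⟩)
    · constructor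
      · intro x y hxy
        apply Subtype.ext; apply Subtype.ext
        have : (⟨x.1.1, key x⟩ : {q : G ⧸ (S : Subgroup G) // q ∈ Dset S H}) = ⟨y.1.1, key y⟩ := hxy
        exact (Subtype.mk_eq_mk).mp this
      · rintro ⟨q, hq⟩
        obtain ⟨g, hg, rfl⟩ := hq
        have hqP : (QuotientGroup.mk g : G ⧸ (S : Subgroup G)) ∈ Dset S P := by
          refine ⟨g, ?_, rfl⟩
          intro a ha
          exact hg a (le_inf Subgroup.le_normalizer hP ha)
        refine ⟨⟨⟨QuotientGroup.mk g, hqP⟩, ?_⟩, rfl⟩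
        -- fixed point
        intro x
        apply Subtype.ext
        show (x : G) • (QuotientGroup.mk g : G ⧸ (S : Subgroup G)) = QuotientGroup.mk g
        rw [MulAction.Quotient.smul_mk]
        apply QuotientGroup.eq.mpr
        have := hg _ (inv_mem x.2)
        simpa [mul_assoc] using this
  rw [hA, hfix] at hcard
  exact hcard

lemma le_normIn {P : Subgroup G} (hP : P ≤ ↑S) : P ≤ normIn ↑S P :=
  le_inf Subgroup.le_normalizer hP

lemma lt_normIn {P : Subgroup G} (hP : P ≤ ↑S) (hne : P ≠ ↑S) : P < normIn ↑S P := by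
  have hnil : Group.IsNilpotent ↥(S : Subgroup G) := S.isPGroup'.isNilpotent
  have hNC := normalizerCondition_of_isNilpotent (G := ↥(S : Subgroup G))
  have hlt : P.subgroupOf ↑S < ⊤ := by
    rw [lt_top_iff_ne_top]
    intro h
    exact hne (le_antisymm hP ((Subgroup.subgroupOf_eq_top).mp h))
  obtain ⟨x, hx, hxn⟩ := SetLike.exists_of_lt (hNC _ hlt)
  refine lt_of_le_of_ne (le_normIn S hP) ?_
  intro heq
  apply hxn
  have hxS : (x : G) ∈ (S : Subgroup G) := x.2
  have hxnorm : (x : G) ∈ (Subgroup.normalizer (P : Set G)) := by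
    rw [Subgroup.mem_normalizer_iff]
    intro h
    constructor
    · intro hh
      have hhS : h ∈ (S : Subgroup G) := hP hh
      have : (⟨h, hhS⟩ : ↥(S : Subgroup G)) ∈ P.subgroupOf ↑S := hh
      have := (Subgroup.mem_normalizer_iff.mp hx ⟨h, hhS⟩).mp this
      exact this
    · intro hh
      have hhS : h ∈ (S : Subgroup G) := by
        have h1 : (x : G) * h * (x : G)⁻¹ ∈ (S : Subgroup G) := hP hh
        have := mul_mem (mul_mem (inv_mem hxS) h1) hxS
        convert this using 1
        group
      have hmem : x * ⟨h, hhS⟩ * x⁻¹ ∈ P.subgroupOf ↑S := hh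
      exact (Subgroup.mem_normalizer_iff.mp hx ⟨h, hhS⟩).mpr hmem
  have hxP : (x : G) ∈ P := heq ▸ (Subgroup.mem_inf.mpr ⟨hxnorm, hxS⟩)
  exact hxP

lemma not_dvd_card_Dset_aux :
    ∀ n : ℕ, ∀ P : Subgroup G, P ≤ ↑S → Nat.card (S : Subgroup G) - Nat.card P ≤ n →
      ¬ p ∣ Nat.card (Dset S P) := by
  intro n
  induction n with
  | zero =>
    intro P hP h0
    have : P = ↑S :=
      Subgroup.eq_of_le_of_card_ge hP (Nat.le_of_sub_eq_zero (Nat.le_zero.mp h0))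
    subst this
    exact not_dvd_card_Dset_self S
  | succ n ih =>
    intro P hP h
    by_cases hne : P = ↑S
    · subst hne; exact not_dvd_card_Dset_self S
    · have hlt := lt_normIn S hP hne
      have hcard : Nat.card P < Nat.card (normIn ↑S P) := by
        have h1 : (P : Set G).ncard < ((normIn ↑S P : Subgroup G) : Set G).ncard :=
          Set.ncard_strictMono (SetLike.coe_ssubset_coe.mpr hlt)
        rwa [← Nat.card_coe_set_eq, ← Nat.card_coe_set_eq] at h1
      have hn : Nat.card (S : Subgroup G) - Nat.card (normIn ↑S P) ≤ n := by omega
      have hmod := card_Dset_modEq S hP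
      intro hdvd
      exact ih (normIn ↑S P) inf_le_right hn
        (Nat.modEq_zero_iff_dvd.mp (hmod.symm.trans (Nat.modEq_zero_iff_dvd.mpr hdvd)))

lemma not_dvd_card_Dset {P : Subgroup G} (hP : P ≤ ↑S) : ¬ p ∣ Nat.card (Dset S P) :=
  not_dvd_card_Dset_aux S _ P hP le_rfl

lemma card_map_conj (g : G) (H : Subgroup G) :
    Nat.card (H.map (MulAut.conj g).toMonoidHom) = Nat.card H :=
  (Nat.card_congr (Subgroup.equivMapOfInjective _ _ (MulAut.conj g).injective).toEquiv).symm

lemma exists_conj_map_le (R : Subgroup G) (hR : IsPGroup p ↥R) :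
    ∃ g : G, R.map (MulAut.conj g).toMonoidHom ≤ ↑S := by
  obtain ⟨S₂, hle⟩ := hR.exists_le_sylow
  obtain ⟨g, hg⟩ := MulAction.exists_smul_eq G S₂ S
  refine ⟨g, ?_⟩
  have h1 : (S₂ : Subgroup G).map (MulAut.conj g).toMonoidHom = ((g • S₂ : Sylow p G) : Subgroup G) := rfl
  calc R.map (MulAut.conj g).toMonoidHom ≤ (S₂ : Subgroup G).map (MulAut.conj g).toMonoidHom :=
        Subgroup.map_mono hle
    _ = ((g • S₂ : Sylow p G) : Subgroup G) := h1
    _ = ↑S := by rw [hg]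

/-- If `P` is fully normalized then `N_S(P)` is a Sylow `p`-subgroup of `N_G(P)`. -/
lemma normIn_sylow {P : Subgroup G} (hP : P ≤ ↑S) (hfn : FullyNormalized ↑S P) :
    ∃ R : Sylow p ↥((Subgroup.normalizer (P : Set G))),
      (R : Subgroup ↥((Subgroup.normalizer (P : Set G)))) = (normIn ↑S P).subgroupOf (Subgroup.normalizer (P : Set G)) := by
  set N := (Subgroup.normalizer (P : Set G)) with hN
  have hnle : normIn ↑S P ≤ N := inf_le_left
  have hpgrp : IsPGroup p ↥((normIn ↑S P).subgroupOf N) :=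
    (S.isPGroup'.to_le (inf_le_right : normIn ↑S P ≤ ↑S)).of_equiv
      (Subgroup.subgroupOfEquivOfLe hnle).symm
  obtain ⟨R, hR⟩ := hpgrp.exists_le_sylow
  refine ⟨R, ?_⟩
  symm
  apply Subgroup.eq_of_le_of_card_ge hR
  -- card R ≤ card (normIn S P)
  set R' := (R : Subgroup ↥N).map N.subtype with hR'
  have hR'N : R' ≤ N := Subgroup.map_subtype_le _
  have hR'p : IsPGroup p ↥R' := R.isPGroup'.map _
  obtain ⟨g, hg⟩ := exists_conj_map_le S R' hR'p
  set Q := P.map (MulAut.conj g).toMonoidHom with hQ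
  have hPR' : P ≤ R' := by
    have h1 : normIn ↑S P ≤ R' := by
      have := Subgroup.map_mono (f := N.subtype) hR
      rwa [Subgroup.subgroupOf_map_subtype, inf_of_le_left hnle] at this
    exact le_trans (le_normIn S hP) h1
  have hQS : Q ≤ ↑S := le_trans (Subgroup.map_mono hPR') hg
  have hconj : GConj P Q := ⟨g, rfl⟩
  have hle2 : R'.map (MulAut.conj g).toMonoidHom ≤ normIn ↑S Q := by
    apply le_inf
    · refine le_trans ?_ (Subgroup.le_normalizer_map (MulAut.conj g).toMonoidHom)
      exact Subgroup.map_mono hR'N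
    · exact hg
  have hcard1 : Nat.card (R : Subgroup ↥N) = Nat.card R' :=
    Nat.card_congr (Subgroup.equivMapOfInjective _ _ N.subtype_injective).toEquiv
  have hcard2 : Nat.card R' = Nat.card (R'.map (MulAut.conj g).toMonoidHom) :=
    (card_map_conj g R').symm
  have hcard3 : Nat.card (R'.map (MulAut.conj g).toMonoidHom) ≤ Nat.card (normIn ↑S Q) :=
    Subgroup.card_le_of_le hle2
  have hcard4 : Nat.card (normIn ↑S Q) ≤ Nat.card (normIn ↑S P) := hfn Q hQS hconj
  have hcard5 : Nat.card (normIn ↑S P) = Nat.card ((normIn ↑S P).subgroupOf N) :=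
    (Nat.card_congr (Subgroup.subgroupOfEquivOfLe hnle).toEquiv).symm
  omega

lemma card_inf_sylow_normal {H : Type*} [Group H] [Finite H]
    (K : Subgroup H) [hK : K.Normal] (R : Sylow p H) :
    ∃ m : ℕ, ¬ p ∣ m ∧ Nat.card K = Nat.card ↥(K ⊓ (R : Subgroup H)) * m := by
  set m := ((K ⊓ (R : Subgroup H)).subgroupOf K).index with hm
  have hinfle : K ⊓ (R : Subgroup H) ≤ K := inf_le_left
  have hcardK : Nat.card ↥(K ⊓ (R : Subgroup H)) * m = Nat.card K := by
    rw [hm, ← Subgroup.card_mul_index ((K ⊓ (R : Subgroup H)).subgroupOf K)]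
    congr 1
    exact (Nat.card_congr (Subgroup.subgroupOfEquivOfLe hinfle).toEquiv).symm
  refine ⟨m, ?_, hcardK.symm⟩
  -- show ¬ p ∣ m
  have hinfp : IsPGroup p ↥((K ⊓ (R : Subgroup H)).subgroupOf K) :=
    (R.isPGroup'.to_le inf_le_right).of_equiv (Subgroup.subgroupOfEquivOfLe hinfle).symm
  obtain ⟨RK, hRK⟩ := hinfp.exists_le_sylow
  set R'' := (RK : Subgroup ↥K).map K.subtype with hR''
  have hR''K : R'' ≤ K := Subgroup.map_subtype_le _
  have hR''p : IsPGroup p ↥R'' := RK.isPGroup'.map _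
  -- conjugate R'' into R
  obtain ⟨S₂, hS₂⟩ := hR''p.exists_le_sylow
  obtain ⟨g, hg⟩ := MulAction.exists_smul_eq H S₂ R
  have hconj : R''.map (MulAut.conj g).toMonoidHom ≤ (R : Subgroup H) := by
    have h1 : (S₂ : Subgroup H).map (MulAut.conj g).toMonoidHom =
        ((g • S₂ : Sylow p H) : Subgroup H) := rfl
    calc R''.map (MulAut.conj g).toMonoidHom
        ≤ (S₂ : Subgroup H).map (MulAut.conj g).toMonoidHom := Subgroup.map_mono hS₂
      _ = ((g • S₂ : Sylow p H) : Subgroup H) := h1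
      _ = ↑R := by rw [hg]
  have hconjK : R''.map (MulAut.conj g).toMonoidHom ≤ K := by
    have h2 : K.map (MulAut.conj g).toMonoidHom = K := by
      have : MulAut.conj g • K = K := Subgroup.Normal.conj_smul_eq_self g K
      exact this
    calc R''.map (MulAut.conj g).toMonoidHom ≤ K.map (MulAut.conj g).toMonoidHom :=
          Subgroup.map_mono hR''K
      _ = K := h2
  have hcard1 : Nat.card (RK : Subgroup ↥K) ≤ Nat.card ↥(K ⊓ (R : Subgroup H)) := by
    calc Nat.card (RK : Subgroup ↥K)
        = Nat.card R'' := Nat.card_congr (Subgroup.equivMapOfInjective _ _ K.subtype_injective).toEquiv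
      _ = Nat.card (R''.map (MulAut.conj g).toMonoidHom) :=
          (Nat.card_congr (Subgroup.equivMapOfInjective _ _ (MulAut.conj g).injective).toEquiv)
      _ ≤ Nat.card ↥(K ⊓ (R : Subgroup H)) := Subgroup.card_le_of_le (le_inf hconjK hconj)
  have hcard2 : Nat.card ↥(K ⊓ (R : Subgroup H)) = Nat.card (RK : Subgroup ↥K) := by
    have h3 : Nat.card ↥(K ⊓ (R : Subgroup H)) =
        Nat.card ((K ⊓ (R : Subgroup H)).subgroupOf K) :=
      (Nat.card_congr (Subgroup.subgroupOfEquivOfLe hinfle).toEquiv).symm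
    have h4 : Nat.card ((K ⊓ (R : Subgroup H)).subgroupOf K) ≤ Nat.card (RK : Subgroup ↥K) :=
      Subgroup.card_le_of_le hRK
    omega
  have heq : (RK : Subgroup ↥K) = (K ⊓ (R : Subgroup H)).subgroupOf K := by
    symm
    apply Subgroup.eq_of_le_of_card_ge hRK
    rw [← hcard2]
    exact (Nat.card_congr (Subgroup.subgroupOfEquivOfLe hinfle).toEquiv).ge
  have hndvd : ¬ p ∣ (RK : Subgroup ↥K).index := RK.not_dvd_index
  rwa [heq, ← hm] at hndvd

lemma centralizer_le_normalizer' (P : Subgroup G) :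
    Subgroup.centralizer (P : Set G) ≤ (Subgroup.normalizer (P : Set G)) := by
  intro x hx
  rw [Subgroup.mem_centralizer_iff] at hx
  rw [Subgroup.mem_normalizer_iff]
  intro h
  constructor
  · intro hh
    have := hx h hh
    have hxh : x * h * x⁻¹ = h := by
      rw [← this]; group
    rwa [hxh]
  · intro hh
    have hcomm := hx _ hh
    have h1 : x * h = x * (x * h * x⁻¹) := by
      calc x * h = x * h * x⁻¹ * x := by group
        _ = x * (x * h * x⁻¹) := hcomm
    have h2 : h = x * h * x⁻¹ := mul_left_cancel h1
    rwa [h2]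

lemma card_centralizer_decomp {P : Subgroup G} (hP : P ≤ ↑S)
    (hfn : FullyNormalized ↑S P) :
    ∃ m : ℕ, ¬ p ∣ m ∧
      Nat.card (Subgroup.centralizer (P : Set G)) =
        Nat.card ↥(Subgroup.centralizer (P : Set G) ⊓ ↑S) * m := by
  set N := (Subgroup.normalizer (P : Set G)) with hN
  set C := Subgroup.centralizer (P : Set G) with hC
  have hCN : C ≤ N := centralizer_le_normalizer' P
  obtain ⟨R, hR⟩ := normIn_sylow S hP hfn
  haveI : (C.subgroupOf N).Normal := by
    rw [hC, ← Subgroup.normalizerMonoidHom_ker]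
    exact MonoidHom.normal_ker _
  obtain ⟨m, hm, hcard⟩ := card_inf_sylow_normal (C.subgroupOf N) R
  refine ⟨m, hm, ?_⟩
  have h1 : Nat.card (C.subgroupOf N) = Nat.card C :=
    Nat.card_congr (Subgroup.subgroupOfEquivOfLe hCN).toEquiv
  have h2 : C.subgroupOf N ⊓ (R : Subgroup ↥N) = (C ⊓ normIn ↑S P).subgroupOf N := by
    rw [hR]
    rfl
  have h3 : C ⊓ normIn ↑S P = C ⊓ ↑S := by
    rw [normIn, ← inf_assoc, inf_of_le_left hCN]
  have h4 : Nat.card ↥(C.subgroupOf N ⊓ (R : Subgroup ↥N)) = Nat.card ↥(C ⊓ ↑S) := by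
    rw [h2, h3]
    exact Nat.card_congr (Subgroup.subgroupOfEquivOfLe (le_trans inf_le_left hCN)).toEquiv
  rw [← h1, hcard, h4]

lemma dvd_card_Dset {P : Subgroup G} (hP : P ≤ ↑S) {m : ℕ} (hm : ¬ p ∣ m)
    (hdec : Nat.card (Subgroup.centralizer (P : Set G)) =
      Nat.card ↥(Subgroup.centralizer (P : Set G) ⊓ ↑S) * m) :
    m ∣ Nat.card (Dset S P) := by
  classical
  set C := Subgroup.centralizer (P : Set G) with hCdef
  have hCN : C ≤ (Subgroup.normalizer (P : Set G)) := centralizer_le_normalizer' P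
  let A : SubMulAction ↥C (G ⧸ (S : Subgroup G)) :=
    { carrier := Dset S P
      smul_mem' := fun x q hq => smul_mem_Dset S (hCN x.2) hq }
  obtain ⟨n, hn⟩ := (IsPGroup.iff_card (p := p)).mp
    (S.isPGroup'.to_le (inf_le_right : C ⊓ ↑S ≤ ↑S))
  have hA : Nat.card ↥A = Nat.card (Dset S P) := rfl
  rw [← hA]
  set Ω := MulAction.orbitRel.Quotient ↥C ↥A with hΩ
  haveI : Fintype ↥A := Fintype.ofFinite _
  haveI : Fintype Ω := Fintype.ofFinite _
  have h0 : Nat.card ↥A = ∑ ω : Ω, Nat.card (↥C ⧸ MulAction.stabilizer ↥C ω.out) := by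
    rw [Nat.card_congr (MulAction.selfEquivSigmaOrbitsQuotientStabilizer ↥C ↥A)]
    simp [Nat.card_eq_fintype_card, Fintype.card_sigma]
    rfl
  rw [h0]
  apply Finset.dvd_sum
  intro ω _
  set a := ω.out with ha
  -- the stabilizer is a p-group
  have hstab : IsPGroup p ↥(MulAction.stabilizer ↥C a) := by
    intro c
    obtain ⟨g, hg, hmk⟩ := a.2
    set x : G := ((c : ↥C) : G) with hx
    have hxa : ((c : ↥C) : G) • (a : G ⧸ (S : Subgroup G)) = (a : G ⧸ (S : Subgroup G)) := by
      have h1 : (c : ↥C) • a = a := c.2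
      exact congrArg Subtype.val h1
    rw [← hmk, MulAction.Quotient.smul_mk] at hxa
    have hS1 : g⁻¹ * x⁻¹ * g ∈ (S : Subgroup G) := by
      have := QuotientGroup.eq.mp hxa
      simpa [mul_assoc] using this
    have hS2 : g⁻¹ * x * g ∈ (S : Subgroup G) := by
      have := inv_mem hS1
      simpa [mul_assoc] using this
    obtain ⟨k, hk⟩ := S.isPGroup' ⟨g⁻¹ * x * g, hS2⟩
    have hk' : (g⁻¹ * x * g) ^ p ^ k = 1 := by
      have := congrArg (Subtype.val) hk
      simpa using this
    have hxe : x ^ p ^ k = 1 := by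
      have hconj : (g⁻¹ * x * g) ^ p ^ k = g⁻¹ * x ^ p ^ k * g := by
        rw [show g⁻¹ * x * g = g⁻¹ * x * g⁻¹⁻¹ by rw [inv_inv], conj_pow, inv_inv]
      rw [hconj] at hk'
      have : x ^ p ^ k = g * 1 * g⁻¹ := by
        rw [← hk']; group
      simpa using this
    refine ⟨k, ?_⟩
    apply Subtype.ext; apply Subtype.ext
    push_cast
    simpa using hxe
  obtain ⟨j, hj⟩ := (IsPGroup.iff_card (p := p)).mp hstab
  have hmi : Nat.card (↥C ⧸ MulAction.stabilizer ↥C a) = (MulAction.stabilizer ↥C a).index := rfl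
  have hlag : Nat.card (MulAction.stabilizer ↥C a) * (MulAction.stabilizer ↥C a).index
      = Nat.card ↥C := Subgroup.card_mul_index _
  have hdvd1 : p ^ j ∣ p ^ n * m := by
    rw [← hn, ← hdec, ← hj]
    exact Subgroup.card_subgroup_dvd_card _
  have hcop : (p ^ j).Coprime m :=
    Nat.Coprime.pow_left j ((Nat.Prime.coprime_iff_not_dvd Fact.out).mpr hm)
  obtain ⟨t, ht⟩ := hcop.dvd_of_dvd_mul_right hdvd1
  have hppos : 0 < p ^ j := pow_pos (Nat.Prime.pos Fact.out) j
  have hidx : (MulAction.stabilizer ↥C a).index = t * m := by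
    apply Nat.eq_of_mul_eq_mul_left hppos
    calc p ^ j * (MulAction.stabilizer ↥C a).index
        = Nat.card (MulAction.stabilizer ↥C a) * (MulAction.stabilizer ↥C a).index := by rw [hj]
      _ = Nat.card ↥C := hlag
      _ = p ^ n * m := by rw [hdec, hn]
      _ = p ^ j * (t * m) := by rw [ht]; ring
  rw [hmi, hidx]
  exact Dvd.intro_left t rfl

end Aux

theorem stmt1 (p : ℕ) [Fact p.Prime] (G : Type*) [Group G] [Fintype G]
    (S : Sylow p G) (P : Subgroup G) (hP : P ≤ ↑S)
    (hfn : FullyNormalized ↑S P) :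
    ∃ k' : ℕ, 0 < k' ∧ ¬ p ∣ k' ∧
      Nat.card ↥(transporter P ↑S) *
          Nat.card ↥(Subgroup.centralizer (P : Set G) ⊓ ↑S) =
        Nat.card ↥(S : Subgroup G) *
          Nat.card ↥(Subgroup.centralizer (P : Set G)) * k' := by
  obtain ⟨m, hm, hdec⟩ := card_centralizer_decomp S hP hfn
  obtain ⟨k', hk'⟩ := dvd_card_Dset S hP hm hdec
  have hT := card_transporter S P
  have hndvd := not_dvd_card_Dset S hP
  have hpos : 0 < Nat.card (Dset S P) := by
    have : (QuotientGroup.mk (1 : G) : G ⧸ (S : Subgroup G)) ∈ Dset S P :=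
      ⟨1, one_mem_Tinv S hP, rfl⟩
    have hne : Nonempty (Dset S P) := ⟨⟨_, this⟩⟩
    exact Nat.card_pos
  refine ⟨k', ?_, ?_, ?_⟩
  · rcases Nat.eq_zero_or_pos k' with h | h
    · rw [h, mul_zero] at hk'; omega
    · exact h
  · intro hpk
    exact hndvd (hk' ▸ Dvd.dvd.mul_left hpk m)
  · rw [hT, hdec, hk']
    ring
end

section
/- Let Q, P ≤ S be subgroups and let m denote the number of subgroups of S that are G-conjugate to Q. Then: (a) for every subgroup Q' ≤ S that is G-conjugate to Q, the p-adic valuation of m is at most the p-adic valuation of |S|/|N_S(Q')| (the number of S-conjugates of Q'); (b) the average (1/m) · Σ_{Q'} |(S/P)^{Q'}|, where Q' runs over all subgroups of S that are G-conjugate to Q, equals the rational number (|N_G(Q,P)| · |S|) / (|P| · |N_G(Q,S)|), and this rational number is p-integral. (Specialization to F = F_S(G) of the paper's Lemma on weighted means of fixed-point numbers.) -/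
/-- A rational number is `p`-integral if it can be written with a denominator
prime to `p`. -/
def IsPIntegral (p : ℕ) (q : ℚ) : Prop :=
  ∃ a b : ℤ, ¬ (p : ℤ) ∣ b ∧ q * b = a

/-- The number of `Q`-fixed points of the left coset space `S/P`,
i.e. `|(S/P)^Q|`. -/
noncomputable def cosetFixCard {G : Type*} [Group G] (S P Q : Subgroup G) : ℕ :=
  Nat.card ↥{x : ↥S ⧸ P.subgroupOf S | ∀ s : ↥S, (s : G) ∈ Q → s • x = x}

namespace StmtAux

open Pointwise MulAction

variable {G : Type*} [Group G]

/-- conjugation of subgroups -/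
def cj (g : G) (H : Subgroup G) : Subgroup G := Subgroup.map (MulAut.conj g).toMonoidHom H

lemma mem_cj {g x : G} {H : Subgroup G} : x ∈ cj g H ↔ g⁻¹ * x * g ∈ H := by
  simp only [cj, Subgroup.mem_map]
  constructor
  · rintro ⟨y, hy, rfl⟩
    simpa [mul_assoc] using hy
  · intro h
    exact ⟨g⁻¹ * x * g, h, by simp [MulAut.conj_apply]; group⟩

lemma cj_cj (g h : G) (H : Subgroup G) : cj g (cj h H) = cj (g * h) H := by
  ext x; simp [mem_cj, mul_assoc]

lemma cj_one (H : Subgroup G) : cj 1 H = H := by ext x; simp [mem_cj]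

lemma cj_inv_cj (g : G) (H : Subgroup G) : cj g⁻¹ (cj g H) = H := by
  rw [cj_cj, inv_mul_cancel, cj_one]

lemma cj_cj_inv (g : G) (H : Subgroup G) : cj g (cj g⁻¹ H) = H := by
  have := cj_inv_cj g⁻¹ H; rwa [inv_inv] at this

lemma cj_le_iff {g : G} {H K : Subgroup G} : cj g H ≤ K ↔ ∀ a ∈ H, g * a * g⁻¹ ∈ K := by
  constructor
  · intro h a ha
    exact h (mem_cj.mpr (by simpa [mul_assoc] using ha))
  · intro h x hx
    rw [mem_cj] at hx
    have := h _ hx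
    simpa [mul_assoc] using this

lemma cj_le_cj {g : G} {H K : Subgroup G} (h : H ≤ K) : cj g H ≤ cj g K := by
  intro x hx; rw [mem_cj] at *; exact h hx

lemma gconj_refl (H : Subgroup G) : GConj H H := ⟨1, cj_one H⟩

lemma gconj_cj {H K : Subgroup G} (g : G) (h : GConj H K) : GConj H (cj g K) := by
  obtain ⟨u, rfl⟩ := h; exact ⟨g * u, (cj_cj g u H).symm⟩

lemma mem_normalizer_iff_cj {g : G} {H : Subgroup G} : g ∈ (Subgroup.normalizer (H : Set G)) ↔ cj g H = H := by
  rw [Subgroup.mem_normalizer_iff]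
  constructor
  · intro h
    ext x
    have key : g * (g⁻¹ * x * g) * g⁻¹ = x := by group
    rw [mem_cj, h (g⁻¹ * x * g), key]
  · intro h x
    constructor
    · intro hx
      rw [← h, mem_cj]
      simpa [mul_assoc] using hx
    · intro hx
      rw [← h, mem_cj] at hx
      simpa [mul_assoc] using hx

lemma cj_self {S : Subgroup G} {s : G} (hs : s ∈ S) : cj s S = S :=
  mem_normalizer_iff_cj.mp (Subgroup.le_normalizer hs)

lemma normalizer_cj (g : G) (H : Subgroup G) : (Subgroup.normalizer ((cj g H) : Set G)) = cj g (Subgroup.normalizer (H : Set G)) := by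
  rw [cj, cj, ← Subgroup.map_equiv_normalizer_eq H (MulAut.conj g)]

lemma card_cj (g : G) (H : Subgroup G) : Nat.card (cj g H) = Nat.card H :=
  Nat.card_congr (Subgroup.equivMapOfInjective H _ (MulAut.conj g).injective).toEquiv.symm

lemma mem_transporter_iff {g : G} {A B : Subgroup G} :
    g ∈ transporter A B ↔ cj g A ≤ B := by
  rw [cj_le_iff]; rfl

noncomputable def rep {Q : Subgroup G} (X : {K : Subgroup G // GConj Q K}) : G :=
  X.2.choose

lemma rep_spec {Q : Subgroup G} (X : {K : Subgroup G // GConj Q K}) : cj (rep X) Q = X.1 :=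
  X.2.choose_spec

/-- counting the transporter by fibers over target subgroups -/
lemma card_transporter (Q R : Subgroup G) :
    Nat.card (transporter Q R) =
      Nat.card {K : Subgroup G // K ≤ R ∧ GConj Q K} * Nat.card (Subgroup.normalizer (Q : Set G)) := by
  rw [← Nat.card_prod]
  apply Nat.card_congr
  symm
  have hF : ∀ (X : {K : Subgroup G // K ≤ R ∧ GConj Q K}) (n : (Subgroup.normalizer (Q : Set G))),
      rep ⟨X.1, X.2.2⟩ * (n : G) ∈ transporter Q R := by
    intro X n
    rw [mem_transporter_iff, ← cj_cj]
    rw [mem_normalizer_iff_cj.mp n.2, rep_spec]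
    exact X.2.1
  refine Equiv.ofBijective (fun z => ⟨rep ⟨z.1.1, z.1.2.2⟩ * (z.2 : G), hF z.1 z.2⟩) ⟨?_, ?_⟩
  · rintro ⟨X, n⟩ ⟨X', n'⟩ h
    simp only [Subtype.mk.injEq] at h
    have hX : X.1 = X'.1 := by
      have e1 : cj (rep ⟨X.1, X.2.2⟩ * (n : G)) Q = X.1 := by
        rw [← cj_cj, mem_normalizer_iff_cj.mp n.2, rep_spec]
      have e2 : cj (rep ⟨X'.1, X'.2.2⟩ * (n' : G)) Q = X'.1 := by
        rw [← cj_cj, mem_normalizer_iff_cj.mp n'.2, rep_spec]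
      rw [← e1, ← e2, h]
    have hXX : X = X' := Subtype.ext hX
    subst hXX
    have : (n : G) = n' := mul_left_cancel h
    exact Prod.ext rfl (Subtype.ext this)
  · rintro ⟨g, hg⟩
    have hgQ : GConj Q (cj g Q) := gconj_cj g (gconj_refl Q)
    have hle : cj g Q ≤ R := mem_transporter_iff.mp hg
    have hrs : cj (rep ⟨cj g Q, hgQ⟩) Q = cj g Q := rep_spec ⟨cj g Q, hgQ⟩
    have hn : (rep ⟨cj g Q, hgQ⟩)⁻¹ * g ∈ (Subgroup.normalizer (Q : Set G)) := by
      have h2 := cj_inv_cj (rep ⟨cj g Q, hgQ⟩) Q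
      rw [hrs] at h2
      rw [mem_normalizer_iff_cj, ← cj_cj]
      exact h2
    refine ⟨⟨⟨cj g Q, hle, hgQ⟩, ⟨_, hn⟩⟩, ?_⟩
    ext
    show rep ⟨cj g Q, hgQ⟩ * ((rep ⟨cj g Q, hgQ⟩)⁻¹ * g) = g
    simp

/-- number of G-conjugates equals index of normalizer -/
lemma card_conjugates (Q : Subgroup G) :
    Nat.card {K : Subgroup G // GConj Q K} = (Subgroup.normalizer (Q : Set G)).index := by
  rw [Subgroup.index]
  apply Nat.card_congr
  symm
  refine Equiv.ofBijective (fun x => Quotient.liftOn' x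
    (fun g => (⟨cj g Q, g, rfl⟩ : {K : Subgroup G // GConj Q K})) ?_) ⟨?_, ?_⟩
  · intro a b hab
    rw [QuotientGroup.leftRel_apply] at hab
    apply Subtype.ext
    show cj a Q = cj b Q
    conv_lhs => rw [← mem_normalizer_iff_cj.mp hab]
    rw [cj_cj, mul_inv_cancel_left]
  · intro x y
    refine Quotient.inductionOn₂' x y fun a b h => ?_
    have hcj : cj a Q = cj b Q := congrArg Subtype.val h
    apply Quotient.sound'
    rw [QuotientGroup.leftRel_apply]
    have h2 := cj_inv_cj a Q
    rw [hcj] at h2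
    rw [mem_normalizer_iff_cj, ← cj_cj]
    exact h2
  · rintro ⟨K, g, rfl⟩
    exact ⟨Quotient.mk'' g, rfl⟩

lemma nat_card_sigma {ι : Type*} [Fintype ι] (f : ι → Type*) [∀ i, Finite (f i)] :
    Nat.card (Σ i, f i) = ∑ i, Nat.card (f i) := by
  letI : ∀ i, Fintype (f i) := fun i => Fintype.ofFinite _
  simp [Nat.card_eq_fintype_card]

/-- transport of fibers along conjugation -/
def fiberEquiv (Q : Subgroup G) (g : G) {A B : Subgroup G} (h : cj g A = B) :
    {K : Subgroup G // K ≤ A ∧ GConj Q K} ≃ {K : Subgroup G // K ≤ B ∧ GConj Q K} where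
  toFun K := ⟨cj g K.1, h ▸ cj_le_cj K.2.1, gconj_cj g K.2.2⟩
  invFun K := ⟨cj g⁻¹ K.1, by
      have h1 : cj g⁻¹ K.1 ≤ cj g⁻¹ B := cj_le_cj K.2.1
      have h2 : cj g⁻¹ B = A := by rw [← h, cj_inv_cj]
      exact h1.trans_eq h2, gconj_cj g⁻¹ K.2.2⟩
  left_inv K := Subtype.ext (cj_inv_cj g K.1)
  right_inv K := Subtype.ext (cj_cj_inv g K.1)

section Sylow

variable {p : ℕ} [Fact p.Prime] [Fintype G]

omit [Fact p.Prime] [Fintype G] in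
lemma coe_smul_sylow [Fact p.Prime] [Fintype G] (g : G) (T : Sylow p G) :
    ((g • T : Sylow p G) : Subgroup G) = cj g ↑T := rfl

/-- transport of Sylow overgroup fibers along conjugation -/
def sylowFiberEquiv (g : G) {A B : Subgroup G} (h : cj g A = B) :
    {T : Sylow p G // A ≤ ↑T} ≃ {T : Sylow p G // B ≤ ↑T} where
  toFun T := ⟨g • T.1, by rw [coe_smul_sylow, ← h]; exact cj_le_cj T.2⟩
  invFun T := ⟨g⁻¹ • T.1, by
      have h1 : cj g⁻¹ B ≤ cj g⁻¹ ↑T.1 := cj_le_cj T.2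
      have h2 : cj g⁻¹ B = A := by rw [← h, cj_inv_cj]
      rw [coe_smul_sylow]; exact h2.symm.trans_le h1⟩
  left_inv T := Subtype.ext (inv_smul_smul g T.1)
  right_inv T := Subtype.ext (smul_inv_smul g T.1)

/-- the double counting identity -/
lemma double_count (Q : Subgroup G) (S : Sylow p G) :
    Nat.card {K : Subgroup G // K ≤ ↑S ∧ GConj Q K} * Nat.card (Sylow p G) =
      Nat.card {K : Subgroup G // GConj Q K} * Nat.card {T : Sylow p G // Q ≤ ↑T} := by
  classical
  have key : (Σ T : Sylow p G, {K : Subgroup G // K ≤ ↑T ∧ GConj Q K}) ≃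
      (Σ K : {K : Subgroup G // GConj Q K}, {T : Sylow p G // K.1 ≤ ↑T}) :=
    { toFun := fun z => ⟨⟨z.2.1, z.2.2.2⟩, ⟨z.1, z.2.2.1⟩⟩
      invFun := fun z => ⟨z.2.1, ⟨z.1.1, z.2.2, z.1.2⟩⟩
      left_inv := fun ⟨T, K, h1, h2⟩ => rfl
      right_inv := fun ⟨K, T⟩ => rfl }
  have h1 : Nat.card (Σ T : Sylow p G, {K : Subgroup G // K ≤ ↑T ∧ GConj Q K}) =
      Nat.card (Sylow p G) * Nat.card {K : Subgroup G // K ≤ ↑S ∧ GConj Q K} := by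
    rw [nat_card_sigma]
    have : ∀ T : Sylow p G, Nat.card {K : Subgroup G // K ≤ ↑T ∧ GConj Q K} =
        Nat.card {K : Subgroup G // K ≤ ↑S ∧ GConj Q K} := by
      intro T
      obtain ⟨g, hg⟩ := MulAction.exists_smul_eq G T S
      have hc : cj g ↑T = ↑S := by rw [← coe_smul_sylow, hg]
      exact Nat.card_congr (fiberEquiv Q g hc)
    rw [Finset.sum_congr rfl fun T _ => this T, Finset.sum_const, Finset.card_univ, smul_eq_mul]
    simp [Nat.card_eq_fintype_card]
  have h2 : Nat.card (Σ K : {K : Subgroup G // GConj Q K}, {T : Sylow p G // K.1 ≤ ↑T}) =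
      Nat.card {K : Subgroup G // GConj Q K} * Nat.card {T : Sylow p G // Q ≤ ↑T} := by
    letI : Fintype {K : Subgroup G // GConj Q K} := Fintype.ofFinite _
    rw [nat_card_sigma]
    have : ∀ K : {K : Subgroup G // GConj Q K}, Nat.card {T : Sylow p G // K.1 ≤ ↑T} =
        Nat.card {T : Sylow p G // Q ≤ ↑T} := by
      rintro ⟨K, g, (rfl : cj g Q = K)⟩
      exact (Nat.card_congr (sylowFiberEquiv g rfl)).symm
    rw [Finset.sum_congr rfl fun K _ => this K, Finset.sum_const, Finset.card_univ, smul_eq_mul]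
    simp [Nat.card_eq_fintype_card]
  rw [mul_comm, ← h1, Nat.card_congr key, h2]

/-- number of Sylows containing a p-subgroup is 1 mod p -/
lemma card_sylow_containing_modEq_one (Q : Subgroup G) (hQ : IsPGroup p Q) :
    Nat.card {T : Sylow p G // Q ≤ ↑T} ≡ 1 [MOD p] := by
  have h2 : Nat.card (Sylow p G) ≡ Nat.card (fixedPoints Q (Sylow p G)) [MOD p] :=
    hQ.card_modEq_card_fixedPoints _
  have h3 : Nat.card (fixedPoints Q (Sylow p G)) = Nat.card {T : Sylow p G // Q ≤ ↑T} :=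
    Nat.card_congr (Equiv.subtypeEquivRight fun T => hQ.sylow_mem_fixedPoints_iff)
  exact (h3 ▸ h2).symm.trans (card_sylow_modEq_one p G)

end Sylow

def TT (S P Q' : Subgroup G) : Set ↥S := {t : ↥S | ∀ q ∈ Q', (t : G)⁻¹ * q * (t : G) ∈ P}

lemma TT_eq_preimage (S P Q' : Subgroup G) (hQ'S : Q' ≤ S) :
    (QuotientGroup.mk ⁻¹'
        {x : ↥S ⧸ P.subgroupOf S | ∀ s : ↥S, (s : G) ∈ Q' → s • x = x} : Set ↥S) =
      TT S P Q' := by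
  ext t
  simp only [Set.mem_preimage, Set.mem_setOf_eq, TT]
  constructor
  · intro h q hq
    have hs : (⟨q, hQ'S hq⟩ : ↥S)⁻¹ • (QuotientGroup.mk t : ↥S ⧸ P.subgroupOf S) =
        QuotientGroup.mk t := h _ (by simpa using inv_mem hq)
    rw [MulAction.Quotient.smul_mk, QuotientGroup.eq, Subgroup.mem_subgroupOf] at hs
    simpa [mul_assoc] using hs
  · intro h s hs
    rw [MulAction.Quotient.smul_mk, QuotientGroup.eq, Subgroup.mem_subgroupOf]
    have := h _ (inv_mem hs)
    simpa [mul_assoc] using this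

lemma card_TT (S P Q' : Subgroup G) (hQ'S : Q' ≤ S) (hP : P ≤ S) :
    Nat.card (TT S P Q') = Nat.card P * cosetFixCard S P Q' := by
  rw [← TT_eq_preimage S P Q' hQ'S]
  rw [Nat.card_congr (QuotientGroup.preimageMkEquivSubgroupProdSet (P.subgroupOf S) _)]
  rw [Nat.card_prod, cosetFixCard]
  congr 1
  exact Nat.card_congr (Subgroup.subgroupOfEquivOfLe hP).toEquiv

lemma sigma_subtype_ext {α β : Type*} {f : α → β → Prop} {a a' : α} {b : {x // f a x}}
    {b' : {x // f a' x}} (ha : a = a') (hb : b.1 = b'.1) :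
    (⟨a, b⟩ : Σ x : α, {y // f x y}) = ⟨a', b'⟩ := by
  subst ha
  cases Subtype.ext hb
  rfl

noncomputable def sumTTEquiv (S P Q : Subgroup G) (hP : P ≤ S) :
    (↥S × {K : Subgroup G // K ≤ P ∧ GConj Q K}) ≃
      (Σ X : {K : Subgroup G // K ≤ S ∧ GConj Q K}, ↥(TT S P X.1)) := by
  have hTT : ∀ (s : ↥S) (K : {K : Subgroup G // K ≤ P ∧ GConj Q K}),
      s ∈ TT S P (cj (s : G) K.1) := by
    intro s K q hq
    exact K.2.1 (mem_cj.mp hq)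
  refine Equiv.ofBijective (fun z =>
    ⟨⟨cj (z.1 : G) z.2.1, (cj_le_cj (z.2.2.1.trans hP)).trans_eq (cj_self z.1.2),
        gconj_cj _ z.2.2.2⟩, ⟨z.1, hTT z.1 z.2⟩⟩) ⟨?_, ?_⟩
  · rintro ⟨s, K⟩ ⟨s', K'⟩ h
    have hs : s = s' := congrArg (fun z => (z.2 : ↥S)) h
    have hK : cj (s : G) K.1 = cj (s' : G) K'.1 := congrArg (fun z => z.1.1) h
    rw [← hs] at hK
    have : K.1 = K'.1 := by
      have := congrArg (cj (s : G)⁻¹) hK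
      rwa [cj_inv_cj, cj_inv_cj] at this
    rw [Prod.ext_iff]
    exact ⟨hs, Subtype.ext this⟩
  · rintro ⟨X, t⟩
    have hle : cj (t : G)⁻¹ X.1 ≤ P := by
      intro x hx
      have hmem : (t : G) * x * (t : G)⁻¹ ∈ X.1 := by
        have := mem_cj.mp hx
        simpa using this
      have := t.2 _ hmem
      simpa [mul_assoc] using this
    refine ⟨⟨t, ⟨cj (t : G)⁻¹ X.1, hle, gconj_cj _ X.2.2⟩⟩, ?_⟩
    exact sigma_subtype_ext
      (f := fun (X : {K : Subgroup G // K ≤ S ∧ GConj Q K}) (t : ↥S) => t ∈ TT S P X.1)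
      (Subtype.ext (cj_cj_inv (t : G) X.1)) rfl

lemma card_dvd_card_transporter (Q P : Subgroup G) :
    Nat.card ↥P ∣ Nat.card (transporter Q P) := by
  classical
  set V : Set G := {h : G | cj h⁻¹ Q ≤ P} with hV
  have hequiv : ↥(transporter Q P) ≃ ↥V :=
    { toFun := fun g => ⟨(g : G)⁻¹, by
        show cj (g : G)⁻¹⁻¹ Q ≤ P
        rw [inv_inv]; exact mem_transporter_iff.mp g.2⟩
      invFun := fun h => ⟨(h : G)⁻¹, mem_transporter_iff.mpr h.2⟩
      left_inv := fun g => Subtype.ext (inv_inv _)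
      right_inv := fun h => Subtype.ext (inv_inv _) }
  have hsat : (QuotientGroup.mk ⁻¹' (QuotientGroup.mk '' V : Set (G ⧸ P)) : Set G) = V := by
    ext t
    simp only [Set.mem_preimage, Set.mem_image]
    constructor
    · rintro ⟨v, hv, hvt⟩
      rw [QuotientGroup.eq] at hvt
      show cj t⁻¹ Q ≤ P
      have h1 : t⁻¹ = (v⁻¹ * t)⁻¹ * v⁻¹ := by group
      rw [h1, ← cj_cj]
      exact (cj_le_cj hv).trans_eq (cj_self (inv_mem hvt))
    · intro ht
      exact ⟨t, ht, rfl⟩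
  have hcard := Nat.card_congr
    (QuotientGroup.preimageMkEquivSubgroupProdSet P (QuotientGroup.mk '' V))
  rw [hsat] at hcard
  rw [Nat.card_congr hequiv, hcard, Nat.card_prod]
  exact Dvd.intro _ rfl

lemma not_dvd_of_modEq_one {p k : ℕ} (hp : p.Prime) (h : k ≡ 1 [MOD p]) : ¬ p ∣ k :=
  fun hd => hp.ne_one (Nat.dvd_one.mp
    ((Nat.modEq_iff_dvd' zero_le_one).mp ((Nat.modEq_zero_iff_dvd.mpr hd).symm.trans h)))

end StmtAux

section Main

open StmtAux

/-- valuation identity: v_p(m) + v_p(|N_G(Q)|) = v_p(|G|). -/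
lemma main_val (p : ℕ) [Fact p.Prime] (G : Type*) [Group G] [Fintype G]
    (S : Sylow p G) (Q : Subgroup G) (hQ : Q ≤ ↑S) :
    padicValNat p (Nat.card {Q'' : Subgroup G // Q'' ≤ ↑S ∧ GConj Q Q''}) +
      padicValNat p (Nat.card (Subgroup.normalizer (Q : Set G))) = padicValNat p (Nat.card G) := by
  classical
  have hp := (inferInstance : Fact p.Prime).out
  haveI : Nonempty {Q'' : Subgroup G // Q'' ≤ ↑S ∧ GConj Q Q''} := ⟨⟨Q, hQ, gconj_refl Q⟩⟩
  haveI : Nonempty {K : Subgroup G // GConj Q K} := ⟨⟨Q, gconj_refl Q⟩⟩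
  haveI : Nonempty {T : Sylow p G // Q ≤ ↑T} := ⟨⟨S, hQ⟩⟩
  have hm0 : Nat.card {Q'' : Subgroup G // Q'' ≤ ↑S ∧ GConj Q Q''} ≠ 0 := Nat.card_pos.ne'
  have hc0 : Nat.card {K : Subgroup G // GConj Q K} ≠ 0 := Nat.card_pos.ne'
  have hk0 : Nat.card {T : Sylow p G // Q ≤ ↑T} ≠ 0 := Nat.card_pos.ne'
  have hν0 : Nat.card (Subgroup.normalizer (Q : Set G)) ≠ 0 := Nat.card_pos.ne'
  have hSyl0 : Nat.card (Sylow p G) ≠ 0 := Nat.card_pos.ne'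
  -- v(m) = v(c)
  have hdc := double_count Q S
  have hQpg : IsPGroup p ↥Q := S.isPGroup'.to_le hQ
  have hkp : ¬ p ∣ Nat.card {T : Sylow p G // Q ≤ ↑T} :=
    not_dvd_of_modEq_one hp (card_sylow_containing_modEq_one Q hQpg)
  have hSylp : ¬ p ∣ Nat.card (Sylow p G) := not_dvd_card_sylow p G
  have e1 := congrArg (padicValNat p) hdc
  rw [padicValNat.mul hm0 hSyl0, padicValNat.mul hc0 hk0,
    padicValNat.eq_zero_of_not_dvd hkp, padicValNat.eq_zero_of_not_dvd hSylp] at e1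
  -- c * ν = |G|
  have e2 : Nat.card {K : Subgroup G // GConj Q K} * Nat.card (Subgroup.normalizer (Q : Set G)) = Nat.card G := by
    rw [card_conjugates Q]
    exact (Subgroup.normalizer (Q : Set G)).index_mul_card
  have e3 := congrArg (padicValNat p) e2
  rw [padicValNat.mul hc0 hν0] at e3
  omega

/-- the weighted sum identity: |P| · Σ |(S/P)^{Q'}| = |S| · #{conjugates of Q inside P} -/
lemma main_sum {G : Type*} [Group G] [Fintype G] (S P Q : Subgroup G) (hP : P ≤ S)
    [Fintype {K : Subgroup G // K ≤ S ∧ GConj Q K}] :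
    Nat.card ↥P * (∑ X : {K : Subgroup G // K ≤ S ∧ GConj Q K}, cosetFixCard S P X.1) =
      Nat.card ↥S * Nat.card {K : Subgroup G // K ≤ P ∧ GConj Q K} := by
  have h1 := Nat.card_congr (sumTTEquiv S P Q hP)
  rw [Nat.card_prod, nat_card_sigma] at h1
  rw [Finset.sum_congr rfl (fun X _ => card_TT S P X.1 X.2.1 hP), ← Finset.mul_sum] at h1
  exact h1.symm

end Main

open StmtAux in
theorem stmt3 (p : ℕ) [Fact p.Prime] (G : Type*) [Group G] [Fintype G]
    (S : Sylow p G) (Q P : Subgroup G) (hQ : Q ≤ ↑S) (hP : P ≤ ↑S) :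
    (∀ Q' : Subgroup G, Q' ≤ ↑S → GConj Q Q' →
        padicValNat p (Nat.card {Q'' : Subgroup G // Q'' ≤ ↑S ∧ GConj Q Q''}) ≤
          padicValNat p
            (Nat.card ↥(S : Subgroup G) / Nat.card ↥(normIn ↑S Q'))) ∧
      (∑ᶠ Q' ∈ {Q' : Subgroup G | Q' ≤ ↑S ∧ GConj Q Q'},
            (cosetFixCard ↑S P Q' : ℚ)) /
          (Nat.card {Q'' : Subgroup G // Q'' ≤ ↑S ∧ GConj Q Q''} : ℚ) =
        (Nat.card ↥(transporter Q P) * Nat.card ↥(S : Subgroup G) : ℚ) /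
          (Nat.card ↥P * Nat.card ↥(transporter Q ↑S)) ∧
      IsPIntegral p
        ((Nat.card ↥(transporter Q P) * Nat.card ↥(S : Subgroup G) : ℚ) /
          (Nat.card ↥P * Nat.card ↥(transporter Q ↑S))) := by
  classical
  have hp := (inferInstance : Fact p.Prime).out
  letI instQ : Fintype {Q'' : Subgroup G // Q'' ≤ (S : Subgroup G) ∧ GConj Q Q''} :=
    Fintype.ofFinite _
  haveI : Nonempty {Q'' : Subgroup G // Q'' ≤ (S : Subgroup G) ∧ GConj Q Q''} :=
    ⟨⟨Q, hQ, gconj_refl Q⟩⟩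
  have hm0 : Nat.card {Q'' : Subgroup G // Q'' ≤ (S : Subgroup G) ∧ GConj Q Q''} ≠ 0 :=
    Nat.card_pos.ne'
  have hν0 : Nat.card (Subgroup.normalizer (Q : Set G)) ≠ 0 := Nat.card_pos.ne'
  have hP0 : Nat.card ↥P ≠ 0 := Nat.card_pos.ne'
  have hS0 : Nat.card ↥(S : Subgroup G) ≠ 0 := Nat.card_pos.ne'
  have hG0 : Nat.card G ≠ 0 := Nat.card_pos.ne'
  have hval := main_val p G S Q hQ
  have hTS := card_transporter Q (S : Subgroup G)
  have hTP := card_transporter Q P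
  have hsum := main_sum (S : Subgroup G) P Q hP
  have hcardS : Nat.card ↥(S : Subgroup G) = p ^ (Nat.card G).factorization p :=
    S.card_eq_multiplicity
  have hE : (Nat.card G).factorization p = padicValNat p (Nat.card G) :=
    Nat.factorization_def _ hp
  -- the sum as a natural number
  set Nn : ℕ := ∑ X : {Q'' : Subgroup G // Q'' ≤ (S : Subgroup G) ∧ GConj Q Q''},
    cosetFixCard (S : Subgroup G) P X.1 with hNn
  -- the key fraction identity
  have hfrac : (Nat.card ↥(transporter Q P) * Nat.card ↥(S : Subgroup G) : ℚ) /
      (Nat.card ↥P * Nat.card ↥(transporter Q (S : Subgroup G))) =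
      (Nn : ℚ) / (Nat.card {Q'' : Subgroup G // Q'' ≤ (S : Subgroup G) ∧ GConj Q Q''} : ℚ) := by
    rw [hTS, hTP]
    have hkey : ((Nat.card ↥P : ℚ)) * (Nn : ℚ) =
        (Nat.card ↥(S : Subgroup G) : ℚ) *
          (Nat.card {K : Subgroup G // K ≤ P ∧ GConj Q K} : ℚ) := by
      exact_mod_cast congrArg (Nat.cast : ℕ → ℚ) hsum
    push_cast
    rw [div_eq_div_iff (by positivity) (by positivity)]
    linear_combination (-(Nat.card {Q'' : Subgroup G // Q'' ≤ (S : Subgroup G) ∧ GConj Q Q''} : ℚ) *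
      (Nat.card (Subgroup.normalizer (Q : Set G)) : ℚ)) * hkey
  refine ⟨?_, ?_, ?_⟩
  · -- part (a)
    intro Q' hQ'S hQQ'
    obtain ⟨g, hg⟩ := hQQ'
    subst hg
    have hpg : IsPGroup p ↥(normIn (S : Subgroup G) (cj g Q)) := S.isPGroup'.to_le inf_le_right
    obtain ⟨a, ha⟩ := IsPGroup.iff_card.mp hpg
    have hνeq : Nat.card (Subgroup.normalizer ((cj g Q) : Set G)) = Nat.card (Subgroup.normalizer (Q : Set G)) := by
      rw [normalizer_cj, card_cj]
    have hdvd1 : Nat.card ↥(normIn (S : Subgroup G) (cj g Q)) ∣ Nat.card (Subgroup.normalizer ((cj g Q) : Set G)) :=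
      Subgroup.card_dvd_of_le inf_le_left
    have hdvd2 : Nat.card ↥(normIn (S : Subgroup G) (cj g Q)) ∣ Nat.card ↥(S : Subgroup G) :=
      Subgroup.card_dvd_of_le inf_le_right
    have haE : a ≤ (Nat.card G).factorization p := by
      rw [ha, hcardS] at hdvd2
      exact (Nat.pow_dvd_pow_iff_le_right hp.one_lt).mp hdvd2
    have haν : a ≤ padicValNat p (Nat.card (Subgroup.normalizer (Q : Set G))) := by
      have hd : p ^ a ∣ Nat.card (Subgroup.normalizer (Q : Set G)) := by
        rw [← hνeq, ← ha]; exact hdvd1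
      have h2 := (Nat.Prime.pow_dvd_iff_le_factorization hp hν0).mp hd
      rwa [Nat.factorization_def _ hp] at h2
    have hgoal : Nat.card ↥(S : Subgroup G) / Nat.card ↥(normIn (S : Subgroup G) (cj g Q)) =
        p ^ ((Nat.card G).factorization p - a) := by
      rw [hcardS, ha, Nat.pow_div haE hp.pos]
    change padicValNat p _ ≤ padicValNat p
      (Nat.card ↥(S : Subgroup G) / Nat.card ↥(normIn (S : Subgroup G) (cj g Q)))
    rw [hgoal, padicValNat.prime_pow]
    omega
  · -- part (b)
    have sumeq : (∑ᶠ Q' ∈ {Q' : Subgroup G | Q' ≤ (S : Subgroup G) ∧ GConj Q Q'},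
        (cosetFixCard (S : Subgroup G) P Q' : ℚ)) = (Nn : ℚ) := by
      rw [finsum_mem_eq_finite_toFinset_sum _ (Set.toFinite _)]
      rw [Finset.sum_subtype (p := fun Q'' => Q'' ≤ (S : Subgroup G) ∧ GConj Q Q'') _
        (fun x => by simp) (fun Q' => (cosetFixCard (S : Subgroup G) P Q' : ℚ))]
      rw [hNn]
      push_cast
      rfl
    rw [hfrac, sumeq]
  · -- part (c)
    rw [hfrac]
    set m : ℕ := Nat.card {Q'' : Subgroup G // Q'' ≤ (S : Subgroup G) ∧ GConj Q Q''} with hm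
    set vm : ℕ := padicValNat p m with hvm
    by_cases hNn0 : Nn = 0
    · refine ⟨0, 1, ?_, by rw [hNn0]; simp⟩
      rw [show (1 : ℤ) = ((1 : ℕ) : ℤ) from rfl, Int.natCast_dvd_natCast, Nat.dvd_one]
      exact hp.ne_one
    · have hnP0 : Nat.card {K : Subgroup G // K ≤ P ∧ GConj Q K} ≠ 0 := by
        intro h
        rw [h, mul_zero] at hsum
        rcases Nat.mul_eq_zero.mp hsum with h' | h'
        · exact hP0 h'
        · exact hNn0 h'
      have e4 := congrArg (padicValNat p) hsum
      rw [padicValNat.mul hP0 hNn0, padicValNat.mul hS0 hnP0] at e4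
      have hvS : padicValNat p (Nat.card ↥(S : Subgroup G)) = (Nat.card G).factorization p := by
        rw [hcardS, padicValNat.prime_pow]
      obtain ⟨bP, hbP⟩ := IsPGroup.iff_card.mp (S.isPGroup'.to_le hP)
      have hdP : Nat.card ↥P ∣
          Nat.card {K : Subgroup G // K ≤ P ∧ GConj Q K} * Nat.card (Subgroup.normalizer (Q : Set G)) := by
        rw [← hTP]; exact card_dvd_card_transporter Q P
      have hvP : padicValNat p (Nat.card ↥P) = bP := by rw [hbP, padicValNat.prime_pow]
      have hineq : bP ≤ padicValNat p (Nat.card {K : Subgroup G // K ≤ P ∧ GConj Q K}) +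
          padicValNat p (Nat.card (Subgroup.normalizer (Q : Set G))) := by
        rw [hbP] at hdP
        have h2 := (Nat.Prime.pow_dvd_iff_le_factorization hp
          (mul_ne_zero hnP0 hν0)).mp hdP
        rwa [Nat.factorization_def _ hp, padicValNat.mul hnP0 hν0] at h2
      have hvmN : vm ≤ padicValNat p Nn := by omega
      have hdvdN : p ^ vm ∣ Nn :=
        (Nat.Prime.pow_dvd_iff_le_factorization hp hNn0).mpr
          (by rwa [Nat.factorization_def _ hp])
      have hvmfact : vm = m.factorization p := (Nat.factorization_def _ hp).symm
      refine ⟨((Nn / p ^ vm : ℕ) : ℤ), ((m / p ^ vm : ℕ) : ℤ), ?_, ?_⟩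
      · rw [Int.natCast_dvd_natCast, hvmfact]
        exact Nat.not_dvd_ordCompl hp hm0
      · have hmf : p ^ vm * (m / p ^ vm) = m := by
          rw [hvmfact]
          exact Nat.ordProj_mul_ordCompl_eq_self m p
        have hN : Nn * (m / p ^ vm) = Nn / p ^ vm * m := by
          calc Nn * (m / p ^ vm) = p ^ vm * (Nn / p ^ vm) * (m / p ^ vm) := by
                rw [Nat.mul_div_cancel' hdvdN]
            _ = Nn / p ^ vm * (p ^ vm * (m / p ^ vm)) := by ring
            _ = Nn / p ^ vm * m := by rw [hmf]
        push_cast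
        rw [div_mul_eq_mul_div, div_eq_iff (by exact_mod_cast hm0)]
        exact_mod_cast hN
end

section
/- There exist finite (S × S)-sets Y and Z and a positive integer n not divisible by p with the following property. Call a subgroup D ≤ S × S a G-graph if there are a subgroup P ≤ S and an element g ∈ G with gPg⁻¹ ≤ S such that D = {(gug⁻¹, u) : u ∈ P} (then P is the image of D under the second projection). For every subgroup D ≤ S × S: if D is a G-graph with associated subgroup P, then |Y^D| · |N_G(P,S)| = |Z^D| · |N_G(P,S)| + n · |S| · |C_G(P)|; and if D is not a G-graph, then |Y^D| = |Z^D|. (This realizes the paper's Theorem B: the characteristic idempotent ω_F of F = F_S(G) is the element (Y − Z)/n of A(S,S)_(p), with Φ_{Δ(P,φ)}(ω_F) = |S|/|Hom_F(P,S)| = |S|·|C_G(P)|/|N_G(P,S)| on graphs of fusion morphisms and vanishing marks elsewhere; taking D trivial gives the augmentation ε(ω_F) = 1.) -/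
/-- The graph `{(gug⁻¹, u) : u ∈ P}` of the conjugation homomorphism `u ↦ gug⁻¹`
on `P`, as a subgroup of `G × G`. -/
def graphOf {G : Type*} [Group G] (g : G) (P : Subgroup G) : Subgroup (G × G) :=
  Subgroup.map ((MulAut.conj g).toMonoidHom.prod (MonoidHom.id G)) P

/-- `D ≤ S × S` is a `G`-graph if it is the graph of a conjugation homomorphism
induced by an element of `G` on a subgroup `P ≤ S` with `gPg⁻¹ ≤ S`. -/
def IsGGraph {G : Type*} [Group G] (S : Subgroup G) (D : Subgroup (G × G)) : Prop :=
  ∃ (P : Subgroup G) (g : G), P ≤ S ∧ (∀ u ∈ P, g * u * g⁻¹ ∈ S) ∧ D = graphOf g P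

/-- The number of fixed points `|X^Q|` of an `S`-set `X` under a subgroup
`Q` of the ambient group, where the `S`-action is given explicitly by `m`. -/
noncomputable def fixCard {H : Type*} [Group H] (S Q : Subgroup H) (X : Type)
    (m : MulAction ↥S X) : ℕ :=
  letI := m
  Nat.card ↥{x : X | ∀ s : ↥S, (s : H) ∈ Q → s • x = x}

namespace Stmt8Aux

/-! ### Pulled back actions -/

/-- Pull back a `MulAction` along an equivalence. -/
def pullAction {M α : Type*} [Monoid M] (β : Type*) (e : β ≃ α) (m : MulAction M α) :
    MulAction M β :=
  letI := m
  { smul := fun s y => e.symm (s • e y)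
    one_smul := fun y => by
      show e.symm ((1 : M) • e y) = y
      simp
    mul_smul := fun s t y => by
      show e.symm ((s * t) • e y) = e.symm (s • e (e.symm (t • e y)))
      simp [mul_smul] }

/-! ### The coefficient `S`-sets -/

variable {G : Type*} [Group G]

/-- `Σ_i (Fin (c i)) × Ω^i` where `Ω = G ⧸ S`. -/
def AType (G : Type*) [Group G] (S : Subgroup G) (d : ℕ) (c : ℕ → ℕ) : Type _ :=
  Σ i : Fin d, Fin (c i) × (Fin (i : ℕ) → G ⧸ S)

instance (G : Type*) [Group G] [Finite G] (S : Subgroup G) (d : ℕ) (c : ℕ → ℕ) :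
    Finite (AType G S d c) := by
  unfold AType; infer_instance

/-- Action of `G` on `AType` (diagonally on the quotient factors). -/
def aSmul (S : Subgroup G) (d : ℕ) (c : ℕ → ℕ) (u : G) (a : AType G S d c) :
    AType G S d c :=
  ⟨a.1, a.2.1, fun j => u • a.2.2 j⟩

lemma aSmul_one (S : Subgroup G) (d : ℕ) (c : ℕ → ℕ) (a : AType G S d c) :
    aSmul S d c 1 a = a := by
  obtain ⟨i, x, f⟩ := a
  simp [aSmul]
  rfl

lemma aSmul_mul (S : Subgroup G) (d : ℕ) (c : ℕ → ℕ) (u v : G) (a : AType G S d c) :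
    aSmul S d c (u * v) a = aSmul S d c u (aSmul S d c v a) := by
  obtain ⟨i, x, f⟩ := a
  simp [aSmul, mul_smul]
  rfl

lemma aSmul_fix_iff (S : Subgroup G) (d : ℕ) (c : ℕ → ℕ) (u : G) (a : AType G S d c) :
    aSmul S d c u a = a ↔ ∀ j, u • a.2.2 j = a.2.2 j := by
  obtain ⟨i, x, f⟩ := a
  constructor
  · intro h j
    have h2 := (Sigma.mk.inj_iff.mp h).2
    have h3 : ((x, fun j => u • f j) : Fin (c i) × (Fin (i : ℕ) → G ⧸ S)) = (x, f) :=
      eq_of_heq h2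
    exact congrFun (Prod.ext_iff.mp h3).2 j
  · intro h
    unfold aSmul
    simp only
    congr 1
    exact Prod.ext rfl (funext h)

/-- The biset-style action of `SS ≤ G × G` on `G × AType`. -/
def bSmul (S : Subgroup G) (SS : Subgroup (G × G)) (d : ℕ) (c : ℕ → ℕ)
    (s : ↥SS) (y : G × AType G S d c) : G × AType G S d c :=
  ((s : G × G).1 * y.1 * (s : G × G).2⁻¹, aSmul S d c (s : G × G).2 y.2)

/-- The `MulAction` structure given by `bSmul`. -/
def bAct (S : Subgroup G) (SS : Subgroup (G × G)) (d : ℕ) (c : ℕ → ℕ) :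
    MulAction ↥SS (G × AType G S d c) where
  smul := bSmul S SS d c
  one_smul y := by
    show bSmul S SS d c 1 y = y
    unfold bSmul
    simp [aSmul_one]
  mul_smul s t y := by
    show bSmul S SS d c (s * t) y = bSmul S SS d c s (bSmul S SS d c t y)
    unfold bSmul
    simp [aSmul_mul, mul_assoc, mul_inv_rev]

/-- Unfolding `fixCard` of a pulled-back action. -/
lemma fixCard_pull {H : Type*} [Group H] (SS Q : Subgroup H) {α : Type*}
    (sm : ↥SS → α → α) (m : MulAction ↥SS α) (hm : ∀ s x, (letI := m; s • x) = sm s x)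
    (Y : Type) (e : Y ≃ α) :
    fixCard SS Q Y (pullAction Y e m) =
      Nat.card {x : α | ∀ s : ↥SS, (s : H) ∈ Q → sm s x = x} := by
  apply Nat.card_congr
  refine ⟨fun z => ⟨e z.1, fun s hs => ?_⟩, fun w => ⟨e.symm w.1, fun s hs => ?_⟩, ?_, ?_⟩
  · have h := z.2 s hs
    have h' : e.symm ((letI := m; s • e z.1)) = e.symm (e z.1) := by
      rw [e.symm_apply_apply]; exact h
    have := e.symm.injective h'
    rw [← hm]; exact this
  · show e.symm ((letI := m; s • e (e.symm w.1))) = e.symm w.1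
    rw [e.apply_symm_apply]
    rw [hm]
    rw [w.2 s hs]
  · intro z; apply Subtype.ext; simp
  · intro w; apply Subtype.ext; simp

/-! ### Counting fixed points -/

/-- Number of fixed cosets. -/
noncomputable def kfix (S P : Subgroup G) : ℕ :=
  Nat.card {x : G ⧸ S | ∀ u ∈ P, u • x = x}

/-- A sigma type with a fiberwise predicate. -/
def sigmaFiberSubtypeEquiv {ι : Type*} {B : ι → Type*} (q : ∀ i, B i → Prop) :
    {a : Σ i, B i // q a.1 a.2} ≃ Σ i, {b : B i // q i b} :=
  ⟨fun a => ⟨a.1.1, a.1.2, a.2⟩, fun b => ⟨⟨b.1, b.2.1⟩, b.2.2⟩, fun _ => rfl, fun _ => rfl⟩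

lemma card_fix_A [Finite G] (S : Subgroup G) (d : ℕ) (c : ℕ → ℕ) (P : Subgroup G) :
    Nat.card {a : AType G S d c | ∀ u ∈ P, aSmul S d c u a = a} =
      ∑ i ∈ Finset.range d, c i * (kfix S P) ^ i := by
  classical
  have e0 : {a : AType G S d c | ∀ u ∈ P, aSmul S d c u a = a} =
      {a : AType G S d c | ∀ u ∈ P, ∀ j, u • a.2.2 j = a.2.2 j} := by
    ext a
    simp only [Set.mem_setOf_eq]
    exact forall₂_congr fun u hu => aSmul_fix_iff S d c u a
  rw [e0]
  have e1 : {a : AType G S d c | ∀ u ∈ P, ∀ j, u • a.2.2 j = a.2.2 j} ≃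
      Σ i : Fin d, {b : Fin (c i) × (Fin (i : ℕ) → G ⧸ S) //
        ∀ u ∈ P, ∀ j, u • b.2 j = b.2 j} :=
    sigmaFiberSubtypeEquiv (B := fun i : Fin d => Fin (c i) × (Fin (i : ℕ) → G ⧸ S))
      (fun i b => ∀ u ∈ P, ∀ j, u • b.2 j = b.2 j)
  have e2 : ∀ i : Fin d,
      {b : Fin (c i) × (Fin (i : ℕ) → G ⧸ S) // ∀ u ∈ P, ∀ j, u • b.2 j = b.2 j} ≃
      Fin (c i) × (Fin (i : ℕ) → {x : G ⧸ S | ∀ u ∈ P, u • x = x}) := by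
    intro i
    refine Equiv.trans ?_ (Equiv.prodCongrRight fun _ => Equiv.subtypePiEquivPi)
    exact ⟨fun b => (b.1.1, ⟨b.1.2, fun j u hu => b.2 u hu j⟩),
      fun w => ⟨(w.1, w.2.1), fun u hu j => w.2.2 j u hu⟩,
      fun b => rfl, fun w => rfl⟩
  have e3 := e1.trans (Equiv.sigmaCongrRight e2)
  rw [Nat.card_congr e3]
  letI : ∀ i : Fin d, Fintype (Fin (c i) ×
      (Fin (i : ℕ) → {x : G ⧸ S | ∀ u ∈ P, u • x = x})) := fun i => Fintype.ofFinite _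
  rw [Nat.card_eq_fintype_card, Fintype.card_sigma]
  rw [← Fin.sum_univ_eq_sum_range (fun i => c i * (kfix S P) ^ i) d]
  congr 1
  funext i
  rw [← Nat.card_eq_fintype_card, Nat.card_prod, Nat.card_fun]
  simp [kfix]

lemma card_transporter [Finite G] (S P : Subgroup G) :
    Nat.card (transporter P S) = kfix S P * Nat.card S := by
  classical
  set Fx := {x : G ⧸ S | ∀ u ∈ P, u • x = x} with hFx
  set U := {g : G | ∀ u ∈ P, g⁻¹ * u * g ∈ S} with hU
  have e1 : ↥(transporter P S) ≃ ↥U := by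
    refine ⟨fun g => ⟨(g : G)⁻¹, fun u hu => by simpa using g.2 u hu⟩,
      fun g => ⟨(g : G)⁻¹, fun u hu => by simpa using g.2 u hu⟩, ?_, ?_⟩ <;>
      intro g <;> apply Subtype.ext <;> simp
  have hmem : ∀ g : ↥U, ∀ u ∈ P, u • (QuotientGroup.mk (g : G) : G ⧸ S)
      = QuotientGroup.mk (g : G) := by
    intro g u hu
    rw [MulAction.Quotient.smul_mk, smul_eq_mul, QuotientGroup.eq]
    have := g.2 u⁻¹ (inv_mem hu)
    simpa [mul_inv_rev, mul_assoc] using this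
  set φ : ↥U → ↥Fx := fun g => ⟨QuotientGroup.mk (g : G), hmem g⟩ with hφ
  have e3 : ∀ x : ↥Fx, {g : ↥U // φ g = x} ≃ ↥S := by
    intro x
    set g₀ := (x : G ⧸ S).out with hg₀
    have hg₀eq : QuotientGroup.mk g₀ = (x : G ⧸ S) := QuotientGroup.out_eq' _
    have hout : ∀ u ∈ P, g₀⁻¹ * u * g₀ ∈ S := by
      intro u hu
      have hx := x.2 u⁻¹ (inv_mem hu)
      rw [← hg₀eq, MulAction.Quotient.smul_mk, smul_eq_mul, QuotientGroup.eq] at hx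
      simpa [mul_inv_rev, mul_assoc] using hx
    refine ⟨fun g => ⟨g₀⁻¹ * (g : ↥U) , ?_⟩, fun s => ⟨⟨g₀ * (s : G), ?_⟩, ?_⟩, ?_, ?_⟩
    · have : (QuotientGroup.mk ((g : ↥U) : G) : G ⧸ S) = (QuotientGroup.mk g₀ : G ⧸ S) := by
        rw [hg₀eq]
        exact congrArg Subtype.val g.2
      have h2 : ((g : ↥U) : G)⁻¹ * g₀ ∈ S := QuotientGroup.eq.mp this
      have := inv_mem h2
      simpa [mul_inv_rev] using this
    · intro u hu
      have h1 := hout u hu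
      have : (s : G)⁻¹ * (g₀⁻¹ * u * g₀) * (s : G) ∈ S :=
        Subgroup.mul_mem _ (Subgroup.mul_mem _ (inv_mem s.2) h1) s.2
      simpa [mul_inv_rev, mul_assoc] using this
    · apply Subtype.ext
      show (QuotientGroup.mk (g₀ * (s : G)) : G ⧸ S) = (x : G ⧸ S)
      rw [← hg₀eq, QuotientGroup.eq]
      simpa [mul_inv_rev, mul_assoc] using inv_mem s.2
    · intro g
      apply Subtype.ext; apply Subtype.ext
      simp
    · intro s
      apply Subtype.ext
      simp
  have e4 : ↥U ≃ ↥Fx × ↥S :=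
    ((Equiv.sigmaFiberEquiv φ).symm.trans
      (Equiv.sigmaCongrRight e3)).trans (Equiv.sigmaEquivProd _ _)
  rw [Nat.card_congr (e1.trans e4), Nat.card_prod]
  rfl

lemma card_conj_cent (P : Subgroup G) (g : G) :
    Nat.card {x : G | ∀ u ∈ P, g * u * g⁻¹ * x * u⁻¹ = x} =
      Nat.card (Subgroup.centralizer (P : Set G)) := by
  apply Nat.card_congr
  refine ⟨fun x => ⟨g⁻¹ * (x : G), ?_⟩, fun c => ⟨g * (c : G), ?_⟩, ?_, ?_⟩
  · rw [Subgroup.mem_centralizer_iff]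
    intro m hm
    have h := x.2 m hm
    have h' : g * m * g⁻¹ * (x : G) = (x : G) * m := mul_inv_eq_iff_eq_mul.mp h
    rw [show m * (g⁻¹ * (x : G)) = g⁻¹ * (g * m * g⁻¹ * (x : G)) by group, h']
    group
  · intro u hu
    have h := Subgroup.mem_centralizer_iff.mp c.2 u hu
    rw [show g * u * g⁻¹ * (g * (c : G)) * u⁻¹ = g * ((u * (c : G)) * u⁻¹) by group, h]
    group
  · intro x; apply Subtype.ext; simp
  · intro c; apply Subtype.ext; simp

lemma card_fix_graph [Fintype G] (S : Subgroup G) (SS : Subgroup (G × G))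
    (hSS : SS = S.prod S) (d : ℕ) (c : ℕ → ℕ) (P : Subgroup G) (g : G) (hP : P ≤ S)
    (hg : ∀ u ∈ P, g * u * g⁻¹ ∈ S) (D : Subgroup (G × G)) (hDg : D = graphOf g P) :
    Nat.card {y : G × AType G S d c | ∀ s : ↥SS, (s : G × G) ∈ D → bSmul S SS d c s y = y}
      = Nat.card (Subgroup.centralizer (P : Set G)) *
          ∑ i ∈ Finset.range d, c i * (kfix S P) ^ i := by
  have hset : {y : G × AType G S d c | ∀ s : ↥SS, (s : G × G) ∈ D → bSmul S SS d c s y = y}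
      = {y : G × AType G S d c |
          (∀ u ∈ P, g * u * g⁻¹ * y.1 * u⁻¹ = y.1) ∧ (∀ u ∈ P, aSmul S d c u y.2 = y.2)} := by
    ext y
    simp only [Set.mem_setOf_eq]
    constructor
    · intro h
      have key : ∀ u ∈ P, g * u * g⁻¹ * y.1 * u⁻¹ = y.1 ∧ aSmul S d c u y.2 = y.2 := by
        intro u hu
        have hmem : ((g * u * g⁻¹, u) : G × G) ∈ SS := by
          rw [hSS]
          exact Subgroup.mem_prod.mpr ⟨hg u hu, hP hu⟩
        have hsD : ((g * u * g⁻¹, u) : G × G) ∈ D := by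
          rw [hDg]
          refine Subgroup.mem_map.mpr ⟨u, hu, ?_⟩
          simp [MulAut.conj_apply]
        have h2 := h ⟨(g * u * g⁻¹, u), hmem⟩ hsD
        unfold bSmul at h2
        exact ⟨(Prod.ext_iff.mp h2).1, (Prod.ext_iff.mp h2).2⟩
      exact ⟨fun u hu => (key u hu).1, fun u hu => (key u hu).2⟩
    · rintro ⟨h1, h2⟩ s hs
      rw [hDg] at hs
      obtain ⟨u, hu, hfu⟩ := Subgroup.mem_map.mp hs
      have hfst : ((s : G × G)).1 = g * u * g⁻¹ := by rw [← hfu]; simp [MulAut.conj_apply]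
      have hsnd : ((s : G × G)).2 = u := by rw [← hfu]; simp
      unfold bSmul
      rw [hfst, hsnd]
      exact Prod.ext (h1 u hu) (h2 u hu)
  rw [hset]
  have e : {y : G × AType G S d c |
        (∀ u ∈ P, g * u * g⁻¹ * y.1 * u⁻¹ = y.1) ∧ (∀ u ∈ P, aSmul S d c u y.2 = y.2)} ≃
      {x : G | ∀ u ∈ P, g * u * g⁻¹ * x * u⁻¹ = x} ×
        {a : AType G S d c | ∀ u ∈ P, aSmul S d c u a = a} :=
    Equiv.subtypeProdEquivProd (p := fun x : G => ∀ u ∈ P, g * u * g⁻¹ * x * u⁻¹ = x)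
      (q := fun a : AType G S d c => ∀ u ∈ P, aSmul S d c u a = a)
  rw [Nat.card_congr e, Nat.card_prod, card_conj_cent, card_fix_A]

lemma isGGraph_of_fixed (S : Subgroup G) (SS : Subgroup (G × G)) (hSS : SS = S.prod S)
    (d : ℕ) (c : ℕ → ℕ) (D : Subgroup (G × G)) (hD : D ≤ SS)
    (y : G × AType G S d c)
    (hy : ∀ s : ↥SS, (s : G × G) ∈ D → bSmul S SS d c s y = y) :
    IsGGraph S D := by
  have key : ∀ s t : G, (s, t) ∈ D → s ∈ S ∧ t ∈ S ∧ s = y.1 * t * y.1⁻¹ := by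
    intro s t hst
    have hss : ((s, t) : G × G) ∈ SS := hD hst
    have hmem := hss
    rw [hSS, Subgroup.mem_prod] at hmem
    have h2 := hy ⟨(s, t), hss⟩ hst
    have h3 : s * y.1 * t⁻¹ = y.1 := (Prod.ext_iff.mp h2).1
    have h4 : s * y.1 = y.1 * t := mul_inv_eq_iff_eq_mul.mp h3
    refine ⟨hmem.1, hmem.2, ?_⟩
    rw [show s = s * y.1 * y.1⁻¹ by group, h4]
  refine ⟨Subgroup.map (MonoidHom.snd G G) D, y.1, ?_, ?_, ?_⟩
  · intro u hu
    obtain ⟨x, hx, hxu⟩ := Subgroup.mem_map.mp hu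
    have h := (key x.1 x.2 hx).2.1
    have hxu' : x.2 = u := hxu
    rwa [hxu'] at h
  · intro u hu
    obtain ⟨x, hx, hxu⟩ := Subgroup.mem_map.mp hu
    have hk := key x.1 x.2 hx
    have : y.1 * u * y.1⁻¹ = x.1 := by
      rw [← hxu]
      exact hk.2.2.symm
    rw [this]
    exact hk.1
  · apply le_antisymm
    · rintro ⟨s, t⟩ hst
      have hk := key s t hst
      refine Subgroup.mem_map.mpr ⟨t, Subgroup.mem_map.mpr ⟨(s, t), hst, rfl⟩, ?_⟩
      refine Prod.ext ?_ rfl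
      simp only [MonoidHom.prod_apply, MulEquiv.toMonoidHom_eq_coe,
        MonoidHom.coe_coe, MulAut.conj_apply]
      exact hk.2.2.symm
    · rintro st hst
      obtain ⟨u, hu, hfu⟩ := Subgroup.mem_map.mp hst
      obtain ⟨x, hx, hxu⟩ := Subgroup.mem_map.mp hu
      have hk := key x.1 x.2 hx
      have hx2 : x.2 = u := hxu
      have : st = x := by
        rw [← hfu]
        refine Prod.ext ?_ ?_
        · simp only [MonoidHom.prod_apply, MulEquiv.toMonoidHom_eq_coe,
            MonoidHom.coe_coe, MulAut.conj_apply]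
          rw [← hx2]
          exact hk.2.2.symm
        · simpa using hx2.symm
      rw [this]
      exact hx

lemma kfix_facts (p : ℕ) [Fact p.Prime] [Fintype G] (S : Sylow p G) (P : Subgroup G)
    (hP : P ≤ (S : Subgroup G)) :
    kfix (S : Subgroup G) P ≤ Nat.card (G ⧸ (S : Subgroup G)) ∧
      ¬ p ∣ kfix (S : Subgroup G) P := by
  have heq : Nat.card (MulAction.fixedPoints ↥P (G ⧸ (S : Subgroup G)))
      = kfix (S : Subgroup G) P := by
    apply Nat.card_congr
    apply Equiv.setCongr
    ext x
    simp only [MulAction.mem_fixedPoints, Set.mem_setOf_eq]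
    constructor
    · intro h u hu; exact h ⟨u, hu⟩
    · intro h u; exact h u u.2
  have hmod : Nat.card (G ⧸ (S : Subgroup G)) ≡ kfix (S : Subgroup G) P [MOD p] := by
    rw [← heq]
    exact (S.isPGroup'.to_le hP).card_modEq_card_fixedPoints _
  have hndvd : ¬ p ∣ Nat.card (G ⧸ (S : Subgroup G)) := by
    have := S.not_dvd_index
    rwa [Subgroup.index] at this
  constructor
  · exact Nat.card_le_card_of_injective Subtype.val Subtype.val_injective
  · intro h
    exact hndvd (Nat.modEq_zero_iff_dvd.mp (hmod.trans (Nat.modEq_zero_iff_dvd.mpr h)))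

lemma exists_coeffs (p : ℕ) [Fact p.Prime] (N : ℕ) :
    ∃ (n d : ℕ) (cp cm : ℕ → ℕ), 0 < n ∧ ¬ p ∣ n ∧
      ∀ k : ℕ, k ≤ N → ¬ p ∣ k →
        (∑ i ∈ Finset.range d, cp i * k ^ i) * k
          = (∑ i ∈ Finset.range d, cm i * k ^ i) * k + n := by
  classical
  set V : Finset ℕ := (Finset.range (N + 1)).filter (fun v => ¬ p ∣ v) with hV
  set f : Polynomial ℤ := ∏ v ∈ V, (Polynomial.C (v : ℤ) - Polynomial.X) with hf
  set n : ℕ := ∏ v ∈ V, v with hn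
  have hn0 : 0 < n := by
    apply Finset.prod_pos
    intro v hv
    have := (Finset.mem_filter.mp hv).2
    rcases Nat.eq_zero_or_pos v with h | h
    · exact absurd (h ▸ dvd_zero p) this
    · exact h
  have hnp : ¬ p ∣ n := by
    have hcop : Nat.Coprime p n := by
      apply Nat.Coprime.prod_right
      intro v hv
      exact (Nat.Prime.coprime_iff_not_dvd Fact.out).mpr (Finset.mem_filter.mp hv).2
    exact (Nat.Prime.coprime_iff_not_dvd Fact.out).mp hcop
  have hf0 : f.eval 0 = (n : ℤ) := by
    rw [hf, Polynomial.eval_prod, hn]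
    push_cast
    apply Finset.prod_congr rfl
    intro v _
    simp
  set q : Polynomial ℤ := -f.divX with hq
  have hkey : ∀ k ∈ V, (k : ℤ) * q.eval (k : ℤ) = (n : ℤ) := by
    intro k hk
    have h1 : f.eval (k : ℤ) = 0 := by
      rw [hf, Polynomial.eval_prod]
      apply Finset.prod_eq_zero hk
      simp
    have h2 := congrArg (Polynomial.eval (k : ℤ)) (Polynomial.X_mul_divX_add f)
    rw [Polynomial.eval_add, Polynomial.eval_mul, Polynomial.eval_X, Polynomial.eval_C,
      Polynomial.coeff_zero_eq_eval_zero, hf0, h1] at h2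
    rw [hq]
    simp only [Polynomial.eval_neg]
    linarith
  refine ⟨n, q.natDegree + 1, fun i => (q.coeff i).toNat, fun i => (-(q.coeff i)).toNat,
    hn0, hnp, ?_⟩
  intro k hk hpk
  have hkV : k ∈ V := Finset.mem_filter.mpr ⟨Finset.mem_range.mpr (by omega), hpk⟩
  have hqe : q.eval (k : ℤ) =
      (∑ i ∈ Finset.range (q.natDegree + 1), ((q.coeff i).toNat : ℤ) * (k : ℤ) ^ i)
        - (∑ i ∈ Finset.range (q.natDegree + 1), (((-(q.coeff i)).toNat : ℤ)) * (k : ℤ) ^ i) := by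
    rw [Polynomial.eval_eq_sum_range, ← Finset.sum_sub_distrib]
    apply Finset.sum_congr rfl
    intro i _
    have hco : (((q.coeff i).toNat : ℤ)) - (((-(q.coeff i)).toNat : ℤ)) = q.coeff i := by omega
    rw [← sub_mul, hco]
  have hkey' := hkey k hkV
  rw [hqe] at hkey'
  have hZ : (∑ i ∈ Finset.range (q.natDegree + 1), ((q.coeff i).toNat : ℤ) * (k : ℤ) ^ i) * k
      = (∑ i ∈ Finset.range (q.natDegree + 1), (((-(q.coeff i)).toNat : ℤ)) * (k : ℤ) ^ i) * k
        + (n : ℤ) := by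
    linear_combination hkey'
  exact_mod_cast hZ

lemma fixCard_pull_bAct (S : Subgroup G) (SS D : Subgroup (G × G)) (d : ℕ) (c : ℕ → ℕ)
    (Y : Type) (e : Y ≃ (G × AType G S d c)) :
    fixCard SS D Y (pullAction Y e (bAct S SS d c)) =
      Nat.card {y : G × AType G S d c |
        ∀ s : ↥SS, (s : G × G) ∈ D → bSmul S SS d c s y = y} :=
  fixCard_pull SS D (bSmul S SS d c) (bAct S SS d c) (fun _ _ => rfl) Y e

end Stmt8Aux

attribute [irreducible] Stmt8Aux.pullAction Stmt8Aux.bAct Stmt8Aux.bSmul Stmt8Aux.aSmul Stmt8Aux.AType Stmt8Aux.kfix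

set_option maxHeartbeats 2000000 in
theorem stmt8 (p : ℕ) [Fact p.Prime] (G : Type*) [Group G] [Fintype G]
    (S : Sylow p G) (SS : Subgroup (G × G))
    (hSS : SS = (S : Subgroup G).prod (S : Subgroup G)) :
    ∃ (Y Z : Type) (_ : Fintype Y) (_ : Fintype Z)
      (mY : MulAction ↥SS Y) (mZ : MulAction ↥SS Z)
      (n : ℕ), 0 < n ∧ ¬ p ∣ n ∧
      ∀ D : Subgroup (G × G), D ≤ SS →
        (∀ (P : Subgroup G) (g : G), P ≤ ↑S →
          (∀ u ∈ P, g * u * g⁻¹ ∈ (S : Subgroup G)) →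
          D = graphOf g P →
          fixCard SS D Y mY * Nat.card ↥(transporter P ↑S) =
            fixCard SS D Z mZ * Nat.card ↥(transporter P ↑S) +
              n * Nat.card ↥(S : Subgroup G) *
                Nat.card ↥(Subgroup.centralizer (P : Set G))) ∧
        (¬ IsGGraph ↑S D → fixCard SS D Y mY = fixCard SS D Z mZ) := by
  classical
  obtain ⟨n, d, cp, cm, hn0, hnp, hnum⟩ :=
    Stmt8Aux.exists_coeffs p (Nat.card (G ⧸ (S : Subgroup G)))
  obtain ⟨N₁, ⟨e₁⟩⟩ := Finite.exists_equiv_fin (G × Stmt8Aux.AType G (↑S) d cp)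
  obtain ⟨N₂, ⟨e₂⟩⟩ := Finite.exists_equiv_fin (G × Stmt8Aux.AType G (↑S) d cm)
  refine ⟨Fin N₁, Fin N₂, inferInstance, inferInstance,
    Stmt8Aux.pullAction _ e₁.symm (Stmt8Aux.bAct (↑S) SS d cp),
    Stmt8Aux.pullAction _ e₂.symm (Stmt8Aux.bAct (↑S) SS d cm), n, hn0, hnp, ?_⟩
  intro D hD
  have hfixY := Stmt8Aux.fixCard_pull_bAct (↑S) SS D d cp (Fin N₁) e₁.symm
  have hfixZ := Stmt8Aux.fixCard_pull_bAct (↑S) SS D d cm (Fin N₂) e₂.symm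
  constructor
  · intro P g hP hg hDg
    rw [hfixY, hfixZ,
      Stmt8Aux.card_fix_graph (↑S) SS hSS d cp P g hP hg D hDg,
      Stmt8Aux.card_fix_graph (↑S) SS hSS d cm P g hP hg D hDg,
      Stmt8Aux.card_transporter (↑S) P]
    obtain ⟨hkle, hkdvd⟩ := Stmt8Aux.kfix_facts p S P hP
    have h := hnum (Stmt8Aux.kfix (↑S) P) hkle hkdvd
    set NC := Nat.card ↥(Subgroup.centralizer (P : Set G))
    set NS := Nat.card ↥(S : Subgroup G)
    set kf := Stmt8Aux.kfix (↑S : Subgroup G) P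
    set a := ∑ i ∈ Finset.range d, cp i * kf ^ i
    set b := ∑ i ∈ Finset.range d, cm i * kf ^ i
    calc NC * a * (kf * NS) = a * kf * (NC * NS) := by ring
      _ = (b * kf + n) * (NC * NS) := by rw [h]
      _ = NC * b * (kf * NS) + n * NS * NC := by ring
  · intro hnot
    rw [hfixY, hfixZ]
    have h1 : IsEmpty {y : G × Stmt8Aux.AType G (↑S) d cp |
        ∀ s : ↥SS, (s : G × G) ∈ D → Stmt8Aux.bSmul (↑S) SS d cp s y = y} :=
      ⟨fun z => hnot (Stmt8Aux.isGGraph_of_fixed (↑S) SS hSS d cp D hD z.1 (fun s hs => z.2 s hs))⟩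
    have h2 : IsEmpty {y : G × Stmt8Aux.AType G (↑S) d cm |
        ∀ s : ↥SS, (s : G × G) ∈ D → Stmt8Aux.bSmul (↑S) SS d cm s y = y} :=
      ⟨fun z => hnot (Stmt8Aux.isGGraph_of_fixed (↑S) SS hSS d cm D hD z.1 (fun s hs => z.2 s hs))⟩
    rw [Nat.card_of_isEmpty, Nat.card_of_isEmpty]
end

section
/- Let S be a finite p-group and let f be a function from the set of subgroups of S to the integers such that f(Q) ∈ {0,1} for every subgroup Q ≤ S, and such that for every subgroup Q ≤ S the integer Σ_{s ∈ N_S(Q)} f(⟨s⟩Q) is divisible by |N_S(Q)|, where ⟨s⟩Q denotes the subgroup of S generated by s and Q. Then f is constant, i.e. f(Q) = f(S) for all Q ≤ S. (This is the combinatorial core of the paper's Corollary that 0 and [S/S] are the only idempotents of A(F)_(p), which yields the uniqueness of the characteristic idempotent ω_F: an idempotent of A(F)_(p) has all its marks in {0,1} and its mark vector satisfies exactly these congruences.) -/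
theorem stmt9 (p : ℕ) [Fact p.Prime] (S : Type*) [Group S] [Fintype S]
    (hS : IsPGroup p S) (f : Subgroup S → ℤ)
    (hf01 : ∀ Q : Subgroup S, f Q = 0 ∨ f Q = 1)
    (hcong : ∀ Q : Subgroup S,
      (Nat.card ↥(Subgroup.normalizer (Q : Set S)) : ℤ) ∣
        ∑ᶠ s ∈ ((Subgroup.normalizer (Q : Set S) : Subgroup S) : Set S),
          f (Subgroup.closure ({s} ∪ (Q : Set S)))) :
    ∀ Q : Subgroup S, f Q = f ⊤ := by
  classical
  have hnc : NormalizerCondition S := by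
    haveI : Group.IsNilpotent S := hS.isNilpotent
    exact normalizerCondition_of_isNilpotent
  have hcard_le : ∀ Q : Subgroup S, Nat.card Q ≤ Fintype.card S := by
    intro Q
    have := Nat.card_le_card_of_injective _ Q.subtype_injective
    simpa [Nat.card_eq_fintype_card] using this
  have hcard_lt : ∀ Q R : Subgroup S, Q < R → Nat.card Q < Nat.card R := by
    intro Q R h
    have h2 : (Q : Set S).ncard < (R : Set S).ncard :=
      Set.ncard_lt_ncard (by exact_mod_cast h) (Set.toFinite _)
    rw [← Nat.card_coe_set_eq, ← Nat.card_coe_set_eq] at h2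
    exact h2
  have key : ∀ n : ℕ, ∀ Q : Subgroup S, Fintype.card S - Nat.card Q ≤ n → f Q = f ⊤ := by
    intro n
    induction n with
    | zero =>
      intro Q hQ
      have : Q = ⊤ := by
        apply Subgroup.eq_top_of_card_eq
        have := hcard_le Q
        simp only [Nat.card_eq_fintype_card] at *
        omega
      rw [this]
    | succ n ih =>
      intro Q hQ
      by_cases htop : Q = ⊤
      · rw [htop]
      · have hlt : Q < (Subgroup.normalizer (Q : Set S)) := hnc Q (lt_top_iff_ne_top.mpr htop)
        have hsum := hcong Q
        rw [← Set.coe_toFinset ((Subgroup.normalizer (Q : Set S) : Subgroup S) : Set S),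
          finsum_mem_coe_finset] at hsum
        set F := ((Subgroup.normalizer (Q : Set S) : Subgroup S) : Set S).toFinset with hF
        rw [← Finset.sum_filter_add_sum_filter_not F (fun s => s ∈ Q)] at hsum
        have h1 : ∑ s ∈ F.filter (fun s => s ∈ Q),
            f (Subgroup.closure ({s} ∪ (Q : Set S))) = (Nat.card Q : ℤ) * f Q := by
          rw [Finset.sum_congr rfl (fun s hs => ?_), Finset.sum_const, nsmul_eq_mul]
          · congr 1
            have : F.filter (fun s => s ∈ Q) = (Q : Set S).toFinset := by
              ext x
              simp only [Finset.mem_filter, hF, Set.mem_toFinset, SetLike.mem_coe]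
              exact ⟨fun h => h.2, fun h => ⟨hlt.le h, h⟩⟩
            rw [this, ← Set.ncard_eq_toFinset_card', ← Nat.card_coe_set_eq]
            rfl
          · have hsQ : s ∈ Q := (Finset.mem_filter.mp hs).2
            congr 1
            rw [Set.union_eq_self_of_subset_left (by simpa using hsQ), Subgroup.closure_eq]
        have h2 : ∑ s ∈ F.filter (fun s => ¬ s ∈ Q),
            f (Subgroup.closure ({s} ∪ (Q : Set S)))
            = ((Nat.card (Subgroup.normalizer (Q : Set S)) - Nat.card Q : ℕ) : ℤ) * f ⊤ := by
          rw [Finset.sum_congr rfl (fun s hs => ?_), Finset.sum_const, nsmul_eq_mul]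
          · congr 2
            have hfil : (F.filter (fun s => s ∈ Q)).card = Nat.card Q := by
              have : F.filter (fun s => s ∈ Q) = (Q : Set S).toFinset := by
                ext x
                simp only [Finset.mem_filter, hF, Set.mem_toFinset, SetLike.mem_coe]
                exact ⟨fun h => h.2, fun h => ⟨hlt.le h, h⟩⟩
              rw [this, ← Set.ncard_eq_toFinset_card', ← Nat.card_coe_set_eq]
              rfl
            have hFcard : F.card = Nat.card (Subgroup.normalizer (Q : Set S)) := by
              rw [hF, ← Set.ncard_eq_toFinset_card', ← Nat.card_coe_set_eq]
              rfl
            have := Finset.card_filter_add_card_filter_not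
              (s := F) (p := fun s => s ∈ Q)
            omega
          · obtain ⟨hsF, hsQ⟩ := Finset.mem_filter.mp hs
            have hsN : s ∈ (Subgroup.normalizer (Q : Set S)) := by simpa [hF] using hsF
            set R := Subgroup.closure ({s} ∪ (Q : Set S)) with hR
            have hQR : Q < R := by
              refine lt_of_le_of_ne ?_ ?_
              · intro x hx
                exact Subgroup.subset_closure (Set.mem_union_right _ hx)
              · intro h
                exact hsQ (h ▸ Subgroup.subset_closure (Set.mem_union_left _ rfl))
            apply ih
            have := hcard_lt Q R hQR
            have := hcard_le R
            omega
        rw [h1, h2] at hsum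
        -- divisibility arithmetic
        have hqlt : Nat.card Q < Nat.card (Subgroup.normalizer (Q : Set S)) := hcard_lt _ _ hlt
        have hqpos : 0 < Nat.card Q := Nat.card_pos
        have hdiv : (Nat.card (Subgroup.normalizer (Q : Set S)) : ℤ) ∣ (Nat.card Q : ℤ) * (f Q - f ⊤) := by
          have : (Nat.card Q : ℤ) * (f Q - f ⊤)
              = ((Nat.card Q : ℤ) * f Q + ((Nat.card (Subgroup.normalizer (Q : Set S)) - Nat.card Q : ℕ) : ℤ) * f ⊤)
                - (Nat.card (Subgroup.normalizer (Q : Set S)) : ℤ) * f ⊤ := by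
            push_cast [Nat.cast_sub hqlt.le]
            ring
          rw [this]
          exact dvd_sub hsum ⟨f ⊤, rfl⟩
        rcases hf01 Q with h | h <;> rcases hf01 ⊤ with h' | h' <;> rw [h, h']
        · have : (Nat.card (Subgroup.normalizer (Q : Set S)) : ℤ) ∣ -(Nat.card Q : ℤ) := by
            simpa [h, h'] using hdiv
          have := Int.le_of_dvd (by exact_mod_cast hqpos) ((dvd_neg).mp this)
          exact absurd this (by exact_mod_cast Nat.not_le.mpr hqlt)
        · have : (Nat.card (Subgroup.normalizer (Q : Set S)) : ℤ) ∣ (Nat.card Q : ℤ) := by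
            simpa [h, h'] using hdiv
          have := Int.le_of_dvd (by exact_mod_cast hqpos) this
          exact absurd this (by exact_mod_cast Nat.not_le.mpr hqlt)
  intro Q
  exact key (Fintype.card S) Q (Nat.sub_le _ _)
end

section
/- Let G₁ and G₂ be finite groups with Sylow p-subgroups S₁ and S₂ respectively, and let X be a finite (S₂ × S₁)-set. Then the following are equivalent: (1) for every subgroup P ≤ S₁ and every g ∈ G₁ with gPg⁻¹ ≤ S₁ there exists a bijection θ : X → X with θ((a,u)·x) = (a, gug⁻¹)·θ(x) for all a ∈ S₂, u ∈ P, x ∈ X, and for every subgroup P ≤ S₂ and every h ∈ G₂ with hPh⁻¹ ≤ S₂ there exists a bijection η : X → X with η((u,b)·x) = (huh⁻¹, b)·η(x) for all u ∈ P, b ∈ S₁, x ∈ X; (2) for every subgroup D ≤ S₂ × S₁ and every (h,g) ∈ G₂ × G₁ such that (h,g)D(h,g)⁻¹ ≤ S₂ × S₁, the fixed-point sets X^D and X^{(h,g)D(h,g)⁻¹} have the same cardinality. (This realizes the paper's Lemma that an (S₁,S₂)-biset is right F₁-stable and left F₂-stable if and only if its marks are constant on (F₂ × F₁)-conjugacy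 classes of subgroups of S₂ × S₁, for F_i = F_{S_i}(G_i), using that F_{S₂}(G₂) × F_{S₁}(G₁) = F_{S₂×S₁}(G₂×G₁).) -/
universe u v w

variable {G : Type u} [Group G]

/-- The subgroup of elements fixing `x` under a permutation representation. -/
def pstab {X : Type v} (ρ : G →* Equiv.Perm X) (x : X) : Subgroup G where
  carrier := {g | ρ g x = x}
  one_mem' := by simp
  mul_mem' := by
    intro a b ha hb
    simp only [Set.mem_setOf_eq, map_mul, Equiv.Perm.mul_apply] at *
    rw [hb, ha]
  inv_mem' := by
    intro a ha
    simp only [Set.mem_setOf_eq] at *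
    conv_lhs => rw [← ha]
    rw [← Equiv.Perm.mul_apply, ← map_mul, inv_mul_cancel, map_one, Equiv.Perm.one_apply]

theorem mem_pstab {X : Type v} {ρ : G →* Equiv.Perm X} {x : X} {g : G} :
    g ∈ pstab ρ x ↔ ρ g x = x := Iff.rfl

/-- Restrict a permutation representation to an invariant subtype. -/
def prestrict {X : Type v} (ρ : G →* Equiv.Perm X) (p : X → Prop)
    (hp : ∀ (g : G) (x : X), p x → p (ρ g x)) : G →* Equiv.Perm {x // p x} where
  toFun g := (ρ g).subtypePerm (fun x => ⟨fun h => by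
      have h2 := hp g⁻¹ _ h
      rwa [← Equiv.Perm.mul_apply, ← map_mul, inv_mul_cancel, map_one,
        Equiv.Perm.one_apply] at h2, fun h => hp g x h⟩)
  map_one' := by
    ext z
    simp [Equiv.Perm.subtypePerm_apply]
  map_mul' g g' := by
    ext z
    show ρ (g * g') z.1 = ρ g (ρ g' z.1)
    rw [map_mul, Equiv.Perm.mul_apply]

theorem prestrict_apply_val {X : Type v} (ρ : G →* Equiv.Perm X) (p : X → Prop)
    (hp : ∀ (g : G) (x : X), p x → p (ρ g x)) (g : G) (z : {x // p x}) :
    ((prestrict ρ p hp g z : {x // p x}) : X) = ρ g (z : X) := rfl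

def subtypeSubtypeComm {α : Sort*} (p q : α → Prop) :
    {z : {a // p a} // q z.val} ≃ {z : {a // q a} // p z.val} where
  toFun z := ⟨⟨z.1.1, z.2⟩, z.1.2⟩
  invFun z := ⟨⟨z.1.1, z.2⟩, z.1.2⟩
  left_inv z := rfl
  right_inv z := rfl

theorem card_subtype_split (X : Type v) [Finite X] (q p : X → Prop) :
    Nat.card {x : X // q x} =
      Nat.card {z : {x : X // p x} // q z.val} +
        Nat.card {z : {x : X // ¬ p x} // q z.val} := by
  classical
  rw [← Nat.card_sum]
  apply Nat.card_congr
  exact (Equiv.sumCompl (fun z : {x : X // q x} => p z.val)).symm.trans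
    ((subtypeSubtypeComm q p).sumCongr (subtypeSubtypeComm q (fun x => ¬ p x)))

theorem marks_iso (G : Type u) [Group G] :
    ∀ (n : ℕ) (X : Type v) (Y : Type w) [Finite X] [Finite Y]
      (ρ : G →* Equiv.Perm X) (σ : G →* Equiv.Perm Y),
      Nat.card X = n →
      (∀ H : Subgroup G,
        Nat.card {x : X // ∀ g ∈ H, ρ g x = x} =
        Nat.card {y : Y // ∀ g ∈ H, σ g y = y}) →
      ∃ e : X ≃ Y, ∀ (g : G) (x : X), e (ρ g x) = σ g (e x) := by
  intro n
  induction n using Nat.strong_induction_on with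
  | _ n ih =>
  intro X Y _ _ ρ σ hn hmk
  classical
  rcases isEmpty_or_nonempty X with hX | hX
  · have hY : IsEmpty Y := by
      by_contra hxY
      rw [not_isEmpty_iff] at hxY
      obtain ⟨y⟩ := hxY
      have h0 := hmk ⊥
      have hx0 : Nat.card {x : X // ∀ g ∈ (⊥ : Subgroup G), ρ g x = x} = 0 := by
        simp [Nat.card_eq_zero]
      haveI : Nonempty {y : Y // ∀ g ∈ (⊥ : Subgroup G), σ g y = y} :=
        ⟨⟨y, by intro g hg; rw [Subgroup.mem_bot] at hg; simp [hg]⟩⟩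
      have := Nat.card_pos (α := {y : Y // ∀ g ∈ (⊥ : Subgroup G), σ g y = y})
      omega
    exact ⟨Equiv.equivOfIsEmpty X Y, fun g x => isEmptyElim x⟩
  · obtain ⟨x₀, -, hmax⟩ := Set.Finite.exists_maximalFor (fun x : X => pstab ρ x)
      Set.univ Set.finite_univ Set.univ_nonempty
    set H := pstab ρ x₀ with hH
    have hfix : ∀ x : X, H ≤ pstab ρ x → pstab ρ x = H :=
      fun x hx => le_antisymm (hmax (Set.mem_univ x) hx) hx
    -- find y₀
    haveI : Nonempty {x : X // ∀ g ∈ H, ρ g x = x} := ⟨⟨x₀, fun g hg => hg⟩⟩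
    have hXH : 0 < Nat.card {x : X // ∀ g ∈ H, ρ g x = x} := Nat.card_pos
    rw [hmk H] at hXH
    obtain ⟨⟨⟨y₀, hy₀⟩⟩, -⟩ := Nat.card_pos_iff.mp hXH
    have hstaby : pstab σ y₀ = H := by
      apply le_antisymm
      · intro k hk
        set K := pstab σ y₀ with hK
        haveI : Nonempty {y : Y // ∀ g ∈ K, σ g y = y} := ⟨⟨y₀, fun g hg => hg⟩⟩
        have hYK : 0 < Nat.card {y : Y // ∀ g ∈ K, σ g y = y} := Nat.card_pos
        rw [← hmk K] at hYK
        obtain ⟨⟨⟨x₁, hx₁⟩⟩, -⟩ := Nat.card_pos_iff.mp hYK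
        have h1 : H ≤ pstab ρ x₁ := fun g hg => hx₁ g (hy₀ g hg)
        have h2 : pstab ρ x₁ = H := hfix x₁ h1
        have h3 : K ≤ pstab ρ x₁ := fun g hg => hx₁ g hg
        exact h2 ▸ h3 hk
      · intro g hg
        exact hy₀ g hg
    -- orbits
    set pX : X → Prop := fun x => ∃ g : G, ρ g x₀ = x with hpXdef
    set pY : Y → Prop := fun y => ∃ g : G, σ g y₀ = y with hpYdef
    have hwd : ∀ g g' : G, ρ g x₀ = ρ g' x₀ → σ g y₀ = σ g' y₀ := by
      intro g g' hgg
      have h1 : g⁻¹ * g' ∈ H := by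
        rw [hH, mem_pstab, map_mul, Equiv.Perm.mul_apply, ← hgg, ← Equiv.Perm.mul_apply,
          ← map_mul, inv_mul_cancel, map_one, Equiv.Perm.one_apply]
      have h2 : σ (g⁻¹ * g') y₀ = y₀ := (hstaby ▸ h1 : g⁻¹ * g' ∈ pstab σ y₀)
      have h3 : σ g (σ (g⁻¹ * g') y₀) = σ g y₀ := by rw [h2]
      rw [← Equiv.Perm.mul_apply, ← map_mul, ← mul_assoc, mul_inv_cancel, one_mul] at h3
      exact h3.symm
    have hwd' : ∀ g g' : G, σ g y₀ = σ g' y₀ → ρ g x₀ = ρ g' x₀ := by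
      intro g g' hgg
      have h1 : g⁻¹ * g' ∈ H := by
        rw [← hstaby, mem_pstab, map_mul, Equiv.Perm.mul_apply, ← hgg, ← Equiv.Perm.mul_apply,
          ← map_mul, inv_mul_cancel, map_one, Equiv.Perm.one_apply]
      have h2 : ρ (g⁻¹ * g') x₀ = x₀ := h1
      have h3 : ρ g (ρ (g⁻¹ * g') x₀) = ρ g x₀ := by rw [h2]
      rw [← Equiv.Perm.mul_apply, ← map_mul, ← mul_assoc, mul_inv_cancel, one_mul] at h3
      exact h3.symm
    let f : {x : X // pX x} → {y : Y // pY y} :=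
      fun z => ⟨σ (Classical.choose z.2) y₀, ⟨_, rfl⟩⟩
    have hf : ∀ (z : {x : X // pX x}) (g : G), ρ g x₀ = z.val → (f z).val = σ g y₀ :=
      fun z g hgz => hwd _ g (by rw [Classical.choose_spec z.2, hgz])
    let f' : {y : Y // pY y} → {x : X // pX x} :=
      fun z => ⟨ρ (Classical.choose z.2) x₀, ⟨_, rfl⟩⟩
    have hf' : ∀ (z : {y : Y // pY y}) (g : G), σ g y₀ = z.val → (f' z).val = ρ g x₀ :=
      fun z g hgz => hwd' _ g (by rw [Classical.choose_spec z.2, hgz])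
    have hli : Function.LeftInverse f' f := by
      intro z
      obtain ⟨g, hgz⟩ := z.2
      apply Subtype.ext
      rw [hf' (f z) g (hf z g hgz).symm, hgz]
    have hri : Function.RightInverse f' f := by
      intro z
      obtain ⟨g, hgz⟩ := z.2
      apply Subtype.ext
      rw [hf (f' z) g (hf' z g hgz).symm, hgz]
    set fX : {x : X // pX x} ≃ {y : Y // pY y} := ⟨f, f', hli, hri⟩ with hfX
    have hpXinv : ∀ (g : G) (x : X), pX x → pX (ρ g x) := by
      rintro g x ⟨c, hc⟩
      exact ⟨g * c, by rw [map_mul, Equiv.Perm.mul_apply, hc]⟩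
    have hpYinv : ∀ (g : G) (y : Y), pY y → pY (σ g y) := by
      rintro g y ⟨c, hc⟩
      exact ⟨g * c, by rw [map_mul, Equiv.Perm.mul_apply, hc]⟩
    have hpXcinv : ∀ (g : G) (x : X), ¬ pX x → ¬ pX (ρ g x) := by
      intro g x hx hc
      have := hpXinv g⁻¹ _ hc
      rw [← Equiv.Perm.mul_apply, ← map_mul, inv_mul_cancel, map_one,
        Equiv.Perm.one_apply] at this
      exact hx this
    have hpYcinv : ∀ (g : G) (y : Y), ¬ pY y → ¬ pY (σ g y) := by
      intro g y hy hc
      have := hpYinv g⁻¹ _ hc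
      rw [← Equiv.Perm.mul_apply, ← map_mul, inv_mul_cancel, map_one,
        Equiv.Perm.one_apply] at this
      exact hy this
    have hfeq : ∀ (g : G) (z : {x : X // pX x}) (hz : pX (ρ g z.val)),
        (fX ⟨ρ g z.val, hz⟩).val = σ g (fX z).val := by
      intro g z hz
      obtain ⟨c, hc⟩ := z.2
      have h1 : ρ (g * c) x₀ = ρ g z.val := by rw [map_mul, Equiv.Perm.mul_apply, hc]
      have h2 := hf ⟨ρ g z.val, hz⟩ (g * c) h1
      have h3 := hf z c hc
      show (f ⟨ρ g z.val, hz⟩).val = σ g (f z).val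
      rw [h2, h3, map_mul, Equiv.Perm.mul_apply]
    -- fixed points on the orbit correspond
    have horbfix : ∀ H' : Subgroup G,
        Nat.card {z : {x : X // pX x} // ∀ g ∈ H', ρ g z.val = z.val} =
        Nat.card {w : {y : Y // pY y} // ∀ g ∈ H', σ g w.val = w.val} := by
      intro H'
      apply Nat.card_congr
      apply Equiv.subtypeEquiv fX
      intro z
      constructor
      · intro hz g hg
        have h1 : (⟨ρ g z.val, hpXinv g _ z.2⟩ : {x : X // pX x}) = z :=
          Subtype.ext (hz g hg)
        rw [← hfeq g z (hpXinv g _ z.2), h1]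
      · intro hz g hg
        have h1 : (fX ⟨ρ g z.val, hpXinv g _ z.2⟩).val = (fX z).val := by
          rw [hfeq g z]; exact hz g hg
        have h2 := fX.injective (Subtype.ext h1)
        exact congrArg Subtype.val h2
    -- restricted representations on complements
    set ρ' := prestrict ρ (fun x => ¬ pX x) hpXcinv with hρ'
    set σ' := prestrict σ (fun y => ¬ pY y) hpYcinv with hσ'
    have hmk' : ∀ H' : Subgroup G,
        Nat.card {z : {x : X // ¬ pX x} // ∀ g ∈ H', ρ' g z = z} =
        Nat.card {w : {y : Y // ¬ pY y} // ∀ g ∈ H', σ' g w = w} := by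
      intro H'
      have e1 : {z : {x : X // ¬ pX x} // ∀ g ∈ H', ρ' g z = z} ≃
          {z : {x : X // ¬ pX x} // ∀ g ∈ H', ρ g z.val = z.val} :=
        Equiv.subtypeEquivRight (fun z => by
          constructor
          · intro hz g hg; rw [← prestrict_apply_val ρ _ hpXcinv g z, hz g hg]
          · intro hz g hg; exact Subtype.ext (hz g hg))
      have e2 : {w : {y : Y // ¬ pY y} // ∀ g ∈ H', σ' g w = w} ≃
          {w : {y : Y // ¬ pY y} // ∀ g ∈ H', σ g w.val = w.val} :=
        Equiv.subtypeEquivRight (fun w => by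
          constructor
          · intro hw g hg; rw [← prestrict_apply_val σ _ hpYcinv g w, hw g hg]
          · intro hw g hg; exact Subtype.ext (hw g hg))
      rw [Nat.card_congr e1, Nat.card_congr e2]
      have htot := hmk H'
      rw [card_subtype_split X (fun x => ∀ g ∈ H', ρ g x = x) pX,
        card_subtype_split Y (fun y => ∀ g ∈ H', σ g y = y) pY, horbfix H'] at htot
      omega
    -- cardinality decrease
    have hcard : Nat.card X = Nat.card {x : X // pX x} + Nat.card {x : X // ¬ pX x} := by
      rw [← Nat.card_sum]
      exact Nat.card_congr (Equiv.sumCompl pX).symm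
    haveI : Nonempty {x : X // pX x} := ⟨⟨x₀, ⟨1, by simp⟩⟩⟩
    have hpos : 0 < Nat.card {x : X // pX x} := Nat.card_pos
    have hlt : Nat.card {x : X // ¬ pX x} < n := by omega
    obtain ⟨e₂, he₂⟩ := ih _ hlt {x : X // ¬ pX x} {y : Y // ¬ pY y} ρ' σ' rfl hmk'
    -- glue
    refine ⟨(Equiv.sumCompl pX).symm.trans ((fX.sumCongr e₂).trans (Equiv.sumCompl pY)), ?_⟩
    intro g x
    by_cases hx : pX x
    · simp only [Equiv.trans_apply]
      rw [Equiv.sumCompl_symm_apply_of_pos (p := pX) hx,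
        Equiv.sumCompl_symm_apply_of_pos (p := pX) (hpXinv g x hx)]
      simp only [Equiv.sumCongr_apply, Sum.map_inl, Equiv.sumCompl_apply_inl]
      exact hfeq g ⟨x, hx⟩ (hpXinv g x hx)
    · simp only [Equiv.trans_apply]
      rw [Equiv.sumCompl_symm_apply_of_neg (p := pX) hx,
        Equiv.sumCompl_symm_apply_of_neg (p := pX) (hpXcinv g x hx)]
      simp only [Equiv.sumCongr_apply, Sum.map_inr, Equiv.sumCompl_apply_inr]
      have h1 : (⟨ρ g x, hpXcinv g x hx⟩ : {x : X // ¬ pX x}) = ρ' g ⟨x, hx⟩ :=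
        Subtype.ext rfl
      rw [h1, he₂ g ⟨x, hx⟩]
      exact prestrict_apply_val σ _ hpYcinv g (e₂ ⟨x, hx⟩)


theorem stmt10 (p : ℕ) [Fact p.Prime]
    (G₁ G₂ : Type*) [Group G₁] [Group G₂] [Fintype G₁] [Fintype G₂]
    (S₁ : Sylow p G₁) (S₂ : Sylow p G₂)
    (X : Type) [Fintype X]
    [MulAction (↥(S₂ : Subgroup G₂) × ↥(S₁ : Subgroup G₁)) X] :
    ((∀ (P : Subgroup G₁) (hP : P ≤ ↑S₁) (g : G₁)
        (hg : ∀ u ∈ P, g * u * g⁻¹ ∈ (S₁ : Subgroup G₁)),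
        ∃ θ : X ≃ X, ∀ (a : ↥(S₂ : Subgroup G₂)) (u : G₁) (hu : u ∈ P) (x : X),
          θ ((a, (⟨u, hP hu⟩ : ↥(S₁ : Subgroup G₁))) • x) =
            (a, (⟨g * u * g⁻¹, hg u hu⟩ : ↥(S₁ : Subgroup G₁))) • θ x) ∧
      (∀ (P : Subgroup G₂) (hP : P ≤ ↑S₂) (h : G₂)
        (hh : ∀ u ∈ P, h * u * h⁻¹ ∈ (S₂ : Subgroup G₂)),
        ∃ η : X ≃ X, ∀ (u : G₂) (hu : u ∈ P) (b : ↥(S₁ : Subgroup G₁)) (x : X),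
          η (((⟨u, hP hu⟩ : ↥(S₂ : Subgroup G₂)), b) • x) =
            ((⟨h * u * h⁻¹, hh u hu⟩ : ↥(S₂ : Subgroup G₂)), b) • η x)) ↔
    (∀ D : Subgroup (G₂ × G₁), D ≤ (S₂ : Subgroup G₂).prod (S₁ : Subgroup G₁) →
      ∀ hg : G₂ × G₁,
        Subgroup.map (MulAut.conj hg).toMonoidHom D ≤
          (S₂ : Subgroup G₂).prod (S₁ : Subgroup G₁) →
        Nat.card ↥{x : X | ∀ s : ↥(S₂ : Subgroup G₂) × ↥(S₁ : Subgroup G₁),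
            ((s.1 : G₂), (s.2 : G₁)) ∈ D → s • x = x} =
          Nat.card ↥{x : X | ∀ s : ↥(S₂ : Subgroup G₂) × ↥(S₁ : Subgroup G₁),
            ((s.1 : G₂), (s.2 : G₁)) ∈ Subgroup.map (MulAut.conj hg).toMonoidHom D →
              s • x = x}) := by
  classical
  constructor
  · rintro ⟨h1a, h1b⟩ D hD c hc
    -- step 1 : conjugation in the second coordinate
    have step1 : ∀ (D : Subgroup (G₂ × G₁)),
        D ≤ (S₂ : Subgroup G₂).prod (S₁ : Subgroup G₁) → ∀ g : G₁,
        Subgroup.map (MulAut.conj ((1 : G₂), g)).toMonoidHom D ≤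
          (S₂ : Subgroup G₂).prod (S₁ : Subgroup G₁) →
        Nat.card ↥{x : X | ∀ s : ↥(S₂ : Subgroup G₂) × ↥(S₁ : Subgroup G₁),
            ((s.1 : G₂), (s.2 : G₁)) ∈ D → s • x = x} =
          Nat.card ↥{x : X | ∀ s : ↥(S₂ : Subgroup G₂) × ↥(S₁ : Subgroup G₁),
            ((s.1 : G₂), (s.2 : G₁)) ∈
              Subgroup.map (MulAut.conj ((1 : G₂), g)).toMonoidHom D →
              s • x = x} := by
      intro D hD g hDg
      have hconjval : ∀ a : G₂, ∀ u : G₁,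
          (MulAut.conj ((1 : G₂), g)).toMonoidHom (a, u) = (a, g * u * g⁻¹) := by
        intro a u
        simp [MulAut.conj_apply, Prod.ext_iff]
      set P : Subgroup G₁ := Subgroup.map (MonoidHom.snd G₂ G₁) D with hPdef
      have hP : P ≤ (S₁ : Subgroup G₁) := by
        intro u hu
        rw [hPdef, Subgroup.mem_map] at hu
        obtain ⟨⟨a, u'⟩, hd, rfl⟩ := hu
        exact (Subgroup.mem_prod.mp (hD hd)).2
      have hg : ∀ u ∈ P, g * u * g⁻¹ ∈ (S₁ : Subgroup G₁) := by
        intro u hu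
        rw [hPdef, Subgroup.mem_map] at hu
        obtain ⟨⟨a, u'⟩, hd, rfl⟩ := hu
        have h1 : (MulAut.conj ((1 : G₂), g)).toMonoidHom (a, u') ∈
            Subgroup.map (MulAut.conj ((1 : G₂), g)).toMonoidHom D :=
          Subgroup.mem_map_of_mem _ hd
        rw [hconjval] at h1
        exact (Subgroup.mem_prod.mp (hDg h1)).2
      obtain ⟨θ, hθ⟩ := h1a P hP g hg
      apply Nat.card_congr
      apply Equiv.subtypeEquiv θ
      intro x
      simp only [Set.mem_setOf_eq]
      constructor
      · rintro hx ⟨s1, s2⟩ hs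
        rw [Subgroup.mem_map] at hs
        obtain ⟨⟨a, u⟩, hd, hval⟩ := hs
        rw [hconjval] at hval
        have ha : a = (s1 : G₂) := congrArg Prod.fst hval
        have hu2 : g * u * g⁻¹ = (s2 : G₁) := congrArg Prod.snd hval
        have hu : u ∈ P := ⟨(a, u), hd, rfl⟩
        have happ := hθ s1 u hu x
        have hfix0 : ((s1 : ↥(S₂ : Subgroup G₂)),
            (⟨u, hP hu⟩ : ↥(S₁ : Subgroup G₁))) • x = x := by
          apply hx
          show ((s1 : G₂), u) ∈ D
          rw [← ha]
          exact hd
        rw [hfix0] at happ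
        have hs2 : (⟨g * u * g⁻¹, hg u hu⟩ : ↥(S₁ : Subgroup G₁)) = s2 :=
          Subtype.ext hu2
        rw [hs2] at happ
        exact happ.symm
      · rintro hθx ⟨s1, s2⟩ hs
        have hu : (s2 : G₁) ∈ P := ⟨((s1 : G₂), (s2 : G₁)), hs, rfl⟩
        have happ := hθ s1 (s2 : G₁) hu x
        have h1 : (⟨(s2 : G₁), hP hu⟩ : ↥(S₁ : Subgroup G₁)) = s2 := Subtype.ext rfl
        rw [h1] at happ
        have h2 : ((s1 : G₂), g * (s2 : G₁) * g⁻¹) ∈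
            Subgroup.map (MulAut.conj ((1 : G₂), g)).toMonoidHom D :=
          ⟨((s1 : G₂), (s2 : G₁)), hs, hconjval _ _⟩
        have h3 := hθx ((s1 : ↥(S₂ : Subgroup G₂)),
          (⟨g * (s2 : G₁) * g⁻¹, hg _ hu⟩ : ↥(S₁ : Subgroup G₁))) h2
        rw [h3] at happ
        exact θ.injective happ
    -- step 2 : conjugation in the first coordinate
    have step2 : ∀ (D : Subgroup (G₂ × G₁)),
        D ≤ (S₂ : Subgroup G₂).prod (S₁ : Subgroup G₁) → ∀ h : G₂,
        Subgroup.map (MulAut.conj (h, (1 : G₁))).toMonoidHom D ≤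
          (S₂ : Subgroup G₂).prod (S₁ : Subgroup G₁) →
        Nat.card ↥{x : X | ∀ s : ↥(S₂ : Subgroup G₂) × ↥(S₁ : Subgroup G₁),
            ((s.1 : G₂), (s.2 : G₁)) ∈ D → s • x = x} =
          Nat.card ↥{x : X | ∀ s : ↥(S₂ : Subgroup G₂) × ↥(S₁ : Subgroup G₁),
            ((s.1 : G₂), (s.2 : G₁)) ∈
              Subgroup.map (MulAut.conj (h, (1 : G₁))).toMonoidHom D →
              s • x = x} := by
      intro D hD h hDh
      have hconjval : ∀ a : G₂, ∀ u : G₁,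
          (MulAut.conj (h, (1 : G₁))).toMonoidHom (a, u) = (h * a * h⁻¹, u) := by
        intro a u
        simp [MulAut.conj_apply, Prod.ext_iff]
      set P : Subgroup G₂ := Subgroup.map (MonoidHom.fst G₂ G₁) D with hPdef
      have hP : P ≤ (S₂ : Subgroup G₂) := by
        intro u hu
        rw [hPdef, Subgroup.mem_map] at hu
        obtain ⟨⟨a, u'⟩, hd, rfl⟩ := hu
        exact (Subgroup.mem_prod.mp (hD hd)).1
      have hh : ∀ u ∈ P, h * u * h⁻¹ ∈ (S₂ : Subgroup G₂) := by
        intro u hu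
        rw [hPdef, Subgroup.mem_map] at hu
        obtain ⟨⟨a, u'⟩, hd, rfl⟩ := hu
        have h1 : (MulAut.conj (h, (1 : G₁))).toMonoidHom (a, u') ∈
            Subgroup.map (MulAut.conj (h, (1 : G₁))).toMonoidHom D :=
          Subgroup.mem_map_of_mem _ hd
        rw [hconjval] at h1
        exact (Subgroup.mem_prod.mp (hDh h1)).1
      obtain ⟨η, hη⟩ := h1b P hP h hh
      apply Nat.card_congr
      apply Equiv.subtypeEquiv η
      intro x
      simp only [Set.mem_setOf_eq]
      constructor
      · rintro hx ⟨s1, s2⟩ hs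
        rw [Subgroup.mem_map] at hs
        obtain ⟨⟨a, u⟩, hd, hval⟩ := hs
        rw [hconjval] at hval
        have ha : h * a * h⁻¹ = (s1 : G₂) := congrArg Prod.fst hval
        have hu2 : u = (s2 : G₁) := congrArg Prod.snd hval
        have hu : a ∈ P := ⟨(a, u), hd, rfl⟩
        have happ := hη a hu s2 x
        have hfix0 : ((⟨a, hP hu⟩ : ↥(S₂ : Subgroup G₂)), s2) • x = x := by
          apply hx
          show (a, (s2 : G₁)) ∈ D
          rw [← hu2]
          exact hd
        rw [hfix0] at happ
        have hs1 : (⟨h * a * h⁻¹, hh a hu⟩ : ↥(S₂ : Subgroup G₂)) = s1 :=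
          Subtype.ext ha
        rw [hs1] at happ
        exact happ.symm
      · rintro hηx ⟨s1, s2⟩ hs
        have hu : (s1 : G₂) ∈ P := ⟨((s1 : G₂), (s2 : G₁)), hs, rfl⟩
        have happ := hη (s1 : G₂) hu s2 x
        have h1 : (⟨(s1 : G₂), hP hu⟩ : ↥(S₂ : Subgroup G₂)) = s1 := Subtype.ext rfl
        rw [h1] at happ
        have h2 : (h * (s1 : G₂) * h⁻¹, (s2 : G₁)) ∈
            Subgroup.map (MulAut.conj (h, (1 : G₁))).toMonoidHom D :=
          ⟨((s1 : G₂), (s2 : G₁)), hs, hconjval _ _⟩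
        have h3 := hηx ((⟨h * (s1 : G₂) * h⁻¹, hh _ hu⟩ : ↥(S₂ : Subgroup G₂)), s2) h2
        rw [h3] at happ
        exact η.injective happ
    -- combine
    have hmid : Subgroup.map (MulAut.conj ((1 : G₂), c.2)).toMonoidHom D ≤
        (S₂ : Subgroup G₂).prod (S₁ : Subgroup G₁) := by
      intro y hy
      rw [Subgroup.mem_map] at hy
      obtain ⟨⟨a, u⟩, hd, rfl⟩ := hy
      have h1 : (MulAut.conj c).toMonoidHom (a, u) ∈
          Subgroup.map (MulAut.conj c).toMonoidHom D := Subgroup.mem_map_of_mem _ hd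
      have h2 := Subgroup.mem_prod.mp (hc h1)
      have h3 := Subgroup.mem_prod.mp (hD hd)
      rw [Subgroup.mem_prod]
      constructor
      · simpa [MulAut.conj_apply] using h3.1
      · have := h2.2
        simpa [MulAut.conj_apply] using this
    have hcomp : Subgroup.map (MulAut.conj (c.1, (1 : G₁))).toMonoidHom
        (Subgroup.map (MulAut.conj ((1 : G₂), c.2)).toMonoidHom D) =
        Subgroup.map (MulAut.conj c).toMonoidHom D := by
      rw [Subgroup.map_map]
      congr 1
      ext x
      · simp [MulAut.conj_apply]
      · simp [MulAut.conj_apply]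
    rw [step1 D hD c.2 hmid, ← hcomp]
    exact step2 _ hmid c.1 (by rw [hcomp]; exact hc)
  · intro h2
    constructor
    · intro P hP g hg
      let j : ↥P →* ↥(S₁ : Subgroup G₁) :=
        { toFun := fun u => ⟨g * (u : G₁) * g⁻¹, hg (u : G₁) u.2⟩
          map_one' := by ext; simp
          map_mul' := by intro a b; ext; simp only [Subgroup.coe_mul]; group }
      let φ₁ : ↥(S₂ : Subgroup G₂) × ↥P →* ↥(S₂ : Subgroup G₂) × ↥(S₁ : Subgroup G₁) :=
        (MonoidHom.id _).prodMap (Subgroup.inclusion hP)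
      let φ₂ : ↥(S₂ : Subgroup G₂) × ↥P →* ↥(S₂ : Subgroup G₂) × ↥(S₁ : Subgroup G₁) :=
        (MonoidHom.id _).prodMap j
      let ρ : ↥(S₂ : Subgroup G₂) × ↥P →* Equiv.Perm X :=
        (MulAction.toPermHom _ X).comp φ₁
      let σ : ↥(S₂ : Subgroup G₂) × ↥P →* Equiv.Perm X :=
        (MulAction.toPermHom _ X).comp φ₂
      have hρ : ∀ (k : ↥(S₂ : Subgroup G₂) × ↥P) (x : X),
          ρ k x = ((k.1 : ↥(S₂ : Subgroup G₂)), (⟨(k.2 : G₁), hP k.2.2⟩ :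
            ↥(S₁ : Subgroup G₁))) • x := fun _ _ => rfl
      have hσ : ∀ (k : ↥(S₂ : Subgroup G₂) × ↥P) (x : X),
          σ k x = ((k.1 : ↥(S₂ : Subgroup G₂)), (⟨g * (k.2 : G₁) * g⁻¹,
            hg _ k.2.2⟩ : ↥(S₁ : Subgroup G₁))) • x := fun _ _ => rfl
      have hmarks : ∀ H : Subgroup (↥(S₂ : Subgroup G₂) × ↥P),
          Nat.card {x : X // ∀ k ∈ H, ρ k x = x} =
          Nat.card {x : X // ∀ k ∈ H, σ k x = x} := by
        intro H
        set ψ : ↥(S₂ : Subgroup G₂) × ↥(S₁ : Subgroup G₁) →* G₂ × G₁ :=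
          ((S₂ : Subgroup G₂).subtype).prodMap ((S₁ : Subgroup G₁).subtype) with hψdef
        have hψ : ∀ s : ↥(S₂ : Subgroup G₂) × ↥(S₁ : Subgroup G₁),
            ψ s = ((s.1 : G₂), (s.2 : G₁)) := fun s => rfl
        have hψinj : Function.Injective ψ := by
          intro s t hst
          rw [hψ, hψ] at hst
          exact Prod.ext (Subtype.ext (congrArg Prod.fst hst))
            (Subtype.ext (congrArg Prod.snd hst))
        set D₁ : Subgroup (G₂ × G₁) := Subgroup.map (ψ.comp φ₁) H with hD₁def
        have hD₁ : D₁ ≤ (S₂ : Subgroup G₂).prod (S₁ : Subgroup G₁) := by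
          rintro y hy
          rw [hD₁def, Subgroup.mem_map] at hy
          obtain ⟨k, hk, rfl⟩ := hy
          rw [Subgroup.mem_prod]
          exact ⟨((φ₁ k).1).2, ((φ₁ k).2).2⟩
        have hval : ∀ k : ↥(S₂ : Subgroup G₂) × ↥P,
            (MulAut.conj ((1 : G₂), g)).toMonoidHom ((ψ.comp φ₁) k) = ψ (φ₂ k) := by
          intro k
          rw [MonoidHom.comp_apply, hψ, hψ]
          simp [MulAut.conj_apply, Prod.ext_iff, φ₁, φ₂, j]
        have hconj : Subgroup.map (MulAut.conj ((1 : G₂), g)).toMonoidHom D₁ ≤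
            (S₂ : Subgroup G₂).prod (S₁ : Subgroup G₁) := by
          intro y hy
          rw [Subgroup.mem_map] at hy
          obtain ⟨d, hd, rfl⟩ := hy
          rw [hD₁def, Subgroup.mem_map] at hd
          obtain ⟨k, hk, rfl⟩ := hd
          rw [hval k, Subgroup.mem_prod]
          exact ⟨((φ₂ k).1).2, ((φ₂ k).2).2⟩
        have hfwd : ∀ x : X, (∀ k ∈ H, ρ k x = x) ↔
            (∀ s : ↥(S₂ : Subgroup G₂) × ↥(S₁ : Subgroup G₁),
              ((s.1 : G₂), (s.2 : G₁)) ∈ D₁ → s • x = x) := by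
          intro x
          constructor
          · intro hx s hs
            rw [hD₁def, Subgroup.mem_map] at hs
            obtain ⟨k, hk, hkval⟩ := hs
            have h1 : φ₁ k = s := hψinj (by rw [hψ s]; exact hkval)
            rw [← h1]
            exact hx k hk
          · intro hx k hk
            exact hx (φ₁ k) (Subgroup.mem_map.mpr ⟨k, hk, rfl⟩)
        have hbwd : ∀ x : X, (∀ k ∈ H, σ k x = x) ↔
            (∀ s : ↥(S₂ : Subgroup G₂) × ↥(S₁ : Subgroup G₁),
              ((s.1 : G₂), (s.2 : G₁)) ∈
                Subgroup.map (MulAut.conj ((1 : G₂), g)).toMonoidHom D₁ →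
                s • x = x) := by
          intro x
          constructor
          · intro hx s hs
            rw [Subgroup.mem_map] at hs
            obtain ⟨d, hd, hdval⟩ := hs
            rw [hD₁def, Subgroup.mem_map] at hd
            obtain ⟨k, hk, rfl⟩ := hd
            have h1 : φ₂ k = s :=
              hψinj (by rw [hψ s]; exact (hval k).symm.trans hdval)
            rw [← h1]
            exact hx k hk
          · intro hx k hk
            refine hx (φ₂ k) (Subgroup.mem_map.mpr ⟨(ψ.comp φ₁) k,
              Subgroup.mem_map.mpr ⟨k, hk, rfl⟩, ?_⟩)
            rw [hval k]
            exact hψ (φ₂ k)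
        rw [Nat.card_congr (Equiv.subtypeEquivRight hfwd),
          Nat.card_congr (Equiv.subtypeEquivRight hbwd)]
        exact h2 D₁ hD₁ ((1 : G₂), g) hconj
      obtain ⟨θ, hθ⟩ := marks_iso (↥(S₂ : Subgroup G₂) × ↥P) (Nat.card X) X X ρ σ rfl hmarks
      refine ⟨θ, ?_⟩
      intro a u hu x
      have h0 := hθ (a, ⟨u, hu⟩) x
      rw [hρ (a, ⟨u, hu⟩) x, hσ (a, ⟨u, hu⟩) (θ x)] at h0
      exact h0
    · intro P hP h hh
      let j : ↥P →* ↥(S₂ : Subgroup G₂) :=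
        { toFun := fun u => ⟨h * (u : G₂) * h⁻¹, hh (u : G₂) u.2⟩
          map_one' := by ext; simp
          map_mul' := by intro a b; ext; simp only [Subgroup.coe_mul]; group }
      let φ₁ : ↥P × ↥(S₁ : Subgroup G₁) →* ↥(S₂ : Subgroup G₂) × ↥(S₁ : Subgroup G₁) :=
        (Subgroup.inclusion hP).prodMap (MonoidHom.id _)
      let φ₂ : ↥P × ↥(S₁ : Subgroup G₁) →* ↥(S₂ : Subgroup G₂) × ↥(S₁ : Subgroup G₁) :=
        j.prodMap (MonoidHom.id _)
      let ρ : ↥P × ↥(S₁ : Subgroup G₁) →* Equiv.Perm X :=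
        (MulAction.toPermHom _ X).comp φ₁
      let σ : ↥P × ↥(S₁ : Subgroup G₁) →* Equiv.Perm X :=
        (MulAction.toPermHom _ X).comp φ₂
      have hρ : ∀ (k : ↥P × ↥(S₁ : Subgroup G₁)) (x : X),
          ρ k x = ((⟨(k.1 : G₂), hP k.1.2⟩ : ↥(S₂ : Subgroup G₂)),
            (k.2 : ↥(S₁ : Subgroup G₁))) • x := fun _ _ => rfl
      have hσ : ∀ (k : ↥P × ↥(S₁ : Subgroup G₁)) (x : X),
          σ k x = ((⟨h * (k.1 : G₂) * h⁻¹, hh _ k.1.2⟩ : ↥(S₂ : Subgroup G₂)),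
            (k.2 : ↥(S₁ : Subgroup G₁))) • x := fun _ _ => rfl
      have hmarks : ∀ H : Subgroup (↥P × ↥(S₁ : Subgroup G₁)),
          Nat.card {x : X // ∀ k ∈ H, ρ k x = x} =
          Nat.card {x : X // ∀ k ∈ H, σ k x = x} := by
        intro H
        set ψ : ↥(S₂ : Subgroup G₂) × ↥(S₁ : Subgroup G₁) →* G₂ × G₁ :=
          ((S₂ : Subgroup G₂).subtype).prodMap ((S₁ : Subgroup G₁).subtype) with hψdef
        have hψ : ∀ s : ↥(S₂ : Subgroup G₂) × ↥(S₁ : Subgroup G₁),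
            ψ s = ((s.1 : G₂), (s.2 : G₁)) := fun s => rfl
        have hψinj : Function.Injective ψ := by
          intro s t hst
          rw [hψ, hψ] at hst
          exact Prod.ext (Subtype.ext (congrArg Prod.fst hst))
            (Subtype.ext (congrArg Prod.snd hst))
        set D₁ : Subgroup (G₂ × G₁) := Subgroup.map (ψ.comp φ₁) H with hD₁def
        have hD₁ : D₁ ≤ (S₂ : Subgroup G₂).prod (S₁ : Subgroup G₁) := by
          rintro y hy
          rw [hD₁def, Subgroup.mem_map] at hy
          obtain ⟨k, hk, rfl⟩ := hy
          rw [Subgroup.mem_prod]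
          exact ⟨((φ₁ k).1).2, ((φ₁ k).2).2⟩
        have hval : ∀ k : ↥P × ↥(S₁ : Subgroup G₁),
            (MulAut.conj (h, (1 : G₁))).toMonoidHom ((ψ.comp φ₁) k) = ψ (φ₂ k) := by
          intro k
          rw [MonoidHom.comp_apply, hψ, hψ]
          simp [MulAut.conj_apply, Prod.ext_iff, φ₁, φ₂, j]
        have hconj : Subgroup.map (MulAut.conj (h, (1 : G₁))).toMonoidHom D₁ ≤
            (S₂ : Subgroup G₂).prod (S₁ : Subgroup G₁) := by
          intro y hy
          rw [Subgroup.mem_map] at hy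
          obtain ⟨d, hd, rfl⟩ := hy
          rw [hD₁def, Subgroup.mem_map] at hd
          obtain ⟨k, hk, rfl⟩ := hd
          rw [hval k, Subgroup.mem_prod]
          exact ⟨((φ₂ k).1).2, ((φ₂ k).2).2⟩
        have hfwd : ∀ x : X, (∀ k ∈ H, ρ k x = x) ↔
            (∀ s : ↥(S₂ : Subgroup G₂) × ↥(S₁ : Subgroup G₁),
              ((s.1 : G₂), (s.2 : G₁)) ∈ D₁ → s • x = x) := by
          intro x
          constructor
          · intro hx s hs
            rw [hD₁def, Subgroup.mem_map] at hs
            obtain ⟨k, hk, hkval⟩ := hs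
            have h1 : φ₁ k = s := hψinj (by rw [hψ s]; exact hkval)
            rw [← h1]
            exact hx k hk
          · intro hx k hk
            exact hx (φ₁ k) (Subgroup.mem_map.mpr ⟨k, hk, rfl⟩)
        have hbwd : ∀ x : X, (∀ k ∈ H, σ k x = x) ↔
            (∀ s : ↥(S₂ : Subgroup G₂) × ↥(S₁ : Subgroup G₁),
              ((s.1 : G₂), (s.2 : G₁)) ∈
                Subgroup.map (MulAut.conj (h, (1 : G₁))).toMonoidHom D₁ →
                s • x = x) := by
          intro x
          constructor
          · intro hx s hs
            rw [Subgroup.mem_map] at hs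
            obtain ⟨d, hd, hdval⟩ := hs
            rw [hD₁def, Subgroup.mem_map] at hd
            obtain ⟨k, hk, rfl⟩ := hd
            have h1 : φ₂ k = s :=
              hψinj (by rw [hψ s]; exact (hval k).symm.trans hdval)
            rw [← h1]
            exact hx k hk
          · intro hx k hk
            refine hx (φ₂ k) (Subgroup.mem_map.mpr ⟨(ψ.comp φ₁) k,
              Subgroup.mem_map.mpr ⟨k, hk, rfl⟩, ?_⟩)
            rw [hval k]
            exact hψ (φ₂ k)
        rw [Nat.card_congr (Equiv.subtypeEquivRight hfwd),
          Nat.card_congr (Equiv.subtypeEquivRight hbwd)]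
        exact h2 D₁ hD₁ (h, (1 : G₁)) hconj
      obtain ⟨η, hη⟩ := marks_iso (↥P × ↥(S₁ : Subgroup G₁)) (Nat.card X) X X ρ σ rfl hmarks
      refine ⟨η, ?_⟩
      intro u hu b x
      have h0 := hη (⟨u, hu⟩, b) x
      rw [hρ (⟨u, hu⟩, b) x, hσ (⟨u, hu⟩, b) (η x)] at h0
      exact h0
end

section
/- Let P ≤ S be a fully normalized subgroup and let P' ≤ S be G-conjugate to P. Let X be a finite S-set such that |X^Q| = |X^{Q'}| for all G-conjugate subgroups Q, Q' ≤ S with |Q| > |P|. Then |N_S(P')|/|P'| divides the integer |X^P| − |X^{P'}|, i.e. |X^P| ≡ |X^{P'}| modulo the order of the Weyl group N_S(P')/P'. (This is the key congruence established in the paper's stabilization Lemma: for an element that is F-stable away from the conjugacy class of P, the deviations of its marks across the F-conjugacy class of P are divisible by the relevant Weyl group orders, which makes the correction coefficients λ_{P'} p-integral.) -/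
/-! ### Auxiliary counting lemmas -/

open Finset

open scoped Classical in
private lemma fiber_count' {W : Type*} [Group W] [Finite W] {Z : Type*} [Fintype Z]
    (stz : Z → Subgroup W) (Q : Subgroup W) :
    letI : Fintype (Subgroup W) := Fintype.ofFinite _
    (univ.filter fun z => Q ≤ stz z).card
      = (univ.filter fun z => stz z = Q).card
        + ∑ R ∈ univ.filter (fun R => Q < R), (univ.filter fun z => stz z = R).card := by
  letI : Fintype (Subgroup W) := Fintype.ofFinite _
  rw [Finset.card_eq_sum_card_fiberwise (f := stz) (t := univ.filter fun R => Q ≤ R)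
    (fun z hz => by simpa using (mem_filter.mp hz).2)]
  have hins : univ.filter (fun R : Subgroup W => Q ≤ R)
      = insert Q (univ.filter fun R => Q < R) := by
    ext R
    simp [le_iff_lt_or_eq, or_comm, eq_comm]
  rw [hins, Finset.sum_insert (by simp)]
  congr 1
  · congr 1
    ext z
    simp (config := {contextual := true}) [le_of_eq, eq_comm]
  · refine Finset.sum_congr rfl fun R hR => ?_
    have hQR : Q < R := by simpa using hR
    congr 1
    ext z
    constructor
    · intro h
      simp only [mem_filter, mem_univ, true_and] at h ⊢
      exact h.2
    · intro h
      simp only [mem_filter, mem_univ, true_and] at h ⊢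
      exact ⟨h ▸ hQR.le, h⟩

open scoped Classical in
private lemma tot_count' {W : Type*} [Group W] [Finite W] {Z : Type*} [Fintype Z]
    (stz : Z → Subgroup W) :
    letI : Fintype (Subgroup W) := Fintype.ofFinite _
    Fintype.card Z = ∑ R ∈ univ, (univ.filter fun z => stz z = R).card := by
  letI : Fintype (Subgroup W) := Fintype.ofFinite _
  rw [← Finset.card_univ, Finset.card_eq_sum_card_fiberwise (f := stz) (t := univ)
    (fun z _ => mem_univ _)]

open scoped Classical in
private lemma key_count_aux {W : Type*} [Group W] [Finite W] {Y Y' : Type*} [Fintype Y] [Fintype Y']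
    (st : Y → Subgroup W) (st' : Y' → Subgroup W) (N : Subgroup W)
    (hst : ∀ y, N ≤ st y) (hst' : ∀ y, N ≤ st' y)
    (heq : ∀ Q : Subgroup W, ¬ Q ≤ N →
      (univ.filter fun y => Q ≤ st y).card = (univ.filter fun y => Q ≤ st' y).card)
    (hdvd : N.index ∣ (univ.filter fun y => st y = N).card)
    (hdvd' : N.index ∣ (univ.filter fun y => st' y = N).card) :
    (N.index : ℤ) ∣ (Fintype.card Y : ℤ) - Fintype.card Y' := by
  letI : Fintype (Subgroup W) := Fintype.ofFinite _
  have key : ∀ n : ℕ, ∀ Q : Subgroup W, (univ.filter fun R => Q < R).card ≤ n → ¬ Q ≤ N →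
      (univ.filter fun y => st y = Q).card = (univ.filter fun y => st' y = Q).card := by
    intro n
    induction n with
    | zero =>
      intro Q hQ hQN
      have hemp : (univ.filter fun R : Subgroup W => Q < R) = ∅ :=
        Finset.card_eq_zero.mp (Nat.le_zero.mp hQ)
      have h1 := fiber_count' st Q
      have h2 := fiber_count' st' Q
      simp only [hemp, Finset.sum_empty, add_zero] at h1 h2
      rw [← h1, ← h2]
      exact heq Q hQN
    | succ n ih =>
      intro Q hQ hQN
      have h1 := fiber_count' st Q
      have h2 := fiber_count' st' Q
      have hsum : ∑ R ∈ univ.filter (fun R => Q < R), (univ.filter fun y => st y = R).card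
          = ∑ R ∈ univ.filter (fun R => Q < R), (univ.filter fun y => st' y = R).card := by
        refine Finset.sum_congr rfl fun R hR => ?_
        have hQR : Q < R := by simpa using hR
        have hsub : (univ.filter fun T : Subgroup W => R < T)
            ⊆ (univ.filter fun T : Subgroup W => Q < T).erase R := by
          intro T hT
          have hRT : R < T := by simpa using hT
          refine Finset.mem_erase.mpr ⟨hRT.ne', by simpa using hQR.trans hRT⟩
        have hcard : (univ.filter fun T : Subgroup W => R < T).card ≤ n := by
          have := Finset.card_le_card hsub
          have h2' : ((univ.filter fun T : Subgroup W => Q < T).erase R).card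
              = (univ.filter fun T : Subgroup W => Q < T).card - 1 :=
            Finset.card_erase_of_mem (by simpa using hQR)
          omega
        exact ih R hcard fun hRN => hQN (hQR.le.trans hRN)
      have := heq Q hQN
      omega
  have htot : (Fintype.card Y : ℤ) - Fintype.card Y'
      = ∑ R ∈ univ, (((univ.filter fun y => st y = R).card : ℤ)
          - ((univ.filter fun y => st' y = R).card : ℤ)) := by
    rw [tot_count' st, tot_count' st', Finset.sum_sub_distrib]
    push_cast
    ring
  rw [htot, Finset.sum_eq_single N]
  · exact dvd_sub (Int.natCast_dvd_natCast.mpr hdvd) (Int.natCast_dvd_natCast.mpr hdvd')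
  · intro R _ hRN
    by_cases hNR : N ≤ R
    · have : ¬ R ≤ N := fun h => hRN (le_antisymm h hNR)
      rw [key (univ.filter fun T : Subgroup W => R < T).card R le_rfl this]
      exact sub_self _
    · have h1 : (univ.filter fun y => st y = R) = ∅ :=
        Finset.filter_eq_empty_iff.mpr fun y _ h => hNR (h ▸ hst y)
      have h2 : (univ.filter fun y => st' y = R) = ∅ :=
        Finset.filter_eq_empty_iff.mpr fun y _ h => hNR (h ▸ hst' y)
      rw [h1, h2]
      exact sub_self _
  · simp

open scoped Classical in
private lemma natcard_filter {Z : Type*} [Fintype Z] (p : Z → Prop) :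
    Nat.card {z // p z} = (univ.filter p).card := by
  rw [Nat.card_eq_fintype_card, Fintype.card_subtype]

private lemma key_count {W : Type*} [Group W] [Finite W] {Y Y' : Type*} [Finite Y] [Finite Y']
    (st : Y → Subgroup W) (st' : Y' → Subgroup W) (N : Subgroup W)
    (hst : ∀ y, N ≤ st y) (hst' : ∀ y, N ≤ st' y)
    (heq : ∀ Q : Subgroup W, ¬ Q ≤ N →
      Nat.card {y : Y // Q ≤ st y} = Nat.card {y : Y' // Q ≤ st' y})
    (hdvd : N.index ∣ Nat.card {y : Y // st y = N})
    (hdvd' : N.index ∣ Nat.card {y : Y' // st' y = N}) :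
    (N.index : ℤ) ∣ (Nat.card Y : ℤ) - Nat.card Y' := by
  classical
  letI : Fintype Y := Fintype.ofFinite _
  letI : Fintype Y' := Fintype.ofFinite _
  simp only [natcard_filter] at heq hdvd hdvd'
  rw [Nat.card_eq_fintype_card, Nat.card_eq_fintype_card]
  exact key_count_aux st st' N hst hst' heq hdvd hdvd'

private lemma nat_card_sigma {ι : Type*} [Fintype ι] (f : ι → Type*) [∀ i, Finite (f i)] :
    Nat.card (Σ i, f i) = ∑ i, Nat.card (f i) := by
  letI : ∀ i, Fintype (f i) := fun i => Fintype.ofFinite _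
  simp [Nat.card_eq_fintype_card, Fintype.card_sigma]

private lemma index_dvd_card_stab_eq {W : Type*} [Group W] [Finite W] {Y : Type*} [Finite Y]
    [mY : MulAction W Y] (N : Subgroup W) (hN : N.Normal) :
    N.index ∣ Nat.card {y : Y // MulAction.stabilizer W y = N} := by
  classical
  have hmap : ∀ w : W, Subgroup.map (MulAut.conj w).toMonoidHom N = N := by
    intro w
    ext x
    constructor
    · rintro ⟨n, hn, rfl⟩
      exact hN.conj_mem n hn w
    · intro hx
      exact ⟨w⁻¹ * x * w, by simpa using hN.conj_mem x hx w⁻¹, by simp [MulAut.conj]; group⟩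
  set Z := {y : Y // MulAction.stabilizer W y = N} with hZ
  letI : MulAction W Z :=
    { smul := fun w z => ⟨w • z.1, by
        rw [MulAction.stabilizer_smul_eq_stabilizer_map_conj, z.2, hmap]⟩
      one_smul := fun z => Subtype.ext (one_smul W z.1)
      mul_smul := fun a b z => Subtype.ext (mul_smul a b z.1) }
  have hsmul : ∀ (w : W) (z : Z), (w • z).1 = w • z.1 := fun _ _ => rfl
  have stabZ : ∀ z : Z, MulAction.stabilizer W z = N := by
    intro z
    ext w
    rw [MulAction.mem_stabilizer_iff, ← z.2, MulAction.mem_stabilizer_iff]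
    exact ⟨fun h => by rw [← hsmul, h], fun h => Subtype.ext (by rw [hsmul, h])⟩
  letI : Fintype (MulAction.orbitRel.Quotient W Z) := Fintype.ofFinite _
  have : Nat.card Z
      = ∑ ω : MulAction.orbitRel.Quotient W Z, Nat.card (MulAction.orbit W ω.out) := by
    rw [Nat.card_congr (MulAction.selfEquivSigmaOrbits W Z), nat_card_sigma]
  rw [this]
  refine Finset.dvd_sum fun ω _ => ?_
  rw [Nat.card_congr (MulAction.orbitEquivQuotientStabilizer W ω.out), stabZ]
  rfl

/-! ### Conjugation lemmas and the extension lemma -/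

section StepA

variable {G : Type*} [Group G]

private abbrev cmap (g : G) (H : Subgroup G) : Subgroup G :=
  Subgroup.map (MulAut.conj g).toMonoidHom H

private lemma cmap_one (H : Subgroup G) : cmap 1 H = H := by
  ext x
  simp [cmap]

private lemma cmap_cmap (g g' : G) (H : Subgroup G) : cmap g (cmap g' H) = cmap (g * g') H := by
  simp only [cmap]
  rw [Subgroup.map_map]
  congr 1
  ext x
  simp [mul_assoc]

private lemma card_cmap (g : G) (H : Subgroup G) : Nat.card (cmap g H) = Nat.card H :=
  (Nat.card_congr (H.equivMapOfInjective _ (MulAut.conj g).injective).toEquiv).symm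

private lemma cmap_normalizer (g : G) (H : Subgroup G) :
    cmap g (Subgroup.normalizer (H : Set G)) = Subgroup.normalizer ((cmap g H : Subgroup G) : Set G) :=
  Subgroup.map_equiv_normalizer_eq H (MulAut.conj g)

private lemma cmap_normIn (g : G) (S H : Subgroup G) :
    cmap g (normIn S H) = normIn (cmap g S) (cmap g H) := by
  unfold normIn
  simp only [cmap]
  rw [Subgroup.map_inf _ _ _ (MulAut.conj g).injective]
  have := cmap_normalizer g H
  simp only [cmap] at this
  rw [this]

private lemma cmap_sup (g : G) (H K : Subgroup G) :
    cmap g (H ⊔ K) = cmap g H ⊔ cmap g K := by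
  simp only [cmap]
  rw [Subgroup.map_sup]

private lemma isPGroup_cmap {p : ℕ} {H : Subgroup G} (h : IsPGroup p H) (g : G) :
    IsPGroup p (cmap g H) := h.map _

private lemma subtype_map_cmap {N : Subgroup G} (n : ↥N) (A : Subgroup ↥N) :
    Subgroup.map N.subtype (cmap n A) = cmap (↑n : G) (Subgroup.map N.subtype A) := by
  ext x
  simp only [Subgroup.mem_map, MulEquiv.coe_toMonoidHom, MulAut.conj_apply]
  constructor
  · rintro ⟨a, ⟨b, hb, rfl⟩, rfl⟩
    exact ⟨↑b, ⟨b, hb, rfl⟩, rfl⟩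
  · rintro ⟨a, ⟨b, hb, rfl⟩, rfl⟩
    exact ⟨n * b * n⁻¹, ⟨b, hb, rfl⟩, rfl⟩

private lemma extension_lemma (p : ℕ) [Fact p.Prime] [Fintype G]
    (S : Sylow p G) (P P' : Subgroup G) (hP : P ≤ ↑S) (hP' : P' ≤ ↑S)
    (hfn : FullyNormalized ↑S P) (hconj : GConj P P') :
    ∃ h : G, cmap h P' = P ∧ cmap h (normIn ↑S P') ≤ normIn ↑S P := by
  classical
  obtain ⟨g, hg⟩ := hconj
  set N : Subgroup G := Subgroup.normalizer (P : Set G) with hN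
  have hPN : P ≤ N := Subgroup.le_normalizer
  set A : Subgroup G := cmap g⁻¹ (normIn ↑S P') with hA
  have hAP : IsPGroup p A := isPGroup_cmap ((S.2).to_le (inf_le_right.trans le_rfl)) g⁻¹
  have hcPg : cmap g⁻¹ P' = P := by
    rw [← hg, cmap_cmap]
    simp [cmap_one]
  have hAN : A ≤ N := by
    rw [hA, hN, ← hcPg, ← cmap_normalizer]
    exact Subgroup.map_mono inf_le_left
  have hBN : normIn ↑S P ≤ N := inf_le_left
  set B : Subgroup ↥N := (normIn ↑S P).subgroupOf N with hB
  have hcardB : Nat.card B = Nat.card (normIn ↑S P) :=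
    Nat.card_congr (Subgroup.subgroupOfEquivOfLe hBN).toEquiv
  have hBpg : IsPGroup p B :=
    ((S.2).to_le inf_le_right).of_equiv (Subgroup.subgroupOfEquivOfLe hBN).symm
  obtain ⟨T₂, hT₂⟩ := hBpg.exists_le_sylow
  have hT₂B : (T₂ : Subgroup ↥N) = B := by
    have hPsub : (P.subgroupOf N) ≤ T₂ := by
      haveI : (P.subgroupOf N).Normal := Subgroup.normal_in_normalizer
      have hsup : IsPGroup p (P.subgroupOf N ⊔ ↑T₂ : Subgroup ↥N) :=
        IsPGroup.to_sup_of_normal_left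
          (((S.2).to_le hP).of_equiv (Subgroup.subgroupOfEquivOfLe hPN).symm) T₂.2
      have := T₂.3 hsup le_sup_right
      exact this ▸ le_sup_left
    set T₂G : Subgroup G := Subgroup.map N.subtype (T₂ : Subgroup ↥N) with hT₂G
    have hT₂Gpg : IsPGroup p T₂G := T₂.2.map _
    have hPT₂G : P ≤ T₂G := by
      have := Subgroup.map_mono (f := N.subtype) hPsub
      rwa [Subgroup.subgroupOf_map_subtype, inf_eq_left.mpr hPN] at this
    have hT₂GN : T₂G ≤ N := by
      rintro x ⟨y, _, rfl⟩
      exact y.2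
    obtain ⟨S₁, hS₁⟩ := hT₂Gpg.exists_le_sylow
    obtain ⟨c, hc⟩ := MulAction.exists_smul_eq G S₁ S
    have hc' : cmap c (S₁ : Subgroup G) = ↑S := by
      rw [← hc]; rfl
    set Q : Subgroup G := cmap c P with hQ
    have hQS : Q ≤ ↑S := hc' ▸ Subgroup.map_mono (hPT₂G.trans hS₁)
    have hQconj : GConj P Q := ⟨c, rfl⟩
    have hTQ : cmap c T₂G ≤ normIn ↑S Q := by
      refine le_inf ?_ (hc' ▸ Subgroup.map_mono hS₁)
      rw [hQ, ← cmap_normalizer]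
      exact Subgroup.map_mono hT₂GN
    have hcard1 : Nat.card T₂G = Nat.card (T₂ : Subgroup ↥N) :=
      (Nat.card_congr ((T₂ : Subgroup ↥N).equivMapOfInjective _ N.subtype_injective).toEquiv).symm
    have hchain : Nat.card (T₂ : Subgroup ↥N) ≤ Nat.card (normIn ↑S P) := by
      calc Nat.card (T₂ : Subgroup ↥N) = Nat.card (cmap c T₂G) := by
            rw [card_cmap, hcard1]
        _ ≤ Nat.card (normIn ↑S Q) := Subgroup.card_le_of_le hTQ
        _ ≤ Nat.card (normIn ↑S P) := hfn Q hQS hQconj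
    have : Nat.card (T₂ : Subgroup ↥N) ≤ Nat.card B := hcardB ▸ hchain
    exact (Subgroup.eq_of_le_of_card_ge hT₂ this).symm
  have hAsub : IsPGroup p (A.subgroupOf N) := hAP.of_equiv (Subgroup.subgroupOfEquivOfLe hAN).symm
  obtain ⟨T, hT⟩ := hAsub.exists_le_sylow
  obtain ⟨n, hn⟩ := MulAction.exists_smul_eq (↥N) T T₂
  have hnT : cmap n (T : Subgroup ↥N) = B := by
    rw [← hT₂B, ← hn]
    rfl
  have hfinal : cmap (↑n : G) A ≤ normIn ↑S P := by
    have h1 : cmap n (A.subgroupOf N) ≤ B := hnT ▸ Subgroup.map_mono hT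
    have h2 := Subgroup.map_mono (f := N.subtype) h1
    rw [subtype_map_cmap, Subgroup.subgroupOf_map_subtype, inf_eq_left.mpr hAN,
      Subgroup.subgroupOf_map_subtype, inf_eq_left.mpr hBN] at h2
    exact h2
  refine ⟨↑n * g⁻¹, ?_, ?_⟩
  · rw [← cmap_cmap, hcPg]
    have hmem : (↑n : G) ∈ Subgroup.normalizer (P : Set G) := n.2
    ext x
    simp only [Subgroup.mem_map, MulEquiv.coe_toMonoidHom, MulAut.conj_apply]
    constructor
    · rintro ⟨a, ha, rfl⟩
      exact (Subgroup.mem_normalizer_iff.mp hmem a).mp ha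
    · intro hx
      exact ⟨(↑n)⁻¹ * x * ↑n, by
        have := (Subgroup.mem_normalizer_iff.mp (Subgroup.inv_mem (Subgroup.normalizer (P : Set G)) hmem) x).mp hx
        simpa [mul_assoc] using this, by group⟩
  · rw [← cmap_cmap]
    exact hA ▸ hfinal

end StepA

theorem stmt12 (p : ℕ) [Fact p.Prime] (G : Type*) [Group G] [Fintype G]
    (S : Sylow p G) (P P' : Subgroup G) (hP : P ≤ ↑S) (hP' : P' ≤ ↑S)
    (hfn : FullyNormalized ↑S P) (hconj : GConj P P')
    (X : Type) (fX : Fintype X) (mX : MulAction ↥(S : Subgroup G) X)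
    (hstab : ∀ Q Q' : Subgroup G, Q ≤ ↑S → Q' ≤ ↑S → GConj Q Q' →
      Nat.card ↥P < Nat.card ↥Q → fixCard ↑S Q X mX = fixCard ↑S Q' X mX) :
    (Nat.card ↥(normIn ↑S P') : ℤ) ∣
      ((fixCard ↑S P X mX : ℤ) - (fixCard ↑S P' X mX : ℤ)) * Nat.card ↥P' := by
  classical
  letI := fX
  letI := mX
  obtain ⟨h, hh1, hh2⟩ := extension_lemma p S P P' hP hP' hfn hconj
  set K' : Subgroup G := normIn ↑S P' with hK'
  have hP'K : P' ≤ K' := le_inf Subgroup.le_normalizer hP'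
  have hK'S : K' ≤ ↑S := inf_le_right
  -- the fixed-point sets
  let FS : Subgroup G → Set X := fun T => {x | ∀ s : ↥(S : Subgroup G), (s : G) ∈ T → s • x = x}
  have hfixCard : ∀ T : Subgroup G, fixCard ↑S T X mX = Nat.card ↥(FS T) := fun T => rfl
  -- membership facts
  have hfix_iff : ∀ (T : Subgroup G), T ≤ ↑S → ∀ x : X,
      (x ∈ FS T ↔ T ≤ Subgroup.map (S : Subgroup G).subtype (MulAction.stabilizer ↥(S : Subgroup G) x)) := by
    intro T hT x
    constructor
    · intro hx t ht
      exact ⟨⟨t, hT ht⟩, hx ⟨t, hT ht⟩ ht, rfl⟩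
    · intro hle s hs
      obtain ⟨u, hu, hus⟩ := hle hs
      have : u = s := Subtype.ext hus
      exact this ▸ hu
  -- the Weyl group
  set N : Subgroup ↥K' := P'.subgroupOf K' with hNdef
  have hNnorm : N.Normal := by
    constructor
    intro n hn w
    have hw : (↑w : G) ∈ Subgroup.normalizer (P' : Set G) := w.2.1
    have hn' : (↑n : G) ∈ P' := hn
    show ((↑(w * n * w⁻¹) : G)) ∈ P'
    have : ((↑(w * n * w⁻¹) : G)) = ↑w * ↑n * (↑w)⁻¹ := by
      push_cast
      ring_nf
    rw [this]
    exact (Subgroup.mem_normalizer_iff.mp hw _).mp hn'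
  -- inclusion and twisted inclusion into S
  let ι : ↥K' →* ↥(S : Subgroup G) := Subgroup.inclusion hK'S
  have hιcoe : ∀ w : ↥K', ((ι w : ↥(S : Subgroup G)) : G) = ↑w := fun w => rfl
  have hσmemK : ∀ w : ↥K', h * ↑w * h⁻¹ ∈ cmap h K' := fun w => ⟨↑w, w.2, rfl⟩
  let σ : ↥K' → ↥(S : Subgroup G) := fun w =>
    ⟨h * ↑w * h⁻¹, (hh2.trans inf_le_right : cmap h K' ≤ ↑S) (hσmemK w)⟩
  have hσcoe : ∀ w : ↥K', ((σ w : ↥(S : Subgroup G)) : G) = h * ↑w * h⁻¹ := fun w => rfl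
  have hσP : ∀ w : ↥K', (↑w : G) ∈ P' → (↑(σ w) : G) ∈ P := by
    intro w hw
    rw [hσcoe, ← hh1]
    exact ⟨↑w, hw, rfl⟩
  have hσnormP : ∀ w : ↥K', (↑(σ w) : G) ∈ Subgroup.normalizer (P : Set G) := fun w =>
    (hh2.trans inf_le_left : cmap h K' ≤ Subgroup.normalizer (P : Set G)) (hσmemK w)
  have hσ1 : σ 1 = 1 := Subtype.ext (by rw [hσcoe]; simp)
  have hσmul : ∀ a b : ↥K', σ (a * b) = σ a * σ b := by
    intro a b
    refine Subtype.ext ?_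
    rw [Subgroup.coe_mul, hσcoe, hσcoe, hσcoe, Subgroup.coe_mul]
    group
  -- acting preserves fixed sets
  have hfix_smul : ∀ (T : Subgroup G) (t : ↥(S : Subgroup G)), (↑t : G) ∈ Subgroup.normalizer (T : Set G) →
      ∀ x ∈ FS T, t • x ∈ FS T := by
    intro T t ht x hx s hs
    have h1 : ((t⁻¹ * s * t : ↥(S : Subgroup G)) : G) ∈ T := by
      have := (Subgroup.mem_normalizer_iff.mp (Subgroup.inv_mem _ ht) ↑s).mp hs
      push_cast
      simpa [mul_assoc] using this
    have h2 : s * t = t * (t⁻¹ * s * t) := by group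
    calc s • t • x = (s * t) • x := (mul_smul s t x).symm
      _ = (t * (t⁻¹ * s * t)) • x := by rw [← h2]
      _ = t • ((t⁻¹ * s * t) • x) := mul_smul _ _ _
      _ = t • x := by rw [hx _ h1]
  -- the two fixed-point sets as types
  let Y : Type := ↥(FS P)
  let Y' : Type := ↥(FS P')
  letI actY' : MulAction ↥K' Y' :=
    { smul := fun w y => ⟨ι w • (y : X), hfix_smul P' (ι w) (by rw [hιcoe]; exact w.2.1) y.1 y.2⟩
      one_smul := fun y => Subtype.ext (by
        show ι 1 • (y : X) = (y : X)
        rw [map_one, one_smul])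
      mul_smul := fun a b y => Subtype.ext (by
        show ι (a * b) • (y : X) = ι a • (ι b • (y : X))
        rw [map_mul, mul_smul]) }
  letI actY : MulAction ↥K' Y :=
    { smul := fun w y => ⟨σ w • (y : X), hfix_smul P (σ w) (hσnormP w) y.1 y.2⟩
      one_smul := fun y => Subtype.ext (by
        show σ 1 • (y : X) = (y : X)
        rw [hσ1, one_smul])
      mul_smul := fun a b y => Subtype.ext (by
        show σ (a * b) • (y : X) = σ a • (σ b • (y : X))
        rw [hσmul, mul_smul]) }
  have hsmulY' : ∀ (w : ↥K') (y : Y'), ((w • y : Y') : X) = ι w • (y : X) := fun _ _ => rfl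
  have hsmulY : ∀ (w : ↥K') (y : Y), ((w • y : Y) : X) = σ w • (y : X) := fun _ _ => rfl
  have hstabY' : ∀ (w : ↥K') (y : Y'),
      w ∈ MulAction.stabilizer ↥K' y ↔ ι w • (y : X) = (y : X) := by
    intro w y
    rw [MulAction.mem_stabilizer_iff]
    exact ⟨fun hh => by rw [← hsmulY', hh], fun hh => Subtype.ext (by rw [hsmulY', hh])⟩
  have hstabY : ∀ (w : ↥K') (y : Y),
      w ∈ MulAction.stabilizer ↥K' y ↔ σ w • (y : X) = (y : X) := by
    intro w y
    rw [MulAction.mem_stabilizer_iff]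
    exact ⟨fun hh => by rw [← hsmulY, hh], fun hh => Subtype.ext (by rw [hsmulY, hh])⟩
  -- the main congruence via key_count
  have main : (N.index : ℤ) ∣ (Nat.card Y : ℤ) - Nat.card Y' := by
    refine key_count (fun y : Y => MulAction.stabilizer ↥K' y)
      (fun y : Y' => MulAction.stabilizer ↥K' y) N ?_ ?_ ?_ ?_ ?_
    · -- N fixes Y
      intro y n hn
      rw [hstabY]
      exact y.2 (σ n) (hσP n hn)
    · -- N fixes Y'
      intro y n hn
      rw [hstabY']
      exact y.2 (ι n) (by rw [hιcoe]; exact hn)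
    · -- equality of fixed point counts of larger subgroups
      intro Q hQN
      set QG : Subgroup G := Subgroup.map K'.subtype Q with hQG
      have hQGK : QG ≤ K' := by
        rintro _ ⟨w, hw, rfl⟩
        exact w.2
      set R : Subgroup G := P' ⊔ QG with hR
      have hP'R : P' ≤ R := le_sup_left
      have hQGR : QG ≤ R := le_sup_right
      have hRS : R ≤ ↑S := sup_le hP' (hQGK.trans hK'S)
      have hsplit : cmap h R = P ⊔ cmap h QG := by
        rw [hR, cmap_sup, hh1]
      have hR'S : cmap h R ≤ ↑S := by
        rw [hsplit]
        exact sup_le hP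
          ((Subgroup.map_mono hQGK).trans (hh2.trans inf_le_right : cmap h K' ≤ ↑S))
      have hcardPP' : Nat.card ↥P = Nat.card ↥P' := by rw [← hh1, card_cmap]
      have hPltR : Nat.card ↥P < Nat.card ↥R := by
        rw [hcardPP']
        obtain ⟨w, hwQ, hwN⟩ : ∃ w, w ∈ Q ∧ w ∉ N := by
          by_contra hc
          push_neg at hc
          exact hQN hc
        have hne : P' ≠ R := by
          intro hEq
          exact hwN (Subgroup.mem_subgroupOf.mpr (hEq ▸ hQGR ⟨w, hwQ, rfl⟩))
        exact Nat.lt_of_le_of_ne (Subgroup.card_le_of_le hP'R)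
          (fun hEq => hne (Subgroup.eq_of_le_of_card_ge hP'R hEq.ge))
      -- Y side equiv with FS (cmap h R)
      have E2 : {y : Y // Q ≤ MulAction.stabilizer ↥K' y} ≃ ↥(FS (cmap h R)) :=
        { toFun := fun z => ⟨(z.1 : X), by
            rw [hfix_iff _ hR'S, hsplit]
            refine sup_le ?_ ?_
            · exact (hfix_iff P hP _).mp z.1.2
            · rintro _ ⟨_, ⟨w, hw, rfl⟩, rfl⟩
              exact ⟨σ w, (hstabY w z.1).mp (z.2 hw), rfl⟩⟩
          invFun := fun x => ⟨⟨(x : X), fun s hs => x.2 s (by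
              rw [hsplit] at x ⊢
              exact (le_sup_left : P ≤ P ⊔ cmap h QG) hs)⟩, by
            intro w hw
            rw [hstabY]
            refine x.2 (σ w) ?_
            rw [hσcoe, hsplit]
            exact (le_sup_right : cmap h QG ≤ P ⊔ cmap h QG) ⟨↑w, ⟨w, hw, rfl⟩, rfl⟩⟩
          left_inv := fun z => rfl
          right_inv := fun x => rfl }
      -- Y' side equiv with FS R
      have E1 : {y : Y' // Q ≤ MulAction.stabilizer ↥K' y} ≃ ↥(FS R) :=
        { toFun := fun z => ⟨(z.1 : X), by
            rw [hfix_iff _ hRS]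
            refine sup_le ?_ ?_
            · exact (hfix_iff P' hP' _).mp z.1.2
            · rintro _ ⟨w, hw, rfl⟩
              exact ⟨ι w, (hstabY' w z.1).mp (z.2 hw), rfl⟩⟩
          invFun := fun x => ⟨⟨(x : X), fun s hs => x.2 s (hP'R hs)⟩, by
            intro w hw
            rw [hstabY']
            exact x.2 (ι w) (by rw [hιcoe]; exact hQGR ⟨w, hw, rfl⟩)⟩
          left_inv := fun z => rfl
          right_inv := fun x => rfl }
      calc Nat.card {y : Y // Q ≤ MulAction.stabilizer ↥K' y}
          = Nat.card ↥(FS (cmap h R)) := Nat.card_congr E2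
        _ = fixCard ↑S (cmap h R) X mX := (hfixCard _).symm
        _ = fixCard ↑S R X mX := by
            refine (hstab R (cmap h R) hRS hR'S ⟨h, rfl⟩ hPltR).symm
        _ = Nat.card ↥(FS R) := hfixCard _
        _ = Nat.card {y : Y' // Q ≤ MulAction.stabilizer ↥K' y} := (Nat.card_congr E1).symm
    · exact index_dvd_card_stab_eq N hNnorm
    · exact index_dvd_card_stab_eq N hNnorm
  -- final arithmetic
  have hcards : N.index * Nat.card ↥P' = Nat.card ↥K' := by
    have h1 : Nat.card N = Nat.card ↥P' :=
      Nat.card_congr (Subgroup.subgroupOfEquivOfLe hP'K).toEquiv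
    rw [← h1]
    exact N.index_mul_card
  have main' : (N.index : ℤ) ∣ (fixCard ↑S P X mX : ℤ) - fixCard ↑S P' X mX := by
    have e1 : fixCard ↑S P X mX = Nat.card Y := hfixCard P
    have e2 : fixCard ↑S P' X mX = Nat.card Y' := hfixCard P'
    rw [e1, e2]
    exact main
  have := mul_dvd_mul_right main' (Nat.card ↥P' : ℤ)
  have hcast : (N.index : ℤ) * (Nat.card ↥P' : ℤ) = (Nat.card ↥K' : ℤ) := by
    exact_mod_cast congrArg (Nat.cast : ℕ → ℤ) hcards
  rwa [hcast] at this
end
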